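/- arXiv:1803.00773 — 5 statements merged into one kernel-verified Lean document; each statement's English description precedes it below -/
import Mathlib

section
/- Among weighted ℓ¹-norms on ℝ³, the ℓ¹-norm is the unique best regularizer for 1-sparse vectors in the non-uniform sense: for every w ∈ ℝ³ with 0 < w_i ≤ 1 = max_i w_i and w ≠ (1,1,1), one has max_{i∈{1,2,3}} vol(T_{‖·‖_w}(e_i) ∩ S(1)) > max_{i∈{1,2,3}} vol(T_{‖·‖₁}(e_i) ∩ S(1)); equivalently, the supremum over nonzero x ∈ Σ₁ of vol(T_{‖·‖_w}(x) ∩ S(1)) is uniquely minimized over this class of weights at w = (1,1,1). -/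
open scoped BigOperators ENNReal RealInnerProductSpace
open MeasureTheory Metric

noncomputable section

/-- The set of `k`-sparse vectors of `ℝⁿ`. -/
def sparseVecs (n k : ℕ) : Set (EuclideanSpace ℝ (Fin n)) :=
  {x | ∃ s : Finset (Fin n), s.card ≤ k ∧ ∀ i ∉ s, x i = 0}

/-- Descent set (collection of descent vectors) of `R` at `x`. -/
def descentCone {n : ℕ} (R : EuclideanSpace ℝ (Fin n) → ℝ) (x : EuclideanSpace ℝ (Fin n)) :
    Set (EuclideanSpace ℝ (Fin n)) := {z | R (x + z) ≤ R x}

/-- Descent vectors of `R` at the model set `S`. -/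
def descentConeSet {n : ℕ} (R : EuclideanSpace ℝ (Fin n) → ℝ)
    (S : Set (EuclideanSpace ℝ (Fin n))) : Set (EuclideanSpace ℝ (Fin n)) :=
  ⋃ x ∈ S, descentCone R x

/-- Weighted ℓ¹-norm `‖z‖_w = ∑ i, w i * |z i|`. -/
def wNorm {n : ℕ} (w : Fin n → ℝ) (z : EuclideanSpace ℝ (Fin n)) : ℝ := ∑ i, w i * |z i|

/-- Restriction of a vector to a set of coordinates (`z_S`). -/
def coordRestrict {n : ℕ} (z : EuclideanSpace ℝ (Fin n)) (S : Finset (Fin n)) :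
    EuclideanSpace ℝ (Fin n) := WithLp.toLp 2 (fun i => if i ∈ S then z i else 0)

lemma wNorm_continuous {n : ℕ} (w : Fin n → ℝ) : Continuous (wNorm w) :=
  continuous_finset_sum _ fun i _ =>
    continuous_const.mul ((EuclideanSpace.proj (𝕜 := ℝ) i).continuous.abs)

lemma wNorm_single {n : ℕ} (w : Fin n → ℝ) (i : Fin n) :
    wNorm w (EuclideanSpace.single i (1:ℝ)) = w i := by
  unfold wNorm
  rw [Finset.sum_eq_single i]
  · simp [EuclideanSpace.single_apply]
  · intro m _ hm; simp [EuclideanSpace.single_apply, hm]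
  · simp

lemma sum_three_distinct (f : Fin 3 → ℝ) {a b c : Fin 3}
    (hab : a ≠ b) (hac : a ≠ c) (hbc : b ≠ c) :
    ∑ m, f m = f a + f b + f c := by
  have huniv : ({a, b, c} : Finset (Fin 3)) = Finset.univ := by
    apply Finset.eq_univ_of_card
    rw [Finset.card_insert_of_notMem (by simp [hab, hac]),
      Finset.card_insert_of_notMem (by simp [hbc]), Finset.card_singleton]
    rfl
  rw [← huniv, Finset.sum_insert (by simp [hab, hac]),
    Finset.sum_insert (by simp [hbc]), Finset.sum_singleton, add_assoc]

lemma abs_coord_le {n : ℕ} (z : EuclideanSpace ℝ (Fin n)) (i : Fin n) : |z i| ≤ ‖z‖ := by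
  rw [EuclideanSpace.norm_eq]
  calc |z i| = Real.sqrt (‖z i‖^2) := by
        rw [Real.norm_eq_abs, Real.sqrt_sq (abs_nonneg _)]
  _ ≤ _ := Real.sqrt_le_sqrt (Finset.single_le_sum (f := fun m => ‖z m‖^2)
        (fun m _ => sq_nonneg _) (Finset.mem_univ i))


/-- witness points on the sphere -/
def zvec (j k : Fin 3) (a b : ℝ) : EuclideanSpace ℝ (Fin 3) :=
  WithLp.toLp 2 (fun m => if m = j then a else if m = k then b else -Real.sqrt (1 - a^2 - b^2))

lemma arith_key {u a b A2 ε : ℝ} (hu0 : 0 < u) (hu : u < 1)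
    (hA2val : (1+u^2)*A2 = (3+u^2)/4) (haA2 : a^2 ≤ A2) (ha0 : 0 < a) (hb0 : 0 ≤ b)
    (hbε : b ≤ ε) (hε2 : ε ≤ (1-u^2)/16) (hε1 : ε ≤ 1) :
    (u*a + b)^2 + a^2 + b^2 ≤ 1 := by
  have ha_le1 : a ≤ 1 := by nlinarith
  have hua : u * a ≤ 1 := by nlinarith
  have h1 : (1+u^2)*a^2 ≤ (3+u^2)/4 := by nlinarith
  have h2 : 2*(u*a)*b ≤ 2*b := by nlinarith [mul_le_mul_of_nonneg_right hua hb0]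
  have h3 : 2*b^2 ≤ 2*b := by nlinarith
  have h4 : 4*b ≤ (1-u^2)/4 := by linarith
  nlinarith

lemma witness_mem (w : Fin 3 → ℝ) (hle : ∀ i, w i ≤ 1)
    (i₀ j k : Fin 3) (hij : j ≠ i₀) (hik : k ≠ i₀) (hjk : k ≠ j)
    (hi₀ : w i₀ = 1) (hwk : 0 ≤ w k) (hwj : 0 ≤ w j) (a b : ℝ)
    (ha0 : 0 < a) (hb0 : 0 ≤ b)
    (hkey : (w j * a + b)^2 + a^2 + b^2 ≤ 1)
    (hgt : 1/2 < a^2) :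
    zvec j k a b ∈ (descentCone (wNorm w) (EuclideanSpace.single i₀ (1:ℝ)) \
        descentCone (wNorm (fun _ => (1:ℝ))) (EuclideanSpace.single i₀ (1:ℝ))) ∩
        sphere (0 : EuclideanSpace ℝ (Fin 3)) 1 := by
  have hzj : zvec j k a b j = a := by simp [zvec]
  have hzk : zvec j k a b k = b := by simp [zvec, hjk]
  have hzi : zvec j k a b i₀ = -Real.sqrt (1 - a^2 - b^2) := by
    simp [zvec, Ne.symm hij, Ne.symm hik]
  have hs : a^2 + b^2 ≤ 1 := by nlinarith [sq_nonneg (w j * a + b)]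
  have hsnn : 0 ≤ 1 - a^2 - b^2 := by linarith
  have sqx := Real.sq_sqrt hsnn
  have hsq_le1 : Real.sqrt (1 - a^2 - b^2) ≤ 1 := Real.sqrt_le_one.mpr (by nlinarith)
  have hsqnn : 0 ≤ Real.sqrt (1 - a^2 - b^2) := Real.sqrt_nonneg _
  have hexp : ∀ v : Fin 3 → ℝ, wNorm v (EuclideanSpace.single i₀ (1:ℝ) + zvec j k a b)
      = v i₀ * (1 - Real.sqrt (1 - a^2 - b^2)) + v j * a + v k * b := by
    intro v
    unfold wNorm
    rw [sum_three_distinct _ (Ne.symm hij) (Ne.symm hik) (Ne.symm hjk)]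
    have e1 : (EuclideanSpace.single i₀ (1:ℝ) + zvec j k a b) i₀
        = 1 - Real.sqrt (1 - a^2 - b^2) := by
      rw [PiLp.add_apply, hzi]
      simp [EuclideanSpace.single_apply]
      ring
    have e2 : (EuclideanSpace.single i₀ (1:ℝ) + zvec j k a b) j = a := by
      rw [PiLp.add_apply, hzj]
      simp [EuclideanSpace.single_apply, hij]
    have e3 : (EuclideanSpace.single i₀ (1:ℝ) + zvec j k a b) k = b := by
      rw [PiLp.add_apply, hzk]
      simp [EuclideanSpace.single_apply, hik]
    rw [e1, e2, e3, abs_of_nonneg (by linarith : (0:ℝ) ≤ 1 - Real.sqrt (1 - a^2 - b^2)),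
      abs_of_nonneg ha0.le, abs_of_nonneg hb0]
  have hle_sqrt : w j * a + b ≤ Real.sqrt (1 - a^2 - b^2) := by
    exact (Real.le_sqrt (by nlinarith [mul_nonneg hwj ha0.le]) hsnn).mpr (by nlinarith)
  refine ⟨⟨?_, ?_⟩, ?_⟩
  · show wNorm w _ ≤ wNorm w _
    rw [wNorm_single, hexp w, hi₀]
    have hwkb : w k * b ≤ b := by nlinarith [hle k]
    nlinarith
  · show ¬ (wNorm (fun _ => (1:ℝ)) _ ≤ wNorm (fun _ => (1:ℝ)) _)
    rw [wNorm_single, hexp (fun _ => (1:ℝ))]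
    push_neg
    have hlt : Real.sqrt (1 - a^2 - b^2) < a + b := by
      rw [Real.sqrt_lt' (by linarith)]
      nlinarith
    simp only [one_mul]
    linarith
  · rw [mem_sphere_zero_iff_norm, EuclideanSpace.norm_eq]
    have hsum : ∑ m, ‖zvec j k a b m‖^2 = 1 := by
      rw [sum_three_distinct (fun m => ‖zvec j k a b m‖^2) (Ne.symm hij) (Ne.symm hik)
        (Ne.symm hjk), hzi, hzj, hzk]
      simp only [Real.norm_eq_abs, sq_abs, neg_sq]
      rw [sqx]; ring
    rw [hsum, Real.sqrt_one]

set_option maxHeartbeats 1000000 in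
lemma pos_lemma (w : Fin 3 → ℝ) (hle : ∀ i, w i ≤ 1)
    (i₀ j k : Fin 3) (hij : j ≠ i₀) (hik : k ≠ i₀) (hjk : k ≠ j)
    (hi₀ : w i₀ = 1) (hj : w j < 1) (hj0 : 0 < w j) (hk0 : 0 ≤ w k) :
    0 < μH[2] ((descentCone (wNorm w) (EuclideanSpace.single i₀ (1:ℝ)) \
        descentCone (wNorm (fun _ => (1:ℝ))) (EuclideanSpace.single i₀ (1:ℝ))) ∩
        sphere (0 : EuclideanSpace ℝ (Fin 3)) 1) := by
  classical
  set u := w j with hu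
  have hu2 : 0 < 1 + u^2 := by positivity
  have hu1 : 0 < 1 - u^2 := by nlinarith
  set A2 : ℝ := (3 + u^2)/(4*(1+u^2)) with hA2
  have hA2val : (1+u^2) * A2 = (3+u^2)/4 := by
    rw [hA2]; field_simp
  have hA2half : 1/2 < A2 := by
    rw [hA2, lt_div_iff₀ (by positivity)]; nlinarith
  have hA2le : A2 < 1 := by
    rw [hA2, div_lt_one (by positivity)]; nlinarith
  set A1 : ℝ := (1/2 + A2)/2 with hA1
  have hA1half : 1/2 < A1 := by rw [hA1]; linarith
  have hA1pos : 0 < A1 := by linarith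
  have hA12 : A1 < A2 := by rw [hA1]; linarith
  set a₁ := Real.sqrt A1 with ha₁
  set a₂ := Real.sqrt A2 with ha₂
  have ha₁pos : 0 < a₁ := Real.sqrt_pos.mpr hA1pos
  have ha12 : a₁ < a₂ := Real.sqrt_lt_sqrt hA1pos.le hA12
  set ε : ℝ := min 1 ((1-u^2)/16) with hε
  have hεpos : 0 < ε := lt_min one_pos (by positivity)
  have hε1 : ε ≤ 1 := min_le_left _ _
  have hε2 : ε ≤ (1-u^2)/16 := min_le_right _ _
  -- the family of witness points
  set π : EuclideanSpace ℝ (Fin 3) → (Fin 2 → ℝ) := fun z => ![z j, z k] with hπ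
  have hπlip : LipschitzWith 1 π := by
    apply LipschitzWith.of_dist_le_mul
    intro z z'
    have hcoord : ∀ m : Fin 3, dist (z m) (z' m) ≤ dist z z' := by
      intro m
      rw [Real.dist_eq, dist_eq_norm]
      have h1 := abs_coord_le (z - z') m
      have h2 : (z - z') m = z m - z' m := rfl
      rwa [h2] at h1
    have : dist (π z) (π z') ≤ dist z z' := by
      rw [dist_pi_le_iff dist_nonneg]
      intro t
      fin_cases t
      · simpa [hπ] using hcoord j
      · simpa [hπ] using hcoord k
    simpa using this
  -- the target set
  set T := (descentCone (wNorm w) (EuclideanSpace.single i₀ (1:ℝ)) \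
        descentCone (wNorm (fun _ => (1:ℝ))) (EuclideanSpace.single i₀ (1:ℝ))) ∩
        sphere (0 : EuclideanSpace ℝ (Fin 3)) 1 with hT
  -- membership of witness points
  have hmem : ∀ a b : ℝ, a₁ ≤ a → a ≤ a₂ → 0 ≤ b → b ≤ ε → zvec j k a b ∈ T := by
    intro a b ha1 ha2 hb0 hbε
    have ha0 : 0 < a := lt_of_lt_of_le ha₁pos ha1
    have haA1 : A1 ≤ a^2 := by
      have h := Real.sq_sqrt hA1pos.le
      nlinarith [Real.sqrt_nonneg A1]
    have haA2 : a^2 ≤ A2 := by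
      have h0 : 0 ≤ A2 := by linarith
      exact (Real.le_sqrt ha0.le h0).mp ha2
    have hkey : (w j * a + b)^2 + a^2 + b^2 ≤ 1 :=
      arith_key hj0 hj hA2val haA2 ha0 hb0 hbε hε2 hε1
    have hgt : 1/2 < a^2 := by linarith
    exact witness_mem w hle i₀ j k hij hik hjk hi₀ hk0 hj0.le a b ha0 hb0 hkey hgt
  -- the rectangle is inside the projection of T
  have hsub : Set.Icc ![a₁, (0:ℝ)] ![a₂, ε] ⊆ π '' T := by
    rintro p ⟨hp1, hp2⟩
    have h0 : a₁ ≤ p 0 := by simpa using hp1 0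
    have h1 : p 0 ≤ a₂ := by simpa using hp2 0
    have h2 : (0:ℝ) ≤ p 1 := by simpa using hp1 1
    have h3 : p 1 ≤ ε := by simpa using hp2 1
    refine ⟨zvec j k (p 0) (p 1), hmem _ _ h0 h1 h2 h3, ?_⟩
    funext t
    fin_cases t
    · show π _ 0 = p 0
      simp [hπ, zvec]
    · show π _ 1 = p 1
      simp [hπ, zvec, hjk]
  -- conclude via measure comparison
  have hIccpos : 0 < volume (Set.Icc ![a₁, (0:ℝ)] ![a₂, ε]) := by
    rw [Real.volume_Icc_pi, Fin.prod_univ_two]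
    simp only [Matrix.cons_val_zero, Matrix.cons_val_one, Matrix.head_cons]
    exact ENNReal.mul_pos (ENNReal.ofReal_pos.mpr (by linarith)).ne'
      (ENNReal.ofReal_pos.mpr (by linarith)).ne'
  have hvol : (μH[2] : Measure (Fin 2 → ℝ)) = volume := by
    simpa using MeasureTheory.hausdorffMeasure_pi_real (ι := Fin 2)
  have hπT : 0 < μH[2] (π '' T) := by
    refine lt_of_lt_of_le ?_ (measure_mono hsub)
    rw [hvol]
    exact hIccpos
  have hfinal := hπlip.hausdorffMeasure_image_le (by norm_num : (0:ℝ) ≤ 2) T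
  refine lt_of_lt_of_le hπT (le_trans hfinal ?_)
  simp

lemma sqrt_diff_le {x y : ℝ} (hx : 1/3 ≤ x) (hy : 1/3 ≤ y) :
    |Real.sqrt x - Real.sqrt y| ≤ |x - y| := by
  have hx0 : 0 ≤ x := by linarith
  have hy0 : 0 ≤ y := by linarith
  have hsx := Real.sq_sqrt hx0
  have hsy := Real.sq_sqrt hy0
  have h1 : (1:ℝ)/2 ≤ Real.sqrt x := by nlinarith [Real.sqrt_nonneg x]
  have h2 : (1:ℝ)/2 ≤ Real.sqrt y := by nlinarith [Real.sqrt_nonneg y]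
  rcases le_total x y with h | h
  · have hs : Real.sqrt x ≤ Real.sqrt y := Real.sqrt_le_sqrt h
    rw [abs_of_nonpos (by linarith), abs_of_nonpos (by linarith)]
    nlinarith
  · have hs : Real.sqrt y ≤ Real.sqrt x := Real.sqrt_le_sqrt h
    rw [abs_of_nonneg (by linarith), abs_of_nonneg (by linarith)]
    nlinarith

lemma sqrt_sum3_le (x y z : ℝ) :
    Real.sqrt (x^2 + y^2 + z^2) ≤ |x| + |y| + |z| := by
  rw [show |x| + |y| + |z| = Real.sqrt ((|x| + |y| + |z|)^2) by
    rw [Real.sqrt_sq (by positivity)]]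
  apply Real.sqrt_le_sqrt
  nlinarith [abs_nonneg x, abs_nonneg y, abs_nonneg z, sq_abs x, sq_abs y, sq_abs z]

/-- chart maps for the sphere -/
def chartF (i : Fin 3) (σ : Bool) (p : Fin 2 → ℝ) : EuclideanSpace ℝ (Fin 3) :=
  WithLp.toLp 2 (i.insertNth ((if σ then (1:ℝ) else -1) * Real.sqrt (1 - (p 0)^2 - (p 1)^2)) p)

def chartK : Set (Fin 2 → ℝ) := {p | (p 0)^2 + (p 1)^2 ≤ 2/3}

lemma chartF_lip (i : Fin 3) (σ : Bool) : LipschitzOnWith 6 (chartF i σ) chartK := by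
  rw [lipschitzOnWith_iff_dist_le_mul]
  intro p hp q hq
  have hp0 : (p 0)^2 + (p 1)^2 ≤ 2/3 := hp
  have hq0 : (q 0)^2 + (q 1)^2 ≤ 2/3 := hq
  set gp := (if σ then (1:ℝ) else -1) * Real.sqrt (1 - (p 0)^2 - (p 1)^2) with hgp
  set gq := (if σ then (1:ℝ) else -1) * Real.sqrt (1 - (q 0)^2 - (q 1)^2) with hgq
  have habs : |gp - gq| ≤ 2 * |p 0 - q 0| + 2 * |p 1 - q 1| := by
    have h1 : |gp - gq| = |Real.sqrt (1 - (p 0)^2 - (p 1)^2)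
        - Real.sqrt (1 - (q 0)^2 - (q 1)^2)| := by
      rcases σ with _ | _
      · simp only [hgp, hgq, Bool.false_eq_true, if_false, neg_one_mul]
        rw [show -Real.sqrt (1 - (p 0)^2 - (p 1)^2) - -Real.sqrt (1 - (q 0)^2 - (q 1)^2)
            = -(Real.sqrt (1 - (p 0)^2 - (p 1)^2) - Real.sqrt (1 - (q 0)^2 - (q 1)^2)) by ring,
          abs_neg]
      · simp [hgp, hgq]
    rw [h1]
    have h2 := sqrt_diff_le (x := 1 - (p 0)^2 - (p 1)^2) (y := 1 - (q 0)^2 - (q 1)^2)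
      (by linarith) (by linarith)
    have hb : |(1 - (p 0)^2 - (p 1)^2) - (1 - (q 0)^2 - (q 1)^2)|
        ≤ 2 * |p 0 - q 0| + 2 * |p 1 - q 1| := by
      have e1 : (1 - (p 0)^2 - (p 1)^2) - (1 - (q 0)^2 - (q 1)^2)
          = (q 0 - p 0) * (q 0 + p 0) + (q 1 - p 1) * (q 1 + p 1) := by ring
      rw [e1]
      have hpb : |p 0| ≤ 1 := by nlinarith [sq_abs (p 0), sq_nonneg (p 1), abs_nonneg (p 0)]
      have hpb1 : |p 1| ≤ 1 := by nlinarith [sq_abs (p 1), sq_nonneg (p 0), abs_nonneg (p 1)]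
      have hqb : |q 0| ≤ 1 := by nlinarith [sq_abs (q 0), sq_nonneg (q 1), abs_nonneg (q 0)]
      have hqb1 : |q 1| ≤ 1 := by nlinarith [sq_abs (q 1), sq_nonneg (q 0), abs_nonneg (q 1)]
      calc |(q 0 - p 0) * (q 0 + p 0) + (q 1 - p 1) * (q 1 + p 1)|
          ≤ |(q 0 - p 0) * (q 0 + p 0)| + |(q 1 - p 1) * (q 1 + p 1)| := abs_add_le _ _
        _ ≤ 2 * |p 0 - q 0| + 2 * |p 1 - q 1| := by
            rw [abs_mul, abs_mul, abs_sub_comm (q 0), abs_sub_comm (q 1)]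
            have := abs_add_le (q 0) (p 0)
            have := abs_add_le (q 1) (p 1)
            nlinarith [abs_nonneg (p 0 - q 0), abs_nonneg (p 1 - q 1)]
    linarith
  have hdist : dist (chartF i σ p) (chartF i σ q)
      ≤ |gp - gq| + |p 0 - q 0| + |p 1 - q 1| := by
    rw [EuclideanSpace.dist_eq]
    have hsum : ∑ m, dist (chartF i σ p m) (chartF i σ q m) ^ 2
        = (gp - gq)^2 + ((p 0 - q 0)^2 + (p 1 - q 1)^2) := by
      rw [Fin.sum_univ_succAbove (fun m => dist (chartF i σ p m) (chartF i σ q m) ^ 2) i]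
      unfold chartF
      simp only [PiLp.toLp_apply, Fin.insertNth_apply_same, Fin.insertNth_apply_succAbove]
      rw [Fin.sum_univ_two]
      simp [Real.dist_eq, ← hgp, ← hgq, sq_abs]
    rw [hsum]
    calc Real.sqrt ((gp - gq)^2 + ((p 0 - q 0)^2 + (p 1 - q 1)^2))
        = Real.sqrt ((gp - gq)^2 + (p 0 - q 0)^2 + (p 1 - q 1)^2) := by ring_nf
      _ ≤ _ := sqrt_sum3_le _ _ _
  have hd0 : |p 0 - q 0| ≤ dist p q := by
    have := dist_le_pi_dist p q 0; rwa [Real.dist_eq] at this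
  have hd1 : |p 1 - q 1| ≤ dist p q := by
    have := dist_le_pi_dist p q 1; rwa [Real.dist_eq] at this
  calc dist (chartF i σ p) (chartF i σ q) ≤ |gp - gq| + |p 0 - q 0| + |p 1 - q 1| := hdist
    _ ≤ (2 * |p 0 - q 0| + 2 * |p 1 - q 1|) + |p 0 - q 0| + |p 1 - q 1| := by linarith
    _ ≤ 6 * dist p q := by push_cast; linarith

lemma sphere_subset_charts :
    sphere (0 : EuclideanSpace ℝ (Fin 3)) 1 ⊆
      ⋃ c : Fin 3 × Bool, chartF c.1 c.2 '' chartK := by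
  intro z hz
  have hz1 : ‖z‖ = 1 := by simpa using mem_sphere_zero_iff_norm.mp hz
  have hsum : ∑ m, (z m)^2 = 1 := by
    have h1 := EuclideanSpace.norm_eq z
    rw [hz1] at h1
    have h2 : Real.sqrt (∑ m, ‖z m‖^2) = 1 := h1.symm
    have h3 := congrArg (· ^ 2) h2
    simp only [one_pow] at h3
    rw [Real.sq_sqrt (by positivity)] at h3
    simpa [Real.norm_eq_abs, sq_abs] using h3
  obtain ⟨i, hi⟩ : ∃ i, 1/3 ≤ (z i)^2 := by
    by_contra h
    push_neg at h
    rw [Fin.sum_univ_three] at hsum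
    have := h 0; have := h 1; have := h 2
    linarith
  set p : Fin 2 → ℝ := i.removeNth z with hpdef
  have hps : (p 0)^2 + (p 1)^2 = 1 - (z i)^2 := by
    have h4 := Fin.sum_univ_succAbove (fun m => (z m)^2) i
    rw [hsum, Fin.sum_univ_two] at h4
    simp only [hpdef, Fin.removeNth]
    linarith
  refine Set.mem_iUnion.mpr ⟨⟨i, decide (0 ≤ z i)⟩, ⟨p, ?_, ?_⟩⟩
  · show (p 0)^2 + (p 1)^2 ≤ 2/3
    rw [hps]; linarith
  · show chartF i (decide (0 ≤ z i)) p = z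
    unfold chartF
    have hsq : Real.sqrt (1 - (p 0)^2 - (p 1)^2) = |z i| := by
      rw [show 1 - (p 0)^2 - (p 1)^2 = 1 - ((p 0)^2 + (p 1)^2) by ring, hps,
        show 1 - (1 - (z i)^2) = (z i)^2 by ring, Real.sqrt_sq_eq_abs]
    rw [hsq]
    have hσ : (if decide (0 ≤ z i) then (1:ℝ) else -1) * |z i| = z i := by
      rcases le_or_gt 0 (z i) with h | h
      · simp [h, abs_of_nonneg h]
      · simp [not_le.mpr h, abs_of_neg h]
    rw [hσ]
    exact congrArg (WithLp.toLp 2) (Fin.insertNth_self_removeNth i z.ofLp)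

lemma sphere_hmeas_lt_top :
    μH[2] (sphere (0 : EuclideanSpace ℝ (Fin 3)) 1) < ⊤ := by
  have hKvol : (μH[2] : Measure (Fin 2 → ℝ)) = volume := by
    have := MeasureTheory.hausdorffMeasure_pi_real (ι := Fin 2)
    simpa using this
  have hKfin : (μH[2] : Measure (Fin 2 → ℝ)) chartK < ⊤ := by
    rw [hKvol]
    have hsub : chartK ⊆ Set.Icc (fun _ => (-1:ℝ)) (fun _ => 1) := by
      intro p hp
      have hp' : (p 0)^2 + (p 1)^2 ≤ 2/3 := hp
      rw [Set.mem_Icc]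
      have h0 : -1 ≤ p 0 ∧ p 0 ≤ 1 := abs_le.mp
        (by nlinarith [sq_abs (p 0), sq_nonneg (p 1), abs_nonneg (p 0)])
      have h1 : -1 ≤ p 1 ∧ p 1 ≤ 1 := abs_le.mp
        (by nlinarith [sq_abs (p 1), sq_nonneg (p 0), abs_nonneg (p 1)])
      constructor <;> rw [Pi.le_def] <;> intro t <;> fin_cases t
      · exact h0.1
      · exact h1.1
      · exact h0.2
      · exact h1.2
    calc volume chartK ≤ volume (Set.Icc (fun _ => (-1:ℝ)) (fun _ => 1)) := measure_mono hsub
      _ < ⊤ := by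
          rw [Real.volume_Icc_pi]
          exact ENNReal.prod_lt_top (fun i _ => ENNReal.ofReal_lt_top)
  have hpiece : ∀ c : Fin 3 × Bool, μH[2] (chartF c.1 c.2 '' chartK) < ⊤ := by
    intro c
    refine lt_of_le_of_lt ((chartF_lip c.1 c.2).hausdorffMeasure_image_le (by norm_num)) ?_
    exact ENNReal.mul_lt_top (ENNReal.rpow_lt_top_of_nonneg (by norm_num) (by simp)) hKfin
  calc μH[2] (sphere (0:EuclideanSpace ℝ (Fin 3)) 1)
      ≤ μH[2] (⋃ c : Fin 3 × Bool, chartF c.1 c.2 '' chartK) :=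
        measure_mono sphere_subset_charts
    _ ≤ ∑ c : Fin 3 × Bool, μH[2] (chartF c.1 c.2 '' chartK) :=
        measure_iUnion_fintype_le _ _
    _ < ⊤ := ENNReal.sum_lt_top.mpr (fun c _ => hpiece c)

lemma l1_descent_measure_eq (i i' : Fin 3) :
    μH[2] (descentCone (wNorm (fun _ => (1:ℝ))) (EuclideanSpace.single i (1:ℝ)) ∩
      sphere (0 : EuclideanSpace ℝ (Fin 3)) 1)
    = μH[2] (descentCone (wNorm (fun _ => (1:ℝ))) (EuclideanSpace.single i' (1:ℝ)) ∩
      sphere (0 : EuclideanSpace ℝ (Fin 3)) 1) := by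
  classical
  set σ : Fin 3 ≃ Fin 3 := Equiv.swap i i' with hσ
  set Φ := LinearIsometryEquiv.piLpCongrLeft 2 ℝ ℝ σ with hΦ
  have K1 : ∀ x : EuclideanSpace ℝ (Fin 3), wNorm (fun _ => (1:ℝ)) (Φ x)
      = wNorm (fun _ => (1:ℝ)) x := by
    intro x
    unfold wNorm
    simp only [one_mul]
    have happ : ∀ m, (Φ x) m = x (σ.symm m) := by
      intro m
      rw [hΦ, LinearIsometryEquiv.piLpCongrLeft_apply]
      rfl
    simp_rw [happ]
    exact Equiv.sum_comp σ.symm (fun m => |x m|)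
  have K2 : Φ (EuclideanSpace.single i (1:ℝ)) = EuclideanSpace.single i' (1:ℝ) := by
    rw [hΦ]
    have : EuclideanSpace.single i (1:ℝ)
        = PiLp.single 2 i 1 := rfl
    rw [this, LinearIsometryEquiv.piLpCongrLeft_single]
    rw [hσ, Equiv.swap_apply_left]
  have himg : Φ '' (descentCone (wNorm (fun _ => (1:ℝ))) (EuclideanSpace.single i (1:ℝ)) ∩
      sphere (0 : EuclideanSpace ℝ (Fin 3)) 1)
      = descentCone (wNorm (fun _ => (1:ℝ))) (EuclideanSpace.single i' (1:ℝ)) ∩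
      sphere (0 : EuclideanSpace ℝ (Fin 3)) 1 := by
    ext y
    constructor
    · rintro ⟨x, ⟨hx1, hx2⟩, rfl⟩
      constructor
      · show wNorm _ (EuclideanSpace.single i' 1 + Φ x) ≤ wNorm _ (EuclideanSpace.single i' 1)
        rw [← K2, ← map_add, K1, K1]
        exact hx1
      · rw [mem_sphere_zero_iff_norm] at hx2 ⊢
        rw [Φ.norm_map]; exact hx2
    · rintro ⟨hy1, hy2⟩
      refine ⟨Φ.symm y, ⟨?_, ?_⟩, Φ.apply_symm_apply y⟩
      · show wNorm _ (EuclideanSpace.single i 1 + Φ.symm y) ≤ wNorm _ (EuclideanSpace.single i 1)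
        have h1 : wNorm (fun _ => (1:ℝ)) (EuclideanSpace.single i 1 + Φ.symm y)
            = wNorm (fun _ => (1:ℝ)) (EuclideanSpace.single i' 1 + y) := by
          rw [← K1, map_add, K2, Φ.apply_symm_apply]
        have h2 : wNorm (fun _ => (1:ℝ)) (EuclideanSpace.single i (1:ℝ))
            = wNorm (fun _ => (1:ℝ)) (EuclideanSpace.single i' (1:ℝ)) := by
          rw [← K2, K1]
        rw [h1, h2]
        exact hy1
      · rw [mem_sphere_zero_iff_norm] at hy2 ⊢
        rw [← Φ.norm_map, Φ.apply_symm_apply]; exact hy2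
  calc μH[2] (descentCone (wNorm (fun _ => (1:ℝ))) (EuclideanSpace.single i (1:ℝ)) ∩
      sphere (0 : EuclideanSpace ℝ (Fin 3)) 1)
      = μH[2] (Φ '' (descentCone (wNorm (fun _ => (1:ℝ))) (EuclideanSpace.single i (1:ℝ)) ∩
        sphere (0 : EuclideanSpace ℝ (Fin 3)) 1)) :=
        (Φ.isometry.hausdorffMeasure_image (Or.inl (by norm_num)) _).symm
    _ = _ := by rw [himg]

/-- among weighted ℓ¹-norms on ℝ³ the ℓ¹-norm is the unique best regularizer for
1-sparse vectors in the non-uniform sense. -/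
theorem l1_unique_best_nonuniform_3d
    (w : Fin 3 → ℝ) (hpos : ∀ i, 0 < w i) (hle : ∀ i, w i ≤ 1)
    (hmax : ∃ i, w i = 1) (hne : w ≠ fun _ => 1) :
    (⨆ i : Fin 3, Measure.hausdorffMeasure 2
        (descentCone (wNorm (fun _ => (1 : ℝ))) (EuclideanSpace.single i (1 : ℝ)) ∩
          sphere (0 : EuclideanSpace ℝ (Fin 3)) 1))
      < ⨆ i : Fin 3, Measure.hausdorffMeasure 2
        (descentCone (wNorm w) (EuclideanSpace.single i (1 : ℝ)) ∩
          sphere (0 : EuclideanSpace ℝ (Fin 3)) 1) := by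
  classical
  obtain ⟨i₀, hi₀⟩ := hmax
  obtain ⟨j, hj1⟩ : ∃ j, w j ≠ 1 := by
    by_contra h
    push_neg at h
    exact hne (funext h)
  have hjlt : w j < 1 := lt_of_le_of_ne (hle j) hj1
  have hji : j ≠ i₀ := fun h => hj1 (h ▸ hi₀)
  have hkprop : ∀ p q : Fin 3, p ≠ q → (-(p+q) ≠ p ∧ -(p+q) ≠ q) := by decide
  set k : Fin 3 := -(i₀ + j) with hk
  have hki : k ≠ i₀ := (hkprop i₀ j (Ne.symm hji)).1
  have hkj : k ≠ j := (hkprop i₀ j (Ne.symm hji)).2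
  -- the left-hand side is constant in i
  have hLHS : (⨆ i : Fin 3, μH[2]
      (descentCone (wNorm (fun _ => (1:ℝ))) (EuclideanSpace.single i (1:ℝ)) ∩
        sphere (0 : EuclideanSpace ℝ (Fin 3)) 1))
      = μH[2] (descentCone (wNorm (fun _ => (1:ℝ))) (EuclideanSpace.single i₀ (1:ℝ)) ∩
        sphere (0 : EuclideanSpace ℝ (Fin 3)) 1) := by
    apply le_antisymm
    · exact iSup_le fun i => le_of_eq (l1_descent_measure_eq i i₀)
    · exact le_iSup (fun i => μH[2]
        (descentCone (wNorm (fun _ => (1:ℝ))) (EuclideanSpace.single i (1:ℝ)) ∩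
          sphere (0 : EuclideanSpace ℝ (Fin 3)) 1)) i₀
  rw [hLHS]
  -- the ℓ¹ descent cone is contained in the weighted one at i₀
  have hincl : descentCone (wNorm (fun _ => (1:ℝ))) (EuclideanSpace.single i₀ (1:ℝ))
      ⊆ descentCone (wNorm w) (EuclideanSpace.single i₀ (1:ℝ)) := by
    intro z hz
    show wNorm w _ ≤ wNorm w _
    rw [wNorm_single, hi₀]
    have hz' : wNorm (fun _ => (1:ℝ)) (EuclideanSpace.single i₀ (1:ℝ) + z) ≤ 1 := by
      have h : wNorm (fun _ => (1:ℝ)) (EuclideanSpace.single i₀ (1:ℝ) + z)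
          ≤ wNorm (fun _ => (1:ℝ)) (EuclideanSpace.single i₀ (1:ℝ)) := hz
      rwa [wNorm_single] at h
    refine le_trans ?_ hz'
    unfold wNorm
    apply Finset.sum_le_sum
    intro m _
    show w m * |(EuclideanSpace.single i₀ (1:ℝ) + z) m|
        ≤ 1 * |(EuclideanSpace.single i₀ (1:ℝ) + z) m|
    have h1 := hle m
    have h2 := abs_nonneg ((EuclideanSpace.single i₀ (1:ℝ) + z) m)
    nlinarith
  -- measurability and finiteness of the ℓ¹ part
  have hAmeas : MeasurableSet (descentCone (wNorm (fun _ => (1:ℝ)))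
      (EuclideanSpace.single i₀ (1:ℝ)) ∩ sphere (0 : EuclideanSpace ℝ (Fin 3)) 1) := by
    apply IsClosed.measurableSet
    refine IsClosed.inter ?_ isClosed_sphere
    exact isClosed_le ((wNorm_continuous _).comp (continuous_const.add continuous_id))
      continuous_const
  have hAfin : μH[2] (descentCone (wNorm (fun _ => (1:ℝ)))
      (EuclideanSpace.single i₀ (1:ℝ)) ∩ sphere (0 : EuclideanSpace ℝ (Fin 3)) 1) ≠ ⊤ :=
    (lt_of_le_of_lt (measure_mono Set.inter_subset_right) sphere_hmeas_lt_top).ne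
  -- positivity of the extra region
  have hdiffpos := pos_lemma w hle i₀ j k hji hki hkj hi₀ hjlt (hpos j) (hpos k).le
  -- strict inequality at i₀
  have hsplit := (measure_inter_add_diff (μ := (μH[2] : Measure (EuclideanSpace ℝ (Fin 3))))
    (descentCone (wNorm w) (EuclideanSpace.single i₀ (1:ℝ)) ∩
      sphere (0 : EuclideanSpace ℝ (Fin 3)) 1) hAmeas).symm
  have heq1 : (descentCone (wNorm w) (EuclideanSpace.single i₀ (1:ℝ)) ∩
      sphere (0 : EuclideanSpace ℝ (Fin 3)) 1) ∩
      (descentCone (wNorm (fun _ => (1:ℝ))) (EuclideanSpace.single i₀ (1:ℝ)) ∩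
      sphere (0 : EuclideanSpace ℝ (Fin 3)) 1)
      = descentCone (wNorm (fun _ => (1:ℝ))) (EuclideanSpace.single i₀ (1:ℝ)) ∩
      sphere (0 : EuclideanSpace ℝ (Fin 3)) 1 := by
    ext z
    constructor
    · rintro ⟨_, h⟩; exact h
    · rintro ⟨h1, h2⟩; exact ⟨⟨hincl h1, h2⟩, h1, h2⟩
  have heq2 : (descentCone (wNorm w) (EuclideanSpace.single i₀ (1:ℝ)) \
      descentCone (wNorm (fun _ => (1:ℝ))) (EuclideanSpace.single i₀ (1:ℝ))) ∩
      sphere (0 : EuclideanSpace ℝ (Fin 3)) 1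
      ⊆ (descentCone (wNorm w) (EuclideanSpace.single i₀ (1:ℝ)) ∩
      sphere (0 : EuclideanSpace ℝ (Fin 3)) 1) \
      (descentCone (wNorm (fun _ => (1:ℝ))) (EuclideanSpace.single i₀ (1:ℝ)) ∩
      sphere (0 : EuclideanSpace ℝ (Fin 3)) 1) := by
    rintro z ⟨⟨h1, h2⟩, h3⟩
    exact ⟨⟨h1, h3⟩, fun h => h2 h.1⟩
  have hlt : μH[2] (descentCone (wNorm (fun _ => (1:ℝ)))
      (EuclideanSpace.single i₀ (1:ℝ)) ∩ sphere (0 : EuclideanSpace ℝ (Fin 3)) 1)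
      < μH[2] (descentCone (wNorm w) (EuclideanSpace.single i₀ (1:ℝ)) ∩
      sphere (0 : EuclideanSpace ℝ (Fin 3)) 1) := by
    rw [hsplit, heq1]
    exact ENNReal.lt_add_right hAfin (lt_of_lt_of_le hdiffpos (measure_mono heq2)).ne'
  exact lt_of_lt_of_le hlt (le_iSup (fun i => μH[2]
    (descentCone (wNorm w) (EuclideanSpace.single i (1:ℝ)) ∩
      sphere (0 : EuclideanSpace ℝ (Fin 3)) 1)) i₀)

end
end

section
/- Let k ≥ 1 and n ≥ 2k, let Σ_k be the set of k-sparse vectors of ℝⁿ, and let R be a norm on ℝⁿ. Then, as an identity in [1,∞], A_Σ^{RIP,nec}(R) = 1 / (1 − inf_{z ∈ T_R(Σ_k)∖{0}} sup_{x ∈ Σ_{2k}, ‖x‖₂ = 1} ⟨x,z⟩²/‖z‖₂²). In particular, for every nonzero z ∈ ℝⁿ, inf{⟨x,z⟩²/‖z‖₂² : x ∈ Σ_{2k}, ‖x‖₂ = 1} = 0 and γ(I − Π_z) = 1/(1 − sup{⟨x,z⟩²/‖z‖₂² : x ∈ Σ_{2k}, ‖x‖₂ = 1}). -/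
open scoped BigOperators ENNReal RealInnerProductSpace
open MeasureTheory Metric

noncomputable section

/-- Restricted conditioning `γ(M)` of a map `M` on the secant set `Σ_{2k}`, valued in `[0,∞]`. -/
def gammaRC (n k : ℕ) (M : EuclideanSpace ℝ (Fin n) → EuclideanSpace ℝ (Fin n)) : ℝ≥0∞ :=
  (⨆ x ∈ {x : EuclideanSpace ℝ (Fin n) | x ∈ sparseVecs n (2 * k) ∧ ‖x‖ = 1},
      ENNReal.ofReal (‖M x‖ ^ 2)) /
  (⨅ x ∈ {x : EuclideanSpace ℝ (Fin n) | x ∈ sparseVecs n (2 * k) ∧ ‖x‖ = 1},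
      ENNReal.ofReal (‖M x‖ ^ 2))

/-- `A_Σ^{RIP,nec}(R)`. -/
def Anec (n k : ℕ) (R : EuclideanSpace ℝ (Fin n) → ℝ) : ℝ≥0∞ :=
  ⨅ z ∈ descentConeSet R (sparseVecs n k) \ {0},
    gammaRC n k (fun x =>
      x - (Submodule.orthogonalProjection (Submodule.span ℝ {z}) x : EuclideanSpace ℝ (Fin n)))

/-- There is a unit `2k`-sparse vector orthogonal to any given vector. -/
lemma exists_sparse_orth (n k : ℕ) (hk : 1 ≤ k) (hn : 2 * k ≤ n)
    (z : EuclideanSpace ℝ (Fin n)) :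
    ∃ x : EuclideanSpace ℝ (Fin n), x ∈ sparseVecs n (2*k) ∧ ‖x‖ = 1 ∧ ⟪x, z⟫ = 0 := by
  have hn2 : 2 ≤ n := le_trans (by omega) hn
  by_cases h : ∃ i, z i = 0
  · obtain ⟨i, hi⟩ := h
    refine ⟨EuclideanSpace.single i 1, ⟨{i}, by simp; omega, ?_⟩, by
      simp [EuclideanSpace.norm_single], ?_⟩
    · intro j hj
      simp only [Finset.mem_singleton] at hj
      simp [EuclideanSpace.single_apply, hj]
    · rw [EuclideanSpace.inner_single_left]; simp [hi]
  · push_neg at h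
    set i : Fin n := ⟨0, by omega⟩ with hidef
    set j : Fin n := ⟨1, by omega⟩ with hjdef
    have hij : i ≠ j := by simp [hidef, hjdef, Fin.ext_iff]
    set v : EuclideanSpace ℝ (Fin n) :=
      z j • EuclideanSpace.single i 1 - z i • EuclideanSpace.single j 1 with hv
    have hvj : v j = - z i := by
      simp [hv, EuclideanSpace.single_apply, hij.symm]
    have hv0 : v ≠ 0 := by
      intro h0
      have : v j = 0 := by rw [h0]; rfl
      exact h i (by rw [hvj] at this; linarith)
    have hnv : ‖v‖ ≠ 0 := norm_ne_zero_iff.mpr hv0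
    refine ⟨‖v‖⁻¹ • v, ⟨{i, j}, ?_, ?_⟩, norm_smul_inv_norm hv0, ?_⟩
    · have := Finset.card_insert_le i ({j} : Finset (Fin n))
      simp only [Finset.card_singleton] at this
      omega
    · intro l hl
      simp only [Finset.mem_insert, Finset.mem_singleton, not_or] at hl
      have hvl : v l = 0 := by
        simp [hv, EuclideanSpace.single_apply, hl.1, hl.2]
      show ‖v‖⁻¹ * v l = 0
      rw [hvl]; ring
    · have hvin : ⟪v, z⟫ = 0 := by
        simp [hv, inner_sub_left, real_inner_smul_left,
          EuclideanSpace.inner_single_left]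
        ring
      rw [real_inner_smul_left, hvin]; ring

/-- Pythagoras for the complement of the projection onto a line. -/
lemma norm_sub_proj_sq (n : ℕ) (z x : EuclideanSpace ℝ (Fin n)) (hz : z ≠ 0) :
    ‖x - (Submodule.orthogonalProjection (Submodule.span ℝ {z}) x : EuclideanSpace ℝ (Fin n))‖ ^ 2
      = ‖x‖ ^ 2 - ⟪x, z⟫ ^ 2 / ‖z‖ ^ 2 := by
  have hz' : ‖z‖ ≠ 0 := norm_ne_zero_iff.mpr hz
  rw [show (Submodule.orthogonalProjection (Submodule.span ℝ {z}) x : EuclideanSpace ℝ (Fin n))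
      = (Submodule.span ℝ {z}).starProjection x from rfl, Submodule.starProjection_singleton, RCLike.ofReal_real_eq_id, id, norm_sub_sq_real, real_inner_smul_right, norm_smul,
    real_inner_comm z x]
  rw [mul_pow, Real.norm_eq_abs, sq_abs]
  field_simp
  ring

/-- The restricted conditioning of the projection complement. -/
lemma gamma_eq (n k : ℕ) (hk : 1 ≤ k) (hn : 2 * k ≤ n)
    (z : EuclideanSpace ℝ (Fin n)) (hz : z ≠ 0) :
    gammaRC n k (fun x =>
        x - (Submodule.orthogonalProjection (Submodule.span ℝ {z}) x : EuclideanSpace ℝ (Fin n)))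
      = 1 / (1 - ⨆ x ∈ {x : EuclideanSpace ℝ (Fin n) | x ∈ sparseVecs n (2 * k) ∧ ‖x‖ = 1},
          ENNReal.ofReal (⟪x, z⟫ ^ 2 / ‖z‖ ^ 2)) := by
  set C := {x : EuclideanSpace ℝ (Fin n) | x ∈ sparseVecs n (2 * k) ∧ ‖x‖ = 1} with hC
  obtain ⟨x₀, hx₀s, hx₀n, hx₀o⟩ := exists_sparse_orth n k hk hn z
  have hx₀C : x₀ ∈ C := ⟨hx₀s, hx₀n⟩
  have hfnn : ∀ x : EuclideanSpace ℝ (Fin n), 0 ≤ ⟪x, z⟫ ^ 2 / ‖z‖ ^ 2 :=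
    fun x => div_nonneg (sq_nonneg _) (sq_nonneg _)
  have hkey : ∀ x ∈ C,
      ENNReal.ofReal (‖x - (Submodule.orthogonalProjection (Submodule.span ℝ {z}) x :
          EuclideanSpace ℝ (Fin n))‖ ^ 2)
        = 1 - ENNReal.ofReal (⟪x, z⟫ ^ 2 / ‖z‖ ^ 2) := by
    intro x hx
    rw [norm_sub_proj_sq n z x hz, hx.2, one_pow,
      ENNReal.ofReal_sub _ (hfnn x), ENNReal.ofReal_one]
  have hN : (⨆ x ∈ C, ENNReal.ofReal (‖x - (Submodule.orthogonalProjection (Submodule.span ℝ {z}) x :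
      EuclideanSpace ℝ (Fin n))‖ ^ 2)) = 1 := by
    apply le_antisymm
    · refine iSup₂_le fun x hx => ?_
      rw [hkey x hx]
      exact tsub_le_self
    · refine le_trans ?_ (le_iSup₂ (f := fun x _ => ENNReal.ofReal
        (‖x - (Submodule.orthogonalProjection (Submodule.span ℝ {z}) x :
          EuclideanSpace ℝ (Fin n))‖ ^ 2)) x₀ hx₀C)
      rw [hkey x₀ hx₀C, hx₀o]
      simp
  have hD : (⨅ x ∈ C, ENNReal.ofReal (‖x - (Submodule.orthogonalProjection (Submodule.span ℝ {z}) x :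
      EuclideanSpace ℝ (Fin n))‖ ^ 2))
      = 1 - ⨆ x ∈ C, ENNReal.ofReal (⟪x, z⟫ ^ 2 / ‖z‖ ^ 2) := by
    rw [iInf_subtype', iSup_subtype']
    have : Nonempty C := ⟨⟨x₀, hx₀C⟩⟩
    rw [ENNReal.sub_iSup (by norm_num : (1:ℝ≥0∞) ≠ ⊤)]
    exact iInf_congr fun x => hkey x x.2
  rw [gammaRC, ← hC, hN, hD]

/-- characterization of `A_Σ^{RIP,nec}(R)` (Lemma 2 of the paper), as an identity
in `[1,∞] ⊆ [0,∞]`. -/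
theorem Anec_eq_inv_one_sub_inf_sup
    (n k : ℕ) (hk : 1 ≤ k) (hn : 2 * k ≤ n)
    (R : EuclideanSpace ℝ (Fin n) → ℝ)
    (hRhom : ∀ (c : ℝ) (x : EuclideanSpace ℝ (Fin n)), R (c • x) = |c| * R x)
    (hRadd : ∀ x y, R (x + y) ≤ R x + R y)
    (hRdef : ∀ x, R x = 0 → x = 0) :
    Anec n k R
      = 1 / (1 - ⨅ z ∈ descentConeSet R (sparseVecs n k) \ {0},
          ⨆ x ∈ {x : EuclideanSpace ℝ (Fin n) | x ∈ sparseVecs n (2 * k) ∧ ‖x‖ = 1},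
            ENNReal.ofReal (⟪x, z⟫ ^ 2 / ‖z‖ ^ 2))
    ∧ ∀ z : EuclideanSpace ℝ (Fin n), z ≠ 0 →
        sInf {r : ℝ | ∃ x ∈ sparseVecs n (2 * k), ‖x‖ = 1 ∧ r = ⟪x, z⟫ ^ 2 / ‖z‖ ^ 2} = 0
        ∧ gammaRC n k (fun x =>
              x - (Submodule.orthogonalProjection (Submodule.span ℝ {z}) x : EuclideanSpace ℝ (Fin n)))
          = 1 / (1 - ⨆ x ∈ {x : EuclideanSpace ℝ (Fin n) | x ∈ sparseVecs n (2 * k) ∧ ‖x‖ = 1},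
              ENNReal.ofReal (⟪x, z⟫ ^ 2 / ‖z‖ ^ 2)) := by
  constructor
  · rw [Anec]
    have hcong : ∀ z ∈ descentConeSet R (sparseVecs n k) \ {0},
        gammaRC n k (fun x =>
          x - (Submodule.orthogonalProjection (Submodule.span ℝ {z}) x : EuclideanSpace ℝ (Fin n)))
        = (1 - ⨆ x ∈ {x : EuclideanSpace ℝ (Fin n) | x ∈ sparseVecs n (2 * k) ∧ ‖x‖ = 1},
            ENNReal.ofReal (⟪x, z⟫ ^ 2 / ‖z‖ ^ 2))⁻¹ := by
      intro z hz
      rw [gamma_eq n k hk hn z hz.2, one_div]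
    rw [iInf_congr fun z => iInf_congr fun hz => hcong z hz, one_div, ENNReal.sub_iInf]
    simp_rw [ENNReal.sub_iInf, ENNReal.inv_iSup]
  · intro z hz
    obtain ⟨x₀, hx₀s, hx₀n, hx₀o⟩ := exists_sparse_orth n k hk hn z
    constructor
    · have hmem : (0:ℝ) ∈ {r : ℝ | ∃ x ∈ sparseVecs n (2 * k), ‖x‖ = 1 ∧
          r = ⟪x, z⟫ ^ 2 / ‖z‖ ^ 2} := ⟨x₀, hx₀s, hx₀n, by rw [hx₀o]; simp⟩
      apply le_antisymm
      · exact csInf_le ⟨0, fun r ⟨x, _, _, hr⟩ => hr ▸ div_nonneg (sq_nonneg _) (sq_nonneg _)⟩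
          hmem
      · exact le_csInf ⟨0, hmem⟩ fun r ⟨x, _, _, hr⟩ =>
          hr ▸ div_nonneg (sq_nonneg _) (sq_nonneg _)
    · exact gamma_eq n k hk hn z hz

end
end

section
/- Let k ≥ 1 and n ≥ 2k+1, and let Σ_k be the set of k-sparse vectors of ℝⁿ. Then the ℓ¹-norm is the unique maximizer of A_Σ^{RIP,nec} over the class of weighted ℓ¹-norms: for every weight vector w ∈ ℝⁿ with w_i > 0 for all i, max_i w_i = 1, and w ≠ (1,…,1), one has A_Σ^{RIP,nec}(‖·‖_w) < A_Σ^{RIP,nec}(‖·‖₁); equivalently B_Σ(‖·‖_w) > B_Σ(‖·‖₁). -/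
open scoped BigOperators ENNReal RealInnerProductSpace
open MeasureTheory Metric

noncomputable section

/-- `B_Σ(R)`, where `T₂` selects, for each `z`, a set of `2k` indices carrying `2k` largest
absolute values of coordinates of `z`. -/
def Bsigma (n k : ℕ) (T₂ : EuclideanSpace ℝ (Fin n) → Finset (Fin n))
    (R : EuclideanSpace ℝ (Fin n) → ℝ) : ℝ :=
  sSup {r : ℝ | ∃ z ∈ descentConeSet R (sparseVecs n k) \ {0},
    r = ‖coordRestrict z (T₂ z)ᶜ‖ ^ 2 / ‖coordRestrict z (T₂ z)‖ ^ 2}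

namespace Work

variable {n k : ℕ}

abbrev E (n : ℕ) := EuclideanSpace ℝ (Fin n)

/-- sum of squares on a finset -/
def sq2 (S : Finset (Fin n)) (z : E n) : ℝ := ∑ i ∈ S, (z i)^2

/-- total sum of squares -/
def nsq (z : E n) : ℝ := ∑ i, (z i)^2

lemma sq2_nonneg (S : Finset (Fin n)) (z : E n) : 0 ≤ sq2 S z :=
  Finset.sum_nonneg fun i _ => sq_nonneg _

lemma sq2_mono {S T : Finset (Fin n)} (h : S ⊆ T) (z : E n) : sq2 S z ≤ sq2 T z :=
  Finset.sum_le_sum_of_subset_of_nonneg h (fun i _ _ => sq_nonneg _)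

lemma sq2_le_nsq (S : Finset (Fin n)) (z : E n) : sq2 S z ≤ nsq z :=
  Finset.sum_le_sum_of_subset_of_nonneg (Finset.subset_univ S) (fun i _ _ => sq_nonneg _)

lemma nsq_eq_norm_sq (z : E n) : nsq z = ‖z‖^2 := by
  rw [← real_inner_self_eq_norm_sq]
  simp only [nsq, PiLp.inner_apply, RCLike.inner_apply, conj_trivial, sq]

lemma nsq_nonneg (z : E n) : 0 ≤ nsq z := Finset.sum_nonneg fun i _ => sq_nonneg _

lemma nsq_pos {z : E n} (hz : z ≠ 0) : 0 < nsq z := by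
  rw [nsq_eq_norm_sq]
  have : 0 < ‖z‖ := norm_pos_iff.mpr hz
  positivity

lemma sq2_compl (S : Finset (Fin n)) (z : E n) : sq2 Sᶜ z = nsq z - sq2 S z := by
  have : sq2 S z + sq2 Sᶜ z = nsq z := by
    rw [sq2, sq2, nsq, ← Finset.sum_add_sum_compl S]
  linarith

lemma coordRestrict_normsq (z : E n) (S : Finset (Fin n)) :
    ‖coordRestrict z S‖^2 = sq2 S z := by
  rw [← nsq_eq_norm_sq, nsq, sq2]
  rw [← Finset.sum_add_sum_compl S]
  have h1 : ∀ i ∈ S, (coordRestrict z S i)^2 = (z i)^2 := by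
    intro i hi; simp [coordRestrict, hi]
  have h2 : ∀ i ∈ Sᶜ, (coordRestrict z S i)^2 = 0 := by
    intro i hi; simp only [Finset.mem_compl] at hi; simp [coordRestrict, hi]
  rw [Finset.sum_congr rfl h1, Finset.sum_congr rfl h2]
  simp

/-- index set for the top-2k max -/
def idxSets (n k : ℕ) : Finset (Finset (Fin n)) :=
  Finset.univ.powerset.filter (fun S => S.card ≤ 2*k)

lemma idxSets_nonempty : (idxSets n k).Nonempty :=
  ⟨∅, by simp [idxSets]⟩

lemma mem_idxSets {S : Finset (Fin n)} : S ∈ idxSets n k ↔ S.card ≤ 2*k := by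
  simp [idxSets]

/-- max of sq2 over sets of cardinality at most 2k -/
def topSq (n k : ℕ) (z : E n) : ℝ :=
  (idxSets n k).sup' idxSets_nonempty (fun S => sq2 S z)

lemma sq2_le_topSq {S : Finset (Fin n)} (h : S.card ≤ 2*k) (z : E n) :
    sq2 S z ≤ topSq n k z :=
  Finset.le_sup' (fun S => sq2 S z) (mem_idxSets.mpr h)

lemma topSq_exists (z : E n) : ∃ S : Finset (Fin n), S.card ≤ 2*k ∧ topSq n k z = sq2 S z := by
  obtain ⟨S, hS, h⟩ := Finset.exists_mem_eq_sup' (idxSets_nonempty (n := n) (k := k))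
    (fun S => sq2 S z)
  exact ⟨S, mem_idxSets.mp hS, h⟩

lemma topSq_nonneg (z : E n) : 0 ≤ topSq n k z := by
  obtain ⟨S, _, h⟩ := topSq_exists (n := n) (k := k) z
  rw [h]; exact sq2_nonneg S z

lemma topSq_le_nsq (z : E n) : topSq n k z ≤ nsq z := by
  obtain ⟨S, _, h⟩ := topSq_exists (n := n) (k := k) z
  rw [h]; exact sq2_le_nsq S z

lemma topSq_pos (hk : 1 ≤ k) {z : E n} (hz : z ≠ 0) : 0 < topSq n k z := by
  have : ∃ i, z i ≠ 0 := by
    by_contra h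
    push_neg at h
    exact hz (PiLp.ext h)
  obtain ⟨i, hi⟩ := this
  have h1 : sq2 {i} z ≤ topSq n k z := sq2_le_topSq (by simpa using by omega) z
  have : 0 < sq2 {i} z := by simp [sq2]; positivity
  linarith

/-- exchange lemma : a majorizing set of cardinality ≥ card S dominates -/
lemma sq2_le_of_sel {S T : Finset (Fin n)} (z : E n) (hcard : S.card ≤ T.card)
    (hmaj : ∀ i ∈ T, ∀ j ∉ T, |z j| ≤ |z i|) : sq2 S z ≤ sq2 T z := by
  have hS : sq2 S z = sq2 (S ∩ T) z + sq2 (S \ T) z := by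
    rw [sq2, sq2, sq2, ← Finset.sum_inter_add_sum_sdiff S T]
  have hT : sq2 T z = sq2 (T ∩ S) z + sq2 (T \ S) z := by
    rw [sq2, sq2, sq2, ← Finset.sum_inter_add_sum_sdiff T S]
  rw [hS, hT, Finset.inter_comm S T]
  have key : sq2 (S \ T) z ≤ sq2 (T \ S) z := by
    rcases Finset.eq_empty_or_nonempty (S \ T) with h | h
    · rw [h]; simpa [sq2] using sq2_nonneg (T \ S) z
    · have hcards : (S \ T).card ≤ (T \ S).card := by
        have h1 := Finset.card_inter_add_card_sdiff S T
        have h2 := Finset.card_inter_add_card_sdiff T S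
        rw [Finset.inter_comm T S] at h2
        omega
      have hTS : (T \ S).Nonempty := by
        rw [← Finset.card_pos] at h ⊢
        omega
      obtain ⟨j₀, hj₀, hmin⟩ := Finset.exists_min_image (T \ S) (fun i => (z i)^2) hTS
      have hb : ∀ i ∈ S \ T, (z i)^2 ≤ (z j₀)^2 := by
        intro i hi
        have hiT : i ∉ T := (Finset.mem_sdiff.mp hi).2
        have := hmaj j₀ (Finset.mem_sdiff.mp hj₀).1 i hiT
        have h2 : |z i|^2 ≤ |z j₀|^2 := pow_le_pow_left₀ (abs_nonneg _) this 2
        simpa [sq_abs] using h2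
      calc sq2 (S \ T) z ≤ (S \ T).card • (z j₀)^2 := Finset.sum_le_card_nsmul _ _ _ hb
      _ ≤ (T \ S).card • (z j₀)^2 := by
          have := sq_nonneg (z j₀)
          simpa using nsmul_le_nsmul_left this hcards
      _ ≤ sq2 (T \ S) z := Finset.card_nsmul_le_sum _ _ _ (fun i hi => hmin i hi)
  linarith

/-- a selector set of cardinality 2k attains topSq -/
lemma topSq_eq_of_sel {S : Finset (Fin n)} (z : E n) (hcard : S.card = 2*k)
    (hmaj : ∀ i ∈ S, ∀ j ∉ S, |z j| ≤ |z i|) : topSq n k z = sq2 S z := by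
  apply le_antisymm
  · obtain ⟨S', hS', h⟩ := topSq_exists (n := n) (k := k) z
    rw [h]
    exact sq2_le_of_sel z (by omega) hmaj
  · exact sq2_le_topSq (le_of_eq hcard) z


/-- permutation invariance of nsq -/
lemma nsq_comp (σ : Equiv.Perm (Fin n)) (z : E n) :
    nsq (WithLp.toLp 2 (fun i => z (σ i)) : E n) = nsq z := by
  rw [nsq, nsq]
  exact Equiv.sum_comp σ (fun i => (z i)^2)

lemma sq2_comp (σ : Equiv.Perm (Fin n)) (z : E n) (S : Finset (Fin n)) :
    sq2 S (WithLp.toLp 2 (fun i => z (σ i)) : E n) = sq2 (S.image σ) z := by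
  rw [sq2, sq2, Finset.sum_image (fun a _ b _ h => σ.injective h)]

/-- permutation invariance of topSq -/
lemma topSq_comp (σ : Equiv.Perm (Fin n)) (z : E n) :
    topSq n k (WithLp.toLp 2 (fun i => z (σ i)) : E n) = topSq n k z := by
  apply le_antisymm
  · obtain ⟨S, hS, h⟩ := topSq_exists (n := n) (k := k) (WithLp.toLp 2 (fun i => z (σ i)) : E n)
    rw [h, sq2_comp]
    exact sq2_le_topSq (le_trans (Finset.card_image_le) hS) z
  · obtain ⟨S, hS, h⟩ := topSq_exists (n := n) (k := k) z
    rw [h]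
    have : sq2 S z = sq2 (S.image σ.symm) (WithLp.toLp 2 (fun i => z (σ i)) : E n) := by
      rw [sq2_comp]
      congr 1
      rw [Finset.image_image]
      simp
    rw [this]
    exact sq2_le_topSq (le_trans (Finset.card_image_le) hS) _
/-- greedy selector lemma -/
lemma exists_sel_superset (f : Fin n → ℝ) (S₀ : Finset (Fin n))
    (h₀ : ∀ i ∈ S₀, ∀ j ∉ S₀, f j ≤ f i) (m : ℕ) (h1 : S₀.card ≤ m) (h2 : m ≤ n) :
    ∃ S : Finset (Fin n), S₀ ⊆ S ∧ S.card = m ∧ ∀ i ∈ S, ∀ j ∉ S, f j ≤ f i := by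
  induction m with
  | zero =>
    refine ⟨S₀, subset_rfl, ?_, h₀⟩
    omega
  | succ m ih =>
    rcases Nat.lt_or_ge m S₀.card with hlt | hge
    · -- S₀.card = m + 1
      exact ⟨S₀, subset_rfl, by omega, h₀⟩
    · obtain ⟨S, hsub, hcard, hsel⟩ := ih hge (by omega)
      have hcompl : Sᶜ.Nonempty := by
        rw [← Finset.card_pos, Finset.card_compl]
        simp only [Fintype.card_fin]
        omega
      obtain ⟨a, ha, hmax⟩ := Finset.exists_max_image Sᶜ f hcompl
      have haS : a ∉ S := Finset.mem_compl.mp ha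
      refine ⟨insert a S, hsub.trans (Finset.subset_insert a S), ?_, ?_⟩
      · rw [Finset.card_insert_of_notMem haS, hcard]
      · intro i hi j hj
        have hjS : j ∉ S := fun hjS => hj (Finset.mem_insert_of_mem hjS)
        have hja : j ≠ a := fun hja => hj (hja ▸ Finset.mem_insert_self a S)
        rcases Finset.mem_insert.mp hi with rfl | hiS
        · exact hmax j (Finset.mem_compl.mpr hjS)
        · exact hsel i hiS j hjS

/-- descent cone characterization -/
lemma descent_iff (w : Fin n → ℝ) (hw : ∀ i, 0 < w i) (z : E n) :
    z ∈ descentConeSet (wNorm w) (sparseVecs n k) ↔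
    ∃ T : Finset (Fin n), T.card ≤ k ∧ ∑ i ∈ Tᶜ, w i * |z i| ≤ ∑ i ∈ T, w i * |z i| := by
  constructor
  · rintro hz
    simp only [descentConeSet, Set.mem_iUnion] at hz
    obtain ⟨x, ⟨T, hTcard, hx0⟩, hzx⟩ := hz
    refine ⟨T, hTcard, ?_⟩
    simp only [descentCone, Set.mem_setOf_eq, wNorm, PiLp.add_apply] at hzx
    rw [← Finset.sum_add_sum_compl T (fun i => w i * |x i + z i|),
        ← Finset.sum_add_sum_compl T (fun i => w i * |x i|)] at hzx
    have e1 : ∀ i ∈ Tᶜ, w i * |x i + z i| = w i * |z i| := by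
      intro i hi
      rw [hx0 i (Finset.mem_compl.mp hi), zero_add]
    have e2 : ∀ i ∈ Tᶜ, w i * |x i| = 0 := by
      intro i hi
      rw [hx0 i (Finset.mem_compl.mp hi)]
      simp
    rw [Finset.sum_congr rfl e1, Finset.sum_congr rfl e2] at hzx
    have e3 : ∀ i ∈ T, w i * |x i| - w i * |z i| ≤ w i * |x i + z i| := by
      intro i _
      have h1 : |x i| - |z i| ≤ |x i + z i| := by
        have := abs_sub_abs_le_abs_sub (x i) (-(z i))
        simp only [abs_neg, sub_neg_eq_add] at this
        linarith
      have := (hw i).le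
      nlinarith
    have h4 : ∑ i ∈ T, (w i * |x i| - w i * |z i|) ≤ ∑ i ∈ T, w i * |x i + z i| :=
      Finset.sum_le_sum e3
    rw [Finset.sum_sub_distrib] at h4
    rw [Finset.sum_const_zero] at hzx
    linarith
  · rintro ⟨T, hTcard, hT⟩
    set t : ℝ := 1 + ∑ i, |z i| with ht
    have htz : ∀ i, |z i| ≤ t := by
      intro i
      have h1 : |z i| ≤ ∑ j, |z j| :=
        Finset.single_le_sum (fun j _ => abs_nonneg (z j)) (Finset.mem_univ i)
      simp only [ht]; linarith
    have ht0 : 0 ≤ t := by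
      have : 0 ≤ ∑ i, |z i| := Finset.sum_nonneg fun i _ => abs_nonneg _
      simp only [ht]; linarith
    set x : E n := WithLp.toLp 2 (fun i => if i ∈ T then (if 0 ≤ z i then -t else t) else 0) with hx
    simp only [descentConeSet, Set.mem_iUnion]
    refine ⟨x, ⟨T, hTcard, fun i hi => by simp [hx, hi]⟩, ?_⟩
    simp only [descentCone, Set.mem_setOf_eq, wNorm, PiLp.add_apply]
    rw [← Finset.sum_add_sum_compl T (fun i => w i * |x i + z i|),
        ← Finset.sum_add_sum_compl T (fun i => w i * |x i|)]
    have e1 : ∀ i ∈ T, w i * |x i + z i| = w i * (t - |z i|) := by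
      intro i hi
      congr 1
      simp only [hx, if_pos hi]
      rcases le_or_gt 0 (z i) with h | h
      · rw [if_pos h, abs_of_nonpos (by have := htz i; rw [abs_of_nonneg h] at this; linarith)]
        rw [abs_of_nonneg h]; ring
      · rw [if_neg (not_le.mpr h), abs_of_nonneg (by have := htz i; rw [abs_of_neg h] at this; linarith)]
        rw [abs_of_neg h]; ring
    have e2 : ∀ i ∈ T, w i * |x i| = w i * t := by
      intro i hi
      simp only [hx, if_pos hi]
      rcases le_or_gt 0 (z i) with h | h
      · rw [if_pos h, abs_of_nonpos (by linarith), neg_neg]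
      · rw [if_neg (not_le.mpr h), abs_of_nonneg (by linarith)]
    have e3 : ∀ i ∈ Tᶜ, w i * |x i + z i| = w i * |z i| := by
      intro i hi
      simp [hx, Finset.mem_compl.mp hi]
    have e4 : ∀ i ∈ Tᶜ, w i * |x i| = 0 := by
      intro i hi
      simp [hx, Finset.mem_compl.mp hi]
    rw [Finset.sum_congr rfl e1, Finset.sum_congr rfl e2, Finset.sum_congr rfl e3,
        Finset.sum_congr rfl e4]
    have expand : ∑ i ∈ T, w i * (t - |z i|) = ∑ i ∈ T, w i * t - ∑ i ∈ T, w i * |z i| := by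
      rw [← Finset.sum_sub_distrib]
      congr 1; ext i; ring
    rw [expand]
    simp only [Finset.sum_const_zero, add_zero]
    linarith


/-- norm of residual of projection onto span z -/
lemma norm_res_sq {z : E n} (hz : z ≠ 0) (x : E n) :
    ‖x - (Submodule.orthogonalProjection (Submodule.span ℝ {z}) x : E n)‖^2
      = ‖x‖^2 - ⟪z, x⟫^2 / ‖z‖^2 := by
  have hz2 : (‖z‖:ℝ)^2 ≠ 0 := by
    have : 0 < ‖z‖ := norm_pos_iff.mpr hz
    positivity
  have hproj : ((Submodule.orthogonalProjection (Submodule.span ℝ {z}) x : E n))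
      = (⟪z, x⟫ / ‖z‖^2) • z := by
    rw [Submodule.coe_orthogonalProjectionOnto_apply, Submodule.starProjection_singleton]
    norm_num
  rw [hproj, norm_sub_sq_real, real_inner_smul_right, norm_smul]
  simp only [Real.norm_eq_abs, mul_pow, sq_abs]
  rw [real_inner_comm x z]
  field_simp
  ring

/-- Cauchy–Schwarz bound for sparse vectors -/
lemma inner_sq_le_topSq {z x : E n} (hx : x ∈ sparseVecs n (2*k)) :
    ⟪z, x⟫^2 ≤ topSq n k z * ‖x‖^2 := by
  obtain ⟨s, hscard, hs0⟩ := hx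
  have hinner : ⟪z, x⟫ = ∑ i ∈ s, z i * x i := by
    rw [PiLp.inner_apply]
    simp only [RCLike.inner_apply, conj_trivial]
    rw [Finset.sum_congr rfl (fun i _ => mul_comm (x i) (z i))]
    rw [← Finset.sum_add_sum_compl s (fun i => z i * x i)]
    have : ∀ i ∈ sᶜ, z i * x i = 0 := by
      intro i hi
      rw [hs0 i (Finset.mem_compl.mp hi), mul_zero]
    rw [Finset.sum_congr rfl this]
    simp
  rw [hinner]
  have h1 : ∑ i ∈ s, (x i)^2 ≤ ‖x‖^2 := by
    rw [← nsq_eq_norm_sq]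
    exact sq2_le_nsq s x
  have h2 : ∑ i ∈ s, (z i)^2 ≤ topSq n k z := sq2_le_topSq hscard z
  have cs' : (∑ i ∈ s, z i * x i)^2 ≤ (∑ i ∈ s, (z i)^2) * (∑ i ∈ s, (x i)^2) :=
    Finset.sum_mul_sq_le_sq_mul_sq s _ _
  have hxs : 0 ≤ ∑ i ∈ s, (x i)^2 := Finset.sum_nonneg fun i _ => sq_nonneg _
  have hts : 0 ≤ topSq n k z := topSq_nonneg z
  nlinarith

/-- attainment vector for the infimum -/
lemma exists_attain_inf (hk : 1 ≤ k) {z : E n} (hz : z ≠ 0) :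
    ∃ x : E n, x ∈ sparseVecs n (2*k) ∧ ‖x‖ = 1 ∧ ⟪z, x⟫^2 = topSq n k z := by
  obtain ⟨S, hScard, hSeq⟩ := topSq_exists (n := n) (k := k) z
  have htop : 0 < topSq n k z := topSq_pos hk hz
  have hcr : ‖coordRestrict z S‖^2 = topSq n k z := by
    rw [coordRestrict_normsq, ← hSeq]
  have hcrpos : 0 < ‖coordRestrict z S‖ := by
    nlinarith [norm_nonneg (coordRestrict z S)]
  refine ⟨‖coordRestrict z S‖⁻¹ • coordRestrict z S, ?_, ?_, ?_⟩
  · exact ⟨S, hScard, fun i hi => by simp [coordRestrict, hi]⟩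
  · rw [norm_smul]
    simp [abs_of_pos hcrpos, inv_mul_cancel₀ (ne_of_gt hcrpos)]
  · rw [real_inner_smul_right]
    have : ⟪z, coordRestrict z S⟫ = sq2 S z := by
      rw [PiLp.inner_apply]
      simp only [RCLike.inner_apply, conj_trivial]
      rw [Finset.sum_congr rfl (fun i _ => mul_comm (coordRestrict z S i) (z i))]
      rw [sq2, ← Finset.sum_add_sum_compl S]
      have e1 : ∀ i ∈ S, z i * coordRestrict z S i = (z i)^2 := by
        intro i hi; simp [coordRestrict, hi, sq]
      have e2 : ∀ i ∈ Sᶜ, z i * coordRestrict z S i = 0 := by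
        intro i hi; simp [coordRestrict, Finset.mem_compl.mp hi]
      rw [Finset.sum_congr rfl e1, Finset.sum_congr rfl e2]
      simp
    rw [this, ← hSeq]
    rw [mul_pow, ← hcr]
    have h2 : (‖coordRestrict z S‖:ℝ) ≠ 0 := ne_of_gt hcrpos
    field_simp

/-- orthogonal sparse unit vector -/
lemma exists_orth_unit (hk : 1 ≤ k) (hn : 2*k+1 ≤ n) {z : E n} (hz : z ≠ 0) :
    ∃ x : E n, x ∈ sparseVecs n (2*k) ∧ ‖x‖ = 1 ∧ ⟪z, x⟫ = 0 := by
  have : ∃ i, z i ≠ 0 := by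
    by_contra h; push_neg at h; exact hz (PiLp.ext h)
  obtain ⟨i, hi⟩ := this
  have hcard : 1 < Fintype.card (Fin n) := by simp; omega
  obtain ⟨j, hj⟩ := Fintype.exists_ne_of_one_lt_card hcard i
  set v : E n := WithLp.toLp 2 (fun t => if t = i then z j else if t = j then -z i else 0) with hv
  have hvj : v j = -z i := by simp [hv, hj]
  have hvne : v ≠ 0 := by
    intro h
    have : v j = 0 := by rw [h]; rfl
    rw [hvj] at this
    exact hi (by linarith [neg_eq_zero.mp this])
  have hvpos : 0 < ‖v‖ := norm_pos_iff.mpr hvne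
  have hinner : ⟪z, v⟫ = 0 := by
    rw [PiLp.inner_apply]
    simp only [RCLike.inner_apply, conj_trivial]
    rw [Finset.sum_eq_add_of_mem i j (Finset.mem_univ i) (Finset.mem_univ j) (Ne.symm hj)]
    · simp [hv, hj, Ne.symm hj]; ring
    · intro t _ ht
      simp [hv, ht.1, ht.2]
  refine ⟨‖v‖⁻¹ • v, ⟨{i, j}, ?_, ?_⟩, ?_, ?_⟩
  · have : ({i, j} : Finset (Fin n)).card ≤ 2 :=
      le_trans (Finset.card_insert_le _ _) (by simp)
    omega
  · intro t ht
    simp only [Finset.mem_insert, Finset.mem_singleton] at ht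
    push_neg at ht
    simp [hv, ht.1, ht.2]
  · rw [norm_smul]
    simp [abs_of_pos hvpos, inv_mul_cancel₀ (ne_of_gt hvpos)]
  · rw [real_inner_smul_right, hinner, mul_zero]

/-- the formula for gammaRC of the projection residual -/
lemma gammaRC_formula (hk : 1 ≤ k) (hn : 2*k+1 ≤ n) {z : E n} (hz : z ≠ 0) :
    gammaRC n k (fun x => x - (Submodule.orthogonalProjection (Submodule.span ℝ {z}) x : E n))
      = ENNReal.ofReal 1 / ENNReal.ofReal ((nsq z - topSq n k z) / nsq z) := by
  have hnsq : 0 < nsq z := nsq_pos hz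
  have htop : 0 < topSq n k z := topSq_pos hk hz
  have hzn : ‖z‖^2 = nsq z := (nsq_eq_norm_sq z).symm
  rw [gammaRC]
  congr 1
  · -- sup = ofReal 1
    apply le_antisymm
    · apply iSup₂_le
      intro x hx
      apply ENNReal.ofReal_le_ofReal
      rw [norm_res_sq hz x, hx.2]
      have h1 : 0 ≤ ⟪z, x⟫^2 / ‖z‖^2 := by positivity
      linarith
    · obtain ⟨x, hxs, hxn, hxo⟩ := exists_orth_unit hk hn hz
      have : ENNReal.ofReal 1 = ENNReal.ofReal
          (‖x - (Submodule.orthogonalProjection (Submodule.span ℝ {z}) x : E n)‖^2) := by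
        congr 1
        rw [norm_res_sq hz x, hxn, hxo]
        norm_num
      rw [this]
      exact le_iSup₂ (f := fun x _ => ENNReal.ofReal
        (‖x - (Submodule.orthogonalProjection (Submodule.span ℝ {z}) x : E n)‖^2)) x ⟨hxs, hxn⟩
  · -- inf = ofReal ν
    apply le_antisymm
    · obtain ⟨x, hxs, hxn, hxa⟩ := exists_attain_inf hk hz
      have heq : ENNReal.ofReal
          (‖x - (Submodule.orthogonalProjection (Submodule.span ℝ {z}) x : E n)‖^2)
          = ENNReal.ofReal ((nsq z - topSq n k z) / nsq z) := by
        congr 1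
        rw [norm_res_sq hz x, hxn, hxa, hzn]
        field_simp
      rw [← heq]
      exact iInf₂_le x ⟨hxs, hxn⟩
    · apply le_iInf₂
      intro x hx
      apply ENNReal.ofReal_le_ofReal
      rw [norm_res_sq hz x, hx.2]
      have hb := inner_sq_le_topSq (z := z) hx.1
      rw [hx.2] at hb
      rw [hzn]
      rw [div_le_iff₀ hnsq, sub_mul, div_mul_cancel₀ _ (ne_of_gt hnsq)]
      have h2 : ⟪z, x⟫^2 ≤ topSq n k z := by simpa using hb
      nlinarith


/-- weighted feasibility predicate -/
def feas (n k : ℕ) (w : Fin n → ℝ) (z : E n) : Prop :=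
  ∃ T : Finset (Fin n), T.card ≤ k ∧ ∑ i ∈ Tᶜ, w i * |z i| ≤ ∑ i ∈ T, w i * |z i|

/-- the objective -/
def rho (n k : ℕ) (z : E n) : ℝ := (nsq z - topSq n k z) / topSq n k z

lemma nsq_smul (c : ℝ) (z : E n) : nsq (c • z) = c^2 * nsq z := by
  rw [nsq, nsq, Finset.mul_sum]
  congr 1; ext i
  simp [PiLp.smul_apply, smul_eq_mul]
  ring

lemma sq2_smul (c : ℝ) (z : E n) (S : Finset (Fin n)) : sq2 S (c • z) = c^2 * sq2 S z := by
  rw [sq2, sq2, Finset.mul_sum]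
  apply Finset.sum_congr rfl
  intro i _
  simp [PiLp.smul_apply, smul_eq_mul]
  ring

lemma topSq_smul (c : ℝ) (z : E n) : topSq n k (c • z) = c^2 * topSq n k z := by
  have hc : 0 ≤ c^2 := sq_nonneg c
  apply le_antisymm
  · obtain ⟨S, hS, h⟩ := topSq_exists (n := n) (k := k) (c • z)
    rw [h, sq2_smul]
    exact mul_le_mul_of_nonneg_left (sq2_le_topSq hS z) hc
  · obtain ⟨S, hS, h⟩ := topSq_exists (n := n) (k := k) z
    rw [h, ← sq2_smul]
    exact sq2_le_topSq hS _

lemma feas_smul {w : Fin n → ℝ} {z : E n} (c : ℝ) (h : feas n k w z) : feas n k w (c • z) := by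
  obtain ⟨T, hT, hineq⟩ := h
  refine ⟨T, hT, ?_⟩
  have e : ∀ (S : Finset (Fin n)), ∑ i ∈ S, w i * |(c • z) i| = |c| * ∑ i ∈ S, w i * |z i| := by
    intro S
    rw [Finset.mul_sum]
    apply Finset.sum_congr rfl
    intro i _
    simp [PiLp.smul_apply, smul_eq_mul, abs_mul]
    ring
  rw [e, e]
  exact mul_le_mul_of_nonneg_left hineq (abs_nonneg c)

lemma rho_smul {c : ℝ} (hc : c ≠ 0) (z : E n) : rho n k (c • z) = rho n k z := by
  rw [rho, rho, nsq_smul, topSq_smul, ← mul_sub, mul_div_mul_left]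
  positivity

lemma rho_nonneg (z : E n) : 0 ≤ rho n k z := by
  rw [rho]
  apply div_nonneg _ (topSq_nonneg z)
  have := topSq_le_nsq (n := n) (k := k) z
  linarith

lemma rho_comp (σ : Equiv.Perm (Fin n)) (z : E n) :
    rho n k (WithLp.toLp 2 (fun i => z (σ i)) : E n) = rho n k z := by
  rw [rho, rho, nsq_comp, topSq_comp]

/-- continuity of z ↦ sq2 S z -/
lemma continuous_sq2 (S : Finset (Fin n)) : Continuous (fun z : E n => sq2 S z) := by
  apply continuous_finset_sum
  intro i _
  exact ((EuclideanSpace.proj i : E n →L[ℝ] ℝ).continuous).pow 2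

lemma continuous_nsq : Continuous (fun z : E n => nsq z) := by
  apply continuous_finset_sum
  intro i _
  exact ((EuclideanSpace.proj i : E n →L[ℝ] ℝ).continuous).pow 2

lemma continuous_sup' {ι : Type*} (s : Finset ι) (hs : s.Nonempty) (f : ι → E n → ℝ)
    (hf : ∀ i, Continuous (f i)) : Continuous (fun z => s.sup' hs (fun i => f i z)) := by
  induction hs using Finset.Nonempty.cons_induction with
  | singleton i => simpa using hf i
  | cons i s hi hs ih =>
    have : (fun z => (Finset.cons i s hi).sup' (by simp) (fun j => f j z))
        = fun z => max (f i z) (s.sup' hs (fun j => f j z)) := by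
      ext z
      rw [Finset.sup'_cons]
    rw [this]
    exact (hf i).max ih

lemma continuous_topSq : Continuous (fun z : E n => topSq n k z) :=
  continuous_sup' _ idxSets_nonempty _ (fun S => continuous_sq2 S)

lemma isClosed_feas (w : Fin n → ℝ) : IsClosed {z : E n | feas n k w z} := by
  have : {z : E n | feas n k w z} =
      ⋃ T ∈ Finset.univ.powerset.filter (fun T : Finset (Fin n) => T.card ≤ k),
        {z : E n | ∑ i ∈ Tᶜ, w i * |z i| ≤ ∑ i ∈ T, w i * |z i|} := by
    ext z
    simp only [Set.mem_setOf_eq, Set.mem_iUnion, feas, Finset.mem_filter, Finset.mem_powerset]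
    constructor
    · rintro ⟨T, h1, h2⟩; exact ⟨T, ⟨Finset.subset_univ T, h1⟩, h2⟩
    · rintro ⟨T, ⟨_, h1⟩, h2⟩; exact ⟨T, h1, h2⟩
  rw [this]
  apply Set.Finite.isClosed_biUnion (Finset.finite_toSet _)
  intro T _
  apply isClosed_le
  · apply continuous_finset_sum
    intro i _
    exact (continuous_const.mul ((EuclideanSpace.proj i : E n →L[ℝ] ℝ).continuous.abs))
  · apply continuous_finset_sum
    intro i _
    exact (continuous_const.mul ((EuclideanSpace.proj i : E n →L[ℝ] ℝ).continuous.abs))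

/-- existence of a maximizer of the tail energy on the feasible sphere -/
lemma exists_maximizer (hk : 1 ≤ k) (hn : 2*k+1 ≤ n) :
    ∃ zs : E n, feas n k (fun _ => 1) zs ∧ ‖zs‖ = 1 ∧
      ∀ z : E n, feas n k (fun _ => 1) z → ‖z‖ = 1 →
        nsq z - topSq n k z ≤ nsq zs - topSq n k zs := by
  set K : Set (E n) := {z : E n | feas n k (fun _ => 1) z} ∩ sphere (0 : E n) 1 with hK
  have hcomp : IsCompact K := ((isCompact_sphere (0 : E n) 1).inter_left (isClosed_feas _))
  have hne : K.Nonempty := by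
    refine ⟨EuclideanSpace.single (⟨0, by omega⟩ : Fin n) (1:ℝ), ?_, ?_⟩
    · refine ⟨{⟨0, by omega⟩}, by simpa using hk, ?_⟩
      have e1 : ∀ i ∈ ({(⟨0, by omega⟩ : Fin n)} : Finset (Fin n))ᶜ,
          (1:ℝ) * |EuclideanSpace.single (⟨0, by omega⟩ : Fin n) (1:ℝ) i| = 0 := by
        intro i hi
        have : i ≠ ⟨0, by omega⟩ := by simpa using Finset.mem_compl.mp hi
        simp [EuclideanSpace.single_apply, this]
      rw [Finset.sum_congr rfl e1]
      simp
    · simp [mem_sphere_iff_norm, EuclideanSpace.norm_single]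
  have hcont : ContinuousOn (fun z : E n => nsq z - topSq n k z) K :=
    (continuous_nsq.sub continuous_topSq).continuousOn
  obtain ⟨zs, hzsK, hmax⟩ := hcomp.exists_isMaxOn hne hcont
  refine ⟨zs, hzsK.1, by simpa [mem_sphere_iff_norm] using hzsK.2, ?_⟩
  intro z hz hz1
  exact hmax ⟨hz, by simpa [mem_sphere_iff_norm] using hz1⟩


/-- exchange lemma for a nonnegative coordinate function -/
lemma sum_le_of_sel_gen (g : Fin n → ℝ) (hg : ∀ i, 0 ≤ g i) {S T : Finset (Fin n)}
    (hcard : S.card ≤ T.card) (hmaj : ∀ i ∈ T, ∀ j ∉ T, g j ≤ g i) :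
    ∑ i ∈ S, g i ≤ ∑ i ∈ T, g i := by
  have hS : ∑ i ∈ S, g i = ∑ i ∈ S ∩ T, g i + ∑ i ∈ S \ T, g i :=
    (Finset.sum_inter_add_sum_sdiff S T g).symm
  have hT : ∑ i ∈ T, g i = ∑ i ∈ T ∩ S, g i + ∑ i ∈ T \ S, g i :=
    (Finset.sum_inter_add_sum_sdiff T S g).symm
  rw [hS, hT, Finset.inter_comm S T]
  have key : ∑ i ∈ S \ T, g i ≤ ∑ i ∈ T \ S, g i := by
    rcases Finset.eq_empty_or_nonempty (S \ T) with h | h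
    · rw [h]
      simpa using Finset.sum_nonneg (fun i _ => hg i)
    · have hcards : (S \ T).card ≤ (T \ S).card := by
        have h1 := Finset.card_inter_add_card_sdiff S T
        have h2 := Finset.card_inter_add_card_sdiff T S
        rw [Finset.inter_comm T S] at h2
        omega
      have hTS : (T \ S).Nonempty := by
        rw [← Finset.card_pos] at h ⊢
        omega
      obtain ⟨j₀, hj₀, hmin⟩ := Finset.exists_min_image (T \ S) g hTS
      have hb : ∀ i ∈ S \ T, g i ≤ g j₀ :=
        fun i hi => hmaj j₀ (Finset.mem_sdiff.mp hj₀).1 i (Finset.mem_sdiff.mp hi).2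
      calc ∑ i ∈ S \ T, g i ≤ (S \ T).card • g j₀ := Finset.sum_le_card_nsmul _ _ _ hb
      _ ≤ (T \ S).card • g j₀ := by
          simpa using nsmul_le_nsmul_left (hg j₀) hcards
      _ ≤ ∑ i ∈ T \ S, g i := Finset.card_nsmul_le_sum _ _ _ (fun i hi => hmin i hi)
  linarith

/-- maximality transfers to rho on all feasible nonzero vectors -/
lemma rho_le_of_max (hk : 1 ≤ k) {zs : E n} (hzs1 : ‖zs‖ = 1)
    (hmaxi : ∀ z : E n, feas n k (fun _ => 1) z → ‖z‖ = 1 →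
      nsq z - topSq n k z ≤ nsq zs - topSq n k zs)
    {z : E n} (hf : feas n k (fun _ => 1) z) (hz : z ≠ 0) :
    rho n k z ≤ rho n k zs := by
  have hzn : (0:ℝ) < ‖z‖ := norm_pos_iff.mpr hz
  set c : ℝ := ‖z‖⁻¹ with hc
  have hc0 : c ≠ 0 := by positivity
  have hzh1 : ‖c • z‖ = 1 := by
    rw [norm_smul, hc]
    simp [abs_of_pos (inv_pos.mpr hzn)]
    exact inv_mul_cancel₀ (ne_of_gt hzn)
  have hfz : feas n k (fun _ => 1) (c • z) := feas_smul c hf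
  have hN := hmaxi (c • z) hfz hzh1
  have hzsne : zs ≠ 0 := by
    intro h; rw [h] at hzs1; simp at hzs1
  have hzhne : c • z ≠ 0 := by
    intro h; rw [h] at hzh1; simp at hzh1
  have h1 : nsq (c • z) = 1 := by rw [nsq_eq_norm_sq, hzh1]; norm_num
  have h2 : nsq zs = 1 := by rw [nsq_eq_norm_sq, hzs1]; norm_num
  have ha : 0 < topSq n k (c • z) := topSq_pos hk hzhne
  have hb : 0 < topSq n k zs := topSq_pos hk hzsne
  have ha1 : topSq n k (c • z) ≤ 1 := by
    have := topSq_le_nsq (n := n) (k := k) (c • z); linarith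
  have hba : topSq n k zs ≤ topSq n k (c • z) := by
    rw [h1, h2] at hN; linarith
  have : rho n k (c • z) ≤ rho n k zs := by
    rw [rho, rho, h1, h2]
    rw [div_le_div_iff₀ ha hb]
    nlinarith
  rw [← rho_smul hc0 z]
  exact this

/-- a feasible vector with positive rho -/
lemma exists_rho_pos (hk : 1 ≤ k) (hn : 2*k+1 ≤ n) :
    ∃ z : E n, feas n k (fun _ => 1) z ∧ z ≠ 0 ∧ 0 < rho n k z := by
  obtain ⟨T₀, _, hT₀card⟩ := Finset.exists_subset_card_eq
    (s := (Finset.univ : Finset (Fin n))) (n := k) (by simp; omega)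
  set z : E n := WithLp.toLp 2 (fun i => if i ∈ T₀ then (n:ℝ) else 1) with hz
  have hz1 : ∀ i, 1 ≤ |z i| := by
    intro i
    simp only [hz]
    split
    · rw [abs_of_nonneg (by positivity)]
      exact_mod_cast by omega
    · norm_num
  have hzne : z ≠ 0 := by
    intro h
    have hne : (Finset.univ : Finset (Fin n)).Nonempty := by
      rw [← Finset.card_pos]; simp; omega
    obtain ⟨i, _⟩ := hne
    have h2 := hz1 i
    rw [h] at h2
    simp only [PiLp.zero_apply, abs_zero] at h2
    linarith
  refine ⟨z, ⟨T₀, le_of_eq hT₀card, ?_⟩, hzne, ?_⟩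
  · have e1 : ∀ i ∈ T₀ᶜ, (1:ℝ) * |z i| = 1 := by
      intro i hi
      simp [hz, Finset.mem_compl.mp hi]
    have e2 : ∀ i ∈ T₀, (1:ℝ) * |z i| = n := by
      intro i hi
      rw [one_mul]
      simp only [hz, if_pos hi]
      rw [abs_of_nonneg (by positivity)]
    rw [Finset.sum_congr rfl e1, Finset.sum_congr rfl e2]
    simp only [Finset.sum_const, smul_eq_mul, mul_one]
    rw [Finset.card_compl, hT₀card]
    simp only [Fintype.card_fin, nsmul_eq_mul, mul_one]
    have h1 : ((n - k : ℕ) : ℝ) ≤ (n : ℝ) := by exact_mod_cast Nat.sub_le n k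
    have h2 : (n:ℝ) ≤ (k:ℝ) * n := by
      have : (1:ℝ) ≤ (k:ℝ) := by exact_mod_cast hk
      nlinarith [Nat.cast_nonneg (α := ℝ) n]
    linarith
  · rw [rho]
    apply div_pos _ (topSq_pos hk hzne)
    obtain ⟨S, hScard, hSeq⟩ := topSq_exists (n := n) (k := k) z
    rw [hSeq]
    have hcompl : sq2 Sᶜ z = nsq z - sq2 S z := sq2_compl S z
    have hcard : 1 ≤ Sᶜ.card := by
      rw [Finset.card_compl]
      simp only [Fintype.card_fin]
      omega
    have hlb : (Sᶜ.card : ℝ) * 1 ≤ sq2 Sᶜ z := by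
      rw [sq2]
      calc (Sᶜ.card : ℝ) * 1 = ∑ _i ∈ Sᶜ, (1:ℝ) := by simp
      _ ≤ ∑ i ∈ Sᶜ, (z i)^2 := by
          apply Finset.sum_le_sum
          intro i _
          have h3 := hz1 i
          nlinarith [sq_abs (z i), abs_nonneg (z i)]
    have hone : (1:ℝ) ≤ (Sᶜ.card : ℝ) := by exact_mod_cast hcard
    nlinarith


/-- a permutation matching two equi-cardinal finsets with two prescribed values -/
lemma exists_perm {α : Type*} [Fintype α] [DecidableEq α] (T A : Finset α)
    (hcard : T.card = A.card) {i₀ a₁ j₁ js : α}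
    (hi₀ : i₀ ∈ T) (ha₁ : a₁ ∈ A) (hj₁ : j₁ ∉ T) (hjs : js ∉ A) :
    ∃ σ : Equiv.Perm α, (∀ i, i ∈ T ↔ σ i ∈ A) ∧ σ i₀ = a₁ ∧ σ j₁ = js := by
  classical
  have hcardc : Tᶜ.card = Aᶜ.card := by
    rw [Finset.card_compl, Finset.card_compl, hcard]
  let e1 : {x // x ∈ T} ≃ {x // x ∈ A} := Finset.equivOfCardEq hcard
  let e2 : {x // ¬ x ∈ T} ≃ {x // ¬ x ∈ A} :=
    ((Equiv.subtypeEquivRight (fun x => (Finset.mem_compl (s := T)).symm)).trans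
      (Finset.equivOfCardEq hcardc)).trans (Equiv.subtypeEquivRight (fun x => Finset.mem_compl))
  let τ : Equiv.Perm α := Equiv.subtypeCongr e1 e2
  have hpos : ∀ i (hi : i ∈ T), τ i = (e1 ⟨i, hi⟩ : α) := by
    intro i hi
    simp only [τ, Equiv.subtypeCongr, Equiv.trans_apply,
      Equiv.sumCompl_symm_apply_of_pos hi, Equiv.sumCongr_apply, Sum.map_inl,
      Equiv.sumCompl_apply_inl]
  have hneg : ∀ i (hi : ¬ i ∈ T), τ i = (e2 ⟨i, hi⟩ : α) := by
    intro i hi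
    simp only [τ, Equiv.subtypeCongr, Equiv.trans_apply,
      Equiv.sumCompl_symm_apply_of_neg hi, Equiv.sumCongr_apply, Sum.map_inr,
      Equiv.sumCompl_apply_inr]
  have hτ : ∀ i, i ∈ T ↔ τ i ∈ A := by
    intro i
    by_cases hi : i ∈ T
    · rw [hpos i hi]
      exact ⟨fun _ => (e1 ⟨i, hi⟩).2, fun _ => hi⟩
    · rw [hneg i hi]
      constructor
      · intro h; exact absurd h hi
      · intro h; exact absurd h (e2 ⟨i, hi⟩).2
  -- now compose with swaps
  have hτi₀A : τ i₀ ∈ A := (hτ i₀).mp hi₀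
  have hτj₁A : τ j₁ ∉ A := fun h => hj₁ ((hτ j₁).mpr h)
  set s1 : Equiv.Perm α := Equiv.swap (τ i₀) a₁ with hs1
  set s2 : Equiv.Perm α := Equiv.swap (τ j₁) js with hs2
  have hs1mem : ∀ x : α, s1 x ∈ A ↔ x ∈ A := by
    intro x
    rw [hs1]
    rcases Equiv.swap_apply_def (τ i₀) a₁ x with _
    by_cases h1 : x = τ i₀
    · subst h1; rw [Equiv.swap_apply_left]; exact ⟨fun _ => hτi₀A, fun _ => ha₁⟩
    · by_cases h2 : x = a₁
      · subst h2; rw [Equiv.swap_apply_right]; exact ⟨fun _ => ha₁, fun _ => hτi₀A⟩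
      · rw [Equiv.swap_apply_of_ne_of_ne h1 h2]
  have hs2mem : ∀ x : α, s2 x ∈ A ↔ x ∈ A := by
    intro x
    rw [hs2]
    by_cases h1 : x = τ j₁
    · subst h1; rw [Equiv.swap_apply_left]
      exact ⟨fun h => absurd h hjs, fun h => absurd h hτj₁A⟩
    · by_cases h2 : x = js
      · subst h2; rw [Equiv.swap_apply_right]
        exact ⟨fun h => absurd h hτj₁A, fun h => absurd h hjs⟩
      · rw [Equiv.swap_apply_of_ne_of_ne h1 h2]
  refine ⟨τ.trans (s1.trans s2), ?_, ?_, ?_⟩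
  · intro i
    simp only [Equiv.trans_apply]
    rw [hs2mem, hs1mem]
    exact hτ i
  · simp only [Equiv.trans_apply]
    rw [hs1, Equiv.swap_apply_left]
    have hne1 : a₁ ≠ τ j₁ := fun h => hτj₁A (h ▸ ha₁)
    have hne2 : a₁ ≠ js := fun h => hjs (h ▸ ha₁)
    rw [hs2, Equiv.swap_apply_of_ne_of_ne hne1 hne2]
  · simp only [Equiv.trans_apply]
    have hne1 : τ j₁ ≠ τ i₀ := fun h => hj₁ (τ.injective h ▸ hi₀)
    have hne2 : τ j₁ ≠ a₁ := fun h => hτj₁A (h ▸ ha₁)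
    rw [hs1, Equiv.swap_apply_of_ne_of_ne hne1 hne2, hs2, Equiv.swap_apply_left]


set_option maxHeartbeats 3000000 in
/-- Core construction: from any ℓ¹-feasible direction with positive rho, build a strictly
better w-feasible direction. -/
lemma exists_better (hk : 1 ≤ k) (hn : 2*k+1 ≤ n) (w : Fin n → ℝ)
    (hpos : ∀ i, 0 < w i) (hle : ∀ i, w i ≤ 1) (hmax : ∃ i, w i = 1)
    (hne : w ≠ fun _ => 1)
    {z : E n} (hfeas : feas n k (fun _ => 1) z) (hz : z ≠ 0) (hρ : 0 < rho n k z) :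
    ∃ z' : E n, feas n k w z' ∧ z' ≠ 0 ∧ rho n k z < rho n k z' := by
  classical
  obtain ⟨T0, hT0card, hT0⟩ := hfeas
  simp only [one_mul] at hT0
  -- top-k selector set Tm
  obtain ⟨Tm, -, hTmcard, hTmsel⟩ := exists_sel_superset (fun i => |z i|) ∅
    (by simp) k (by simp) (by omega)
  have hfeasTm : ∑ i ∈ Tmᶜ, |z i| ≤ ∑ i ∈ Tm, |z i| := by
    have hA : ∑ i ∈ T0, |z i| ≤ ∑ i ∈ Tm, |z i| :=
      sum_le_of_sel_gen _ (fun i => abs_nonneg _) (by omega) hTmsel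
    have h1 : ∑ i ∈ T0, |z i| + ∑ i ∈ T0ᶜ, |z i| = ∑ i, |z i| :=
      Finset.sum_add_sum_compl T0 _
    have h2 : ∑ i ∈ Tm, |z i| + ∑ i ∈ Tmᶜ, |z i| = ∑ i, |z i| :=
      Finset.sum_add_sum_compl Tm _
    linarith
  -- top-2k selector set S containing Tm
  obtain ⟨S, hTmS, hScard, hSsel⟩ := exists_sel_superset (fun i => |z i|) Tm
    hTmsel (2*k) (by omega) (by omega)
  set Dn : ℝ := sq2 S z with hDndef
  have hDn : topSq n k z = Dn := topSq_eq_of_sel z hScard hSsel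
  have hDnpos : 0 < Dn := by rw [← hDn]; exact topSq_pos hk hz
  set N : ℝ := nsq z - Dn with hNdef
  have hNpos : 0 < N := by
    rw [rho, hDn] at hρ
    have := div_pos_iff.mp hρ
    rcases this with ⟨h1, _⟩ | ⟨_, h2⟩
    · linarith
    · linarith
  have hρval : rho n k z = N / Dn := by rw [rho, hDn]
  -- a nonzero coordinate outside S
  have hsum : ∑ i ∈ Sᶜ, (z i)^2 = N := by rw [← sq2, sq2_compl]
  have : ∃ j₁ ∈ Sᶜ, (z j₁)^2 ≠ 0 := by
    apply Finset.exists_ne_zero_of_sum_ne_zero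
    rw [hsum]; exact ne_of_gt hNpos
  obtain ⟨j₁, hj₁c, hj₁sq⟩ := this
  have hj₁S : j₁ ∉ S := Finset.mem_compl.mp hj₁c
  have hj₁T : j₁ ∉ Tm := fun h => hj₁S (hTmS h)
  have hj₁pos : 0 < |z j₁| := by
    apply abs_pos.mpr
    intro h0
    exact hj₁sq (by rw [h0]; norm_num)
  -- the minimum over S
  have hSne : S.Nonempty := by
    rw [← Finset.card_pos, hScard]; omega
  obtain ⟨im, himS, hminS⟩ := Finset.exists_min_image S (fun i => |z i|) hSne
  set mS : ℝ := |z im| with hmSdef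
  have hmS0 : 0 < mS := lt_of_lt_of_le hj₁pos (hSsel im himS j₁ hj₁S)
  have hout : ∀ j ∉ S, |z j| ≤ mS := fun j hj => hSsel im himS j hj
  have hminS' : ∀ i ∈ S, mS ≤ |z i| := fun i hi => hminS i hi
  -- weight structure
  obtain ⟨A, -, hAcard, hAsel⟩ := exists_sel_superset w ∅ (by simp) k (by simp) (by omega)
  have hAne : A.Nonempty := by rw [← Finset.card_pos, hAcard]; omega
  have ha₁ : ∃ a ∈ A, w a = 1 := by
    obtain ⟨i1, hi1⟩ := hmax
    by_cases h : i1 ∈ A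
    · exact ⟨i1, h, hi1⟩
    · obtain ⟨a, ha⟩ := hAne
      refine ⟨a, ha, le_antisymm (hle a) ?_⟩
      rw [← hi1]
      exact hAsel a ha i1 h
  obtain ⟨a₁, ha₁A, ha₁w⟩ := ha₁
  obtain ⟨am, hamA, hammin⟩ := Finset.exists_min_image A w hAne
  set cw : ℝ := w am with hcwdef
  have hcw1 : cw ≤ 1 := hle am
  have hcwpos : 0 < cw := hpos am
  have hAcne : Aᶜ.Nonempty := by
    rw [← Finset.card_pos, Finset.card_compl, hAcard]
    simp only [Fintype.card_fin]; omega
  obtain ⟨js, hjsc, hjsmin⟩ := Finset.exists_min_image Aᶜ w hAcne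
  have hjsA : js ∉ A := Finset.mem_compl.mp hjsc
  set cws : ℝ := w js with hcwsdef
  have hcscw : cws ≤ cw := hAsel am hamA js hjsA
  have hstrict : cw < 1 ∨ cws < cw := by
    by_contra hcon
    push_neg at hcon
    obtain ⟨hcg, hcsg⟩ := hcon
    have hcw1' : cw = 1 := le_antisymm hcw1 hcg
    apply hne
    funext i
    by_cases h : i ∈ A
    · exact le_antisymm (hle i) (by rw [← hcw1']; exact hammin i h)
    · have h1 : cws ≤ w i := hjsmin i (Finset.mem_compl.mpr h)
      have h2 : cw ≤ cws := hcsg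
      exact le_antisymm (hle i) (by rw [← hcw1']; linarith)
  -- base point in Tm
  have hTmne : Tm.Nonempty := by rw [← Finset.card_pos, hTmcard]; omega
  obtain ⟨i₀, hi₀⟩ := hTmne
  have hi₀pos : 0 < |z i₀| := lt_of_lt_of_le hj₁pos (hTmsel i₀ hi₀ j₁ hj₁T)
  -- the permutation
  obtain ⟨σ, hσmem, hσi₀, hσj₁⟩ := exists_perm Tm A (by rw [hTmcard, hAcard])
    hi₀ ha₁A hj₁T hjsA
  set u : Fin n → ℝ := fun i => w (σ i) with hudef
  have hule : ∀ i, u i ≤ 1 := fun i => hle _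
  have hupos : ∀ i, 0 < u i := fun i => hpos _
  have huT : ∀ i ∈ Tm, cw ≤ u i := fun i hi => hammin (σ i) ((hσmem i).mp hi)
  have huTc : ∀ i ∉ Tm, u i ≤ cw :=
    fun i hi => hAsel am hamA (σ i) (fun h => hi ((hσmem i).mpr h))
  have hui₀ : u i₀ = 1 := by rw [hudef]; simp only [hσi₀]; exact ha₁w
  have huj₁ : u j₁ = cws := by rw [hudef]; simp only [hσj₁, hcwsdef]
  -- strict slack
  set RHS : ℝ := ∑ i ∈ Tm, u i * |z i| with hRHSdef
  set LHS : ℝ := ∑ i ∈ Tmᶜ, u i * |z i| with hLHSdef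
  have hslack : LHS < RHS := by
    have h1 : cw * (∑ i ∈ Tm, |z i|) + (1 - cw) * |z i₀| ≤ RHS := by
      have e1 : RHS = u i₀ * |z i₀| + ∑ i ∈ Tm.erase i₀, u i * |z i| :=
        (Finset.add_sum_erase Tm _ hi₀).symm
      have e2 : ∑ i ∈ Tm, |z i| = |z i₀| + ∑ i ∈ Tm.erase i₀, |z i| :=
        (Finset.add_sum_erase Tm _ hi₀).symm
      have e3 : cw * ∑ i ∈ Tm.erase i₀, |z i| ≤ ∑ i ∈ Tm.erase i₀, u i * |z i| := by
        rw [Finset.mul_sum]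
        apply Finset.sum_le_sum
        intro i hi
        exact mul_le_mul_of_nonneg_right (huT i (Finset.mem_of_mem_erase hi)) (abs_nonneg _)
      rw [e1, e2, hui₀]
      ring_nf
      nlinarith [abs_nonneg (z i₀)]
    have h2 : LHS ≤ cw * (∑ i ∈ Tmᶜ, |z i|) - (cw - cws) * |z j₁| := by
      have hj₁m : j₁ ∈ Tmᶜ := Finset.mem_compl.mpr hj₁T
      have e1 : LHS = u j₁ * |z j₁| + ∑ i ∈ Tmᶜ.erase j₁, u i * |z i| :=
        (Finset.add_sum_erase Tmᶜ _ hj₁m).symm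
      have e2 : ∑ i ∈ Tmᶜ, |z i| = |z j₁| + ∑ i ∈ Tmᶜ.erase j₁, |z i| :=
        (Finset.add_sum_erase Tmᶜ _ hj₁m).symm
      have e3 : ∑ i ∈ Tmᶜ.erase j₁, u i * |z i| ≤ cw * ∑ i ∈ Tmᶜ.erase j₁, |z i| := by
        rw [Finset.mul_sum]
        apply Finset.sum_le_sum
        intro i hi
        apply mul_le_mul_of_nonneg_right _ (abs_nonneg _)
        exact huTc i (fun h => (Finset.mem_compl.mp (Finset.mem_of_mem_erase hi)) h)
      rw [e1, e2, huj₁]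
      ring_nf
      nlinarith [abs_nonneg (z j₁)]
    have h3 : cw * (∑ i ∈ Tmᶜ, |z i|) ≤ cw * (∑ i ∈ Tm, |z i|) :=
      mul_le_mul_of_nonneg_left hfeasTm (le_of_lt hcwpos)
    have h4 : 0 < (1 - cw) * |z i₀| + (cw - cws) * |z j₁| := by
      rcases hstrict with h | h
      · have := mul_pos (by linarith : (0:ℝ) < 1 - cw) hi₀pos
        nlinarith [mul_nonneg (by linarith : (0:ℝ) ≤ cw - cws) (abs_nonneg (z j₁))]
      · have := mul_pos (by linarith : (0:ℝ) < cw - cws) hj₁pos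
        nlinarith [mul_nonneg (by linarith : (0:ℝ) ≤ 1 - cw) (abs_nonneg (z i₀))]
    linarith
  set δ : ℝ := RHS - LHS with hδdef
  have hδpos : 0 < δ := by rw [hδdef]; linarith
  -- construct the improved vector z', feasible for u w.r.t. Tm
  have main : ∃ z' : E n,
      (∑ i ∈ Tmᶜ, u i * |z' i| ≤ ∑ i ∈ Tm, u i * |z' i|) ∧ z' ≠ 0 ∧
      rho n k z < rho n k z' := by
    by_cases hcaseI : ∃ j₃, j₃ ∉ S ∧ |z j₃| < mS
    · -- Case I : grow a strictly submaximal coordinate outside S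
      obtain ⟨j₃, hj₃S, hj₃lt⟩ := hcaseI
      set ε : ℝ := min (δ/2) (mS - |z j₃|) with hεdef
      have hε0 : 0 < ε := lt_min (by linarith) (by linarith)
      have hεδ : ε ≤ δ/2 := min_le_left _ _
      have hεm : ε ≤ mS - |z j₃| := min_le_right _ _
      set sg : ℝ := if 0 ≤ z j₃ then 1 else -1 with hsgdef
      set z' : E n := WithLp.toLp 2 (fun i => if i = j₃ then z j₃ + ε * sg else z i) with hz'def
      have hother : ∀ i, i ≠ j₃ → z' i = z i := by
        intro i hi; simp only [hz'def, if_neg hi]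
      have habs : |z' j₃| = |z j₃| + ε := by
        simp only [hz'def, if_pos rfl, ↓reduceIte, hsgdef]
        by_cases h : 0 ≤ z j₃
        · rw [if_pos h, mul_one, abs_of_nonneg (by linarith), abs_of_nonneg h]
        · push_neg at h
          rw [if_neg (not_le.mpr h)]
          rw [abs_of_neg h]
          rw [abs_of_neg (by nlinarith)]
          ring
      have hmaj' : ∀ i ∈ S, ∀ j ∉ S, |z' j| ≤ |z' i| := by
        intro i hi j hj
        have hij₃ : i ≠ j₃ := fun h => hj₃S (h ▸ hi)
        rw [hother i hij₃]
        by_cases h : j = j₃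
        · rw [h, habs]
          have := hminS' i hi
          linarith
        · rw [hother j h]
          exact hSsel i hi j hj
      have hsq2' : sq2 S z' = Dn := by
        rw [hDndef, sq2, sq2]
        apply Finset.sum_congr rfl
        intro i hi
        rw [hother i (fun h => hj₃S (h ▸ hi))]
      have htop' : topSq n k z' = Dn := by
        rw [topSq_eq_of_sel z' hScard hmaj', hsq2']
      have hnsq' : nsq z' = nsq z + (2 * |z j₃| * ε + ε^2) := by
        rw [nsq, nsq]
        rw [← Finset.add_sum_erase _ _ (Finset.mem_univ j₃),
            ← Finset.add_sum_erase _ (fun i => (z i)^2) (Finset.mem_univ j₃)]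
        have e1 : ∑ i ∈ Finset.univ.erase j₃, (z' i)^2
            = ∑ i ∈ Finset.univ.erase j₃, (z i)^2 := by
          apply Finset.sum_congr rfl
          intro i hi
          rw [hother i (Finset.ne_of_mem_erase hi)]
        rw [e1]
        have e2 : (z' j₃)^2 = (|z j₃| + ε)^2 := by rw [← sq_abs, habs]
        rw [e2, ← sq_abs (z j₃)]
        ring
      have hz'ne : z' ≠ 0 := by
        intro h
        have h1 : z' j₃ = 0 := by rw [h]; rfl
        have : |z' j₃| = 0 := by rw [h1]; simp
        rw [habs] at this
        have := abs_nonneg (z j₃)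
        linarith
      refine ⟨z', ?_, hz'ne, ?_⟩
      · -- feasibility
        have eT : ∑ i ∈ Tm, u i * |z' i| = RHS := by
          rw [hRHSdef]
          apply Finset.sum_congr rfl
          intro i hi
          rw [hother i (fun h => hj₃S (hTmS (h ▸ hi)))]
        have hj₃T : j₃ ∉ Tm := fun h => hj₃S (hTmS h)
        have hj₃m : j₃ ∈ Tmᶜ := Finset.mem_compl.mpr hj₃T
        have eTc : ∑ i ∈ Tmᶜ, u i * |z' i| = LHS + u j₃ * ε := by
          rw [hLHSdef]
          rw [← Finset.add_sum_erase _ (fun i => u i * |z' i|) hj₃m,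
              ← Finset.add_sum_erase _ (fun i => u i * |z i|) hj₃m]
          have e1 : ∑ i ∈ Tmᶜ.erase j₃, u i * |z' i|
              = ∑ i ∈ Tmᶜ.erase j₃, u i * |z i| := by
            apply Finset.sum_congr rfl
            intro i hi
            rw [hother i (Finset.ne_of_mem_erase hi)]
          rw [e1, habs]
          ring
        rw [eT, eTc]
        have : u j₃ * ε ≤ ε := by
          nlinarith [hule j₃, hupos j₃]
        linarith
      · -- rho increases
        have he : 0 < 2 * |z j₃| * ε + ε^2 := by nlinarith [abs_nonneg (z j₃)]
        rw [hρval, rho, htop', hnsq']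
        rw [div_lt_div_iff₀ hDnpos hDnpos]
        nlinarith [mul_pos he hDnpos]
    · -- Case II / III
      push_neg at hcaseI
      have hall : ∀ j, j ∉ S → |z j| = mS :=
        fun j hj => le_antisymm (hout j hj) (hcaseI j hj)
      by_cases hcaseII : ∃ i₄, mS < |z i₄|
      · obtain ⟨i₄, hi₄⟩ := hcaseII
        have hi₄S : i₄ ∈ S := by
          by_contra h
          rw [hall i₄ h] at hi₄
          exact lt_irrefl _ hi₄
        set η : ℝ := min (δ/2) (|z i₄| - mS) with hηdef
        have hη0 : 0 < η := lt_min (by linarith) (by linarith)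
        have hηδ : η ≤ δ/2 := min_le_left _ _
        have hηm : η ≤ |z i₄| - mS := min_le_right _ _
        set sg : ℝ := if 0 ≤ z i₄ then 1 else -1 with hsgdef
        set z' : E n := WithLp.toLp 2 (fun i => if i = i₄ then z i₄ - η * sg else z i) with hz'def
        have hother : ∀ i, i ≠ i₄ → z' i = z i := by
          intro i hi; simp only [hz'def, if_neg hi]
        have habs : |z' i₄| = |z i₄| - η := by
          simp only [hz'def, if_pos rfl, ↓reduceIte, hsgdef]
          by_cases h : 0 ≤ z i₄
          · rw [if_pos h, mul_one]
            rw [abs_of_nonneg h] at hηm ⊢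
            rw [abs_of_nonneg (by linarith)]
          · push_neg at h
            rw [if_neg (not_le.mpr h)]
            rw [abs_of_neg h] at hηm ⊢
            rw [abs_of_neg (by linarith)]
            ring
        have habs_ge : mS ≤ |z' i₄| := by rw [habs]; linarith
        have hmaj' : ∀ i ∈ S, ∀ j ∉ S, |z' j| ≤ |z' i| := by
          intro i hi j hj
          have hji₄ : j ≠ i₄ := fun h => (h ▸ hj) hi₄S
          rw [hother j hji₄, hall j hj]
          by_cases h : i = i₄
          · rw [h]; exact habs_ge
          · rw [hother i h]; exact hminS' i hi
        set c : ℝ := 2 * |z i₄| * η - η^2 with hcdef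
        have hc0 : 0 < c := by nlinarith
        have hsq2' : sq2 S z' = Dn - c := by
          rw [hDndef, sq2, sq2]
          rw [← Finset.add_sum_erase _ _ hi₄S,
              ← Finset.add_sum_erase _ (fun i => (z i)^2) hi₄S]
          have e1 : ∑ i ∈ S.erase i₄, (z' i)^2 = ∑ i ∈ S.erase i₄, (z i)^2 := by
            apply Finset.sum_congr rfl
            intro i hi
            rw [hother i (Finset.ne_of_mem_erase hi)]
          rw [e1]
          have e2 : (z' i₄)^2 = (|z i₄| - η)^2 := by rw [← sq_abs, habs]
          rw [e2, ← sq_abs (z i₄)]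
          ring
        have hmaj'ge : ∀ i ∈ S, mS ≤ |z' i| := by
          intro i hi
          by_cases h : i = i₄
          · rw [h]; exact habs_ge
          · rw [hother i h]; exact hminS' i hi
        have hDc : 0 < Dn - c := by
          rw [← hsq2']
          have : ∀ i ∈ S, mS^2 ≤ (z' i)^2 := by
            intro i hi
            have := hmaj'ge i hi
            nlinarith [abs_nonneg (z' i), sq_abs (z' i)]
          have hsum2 : (S.card : ℝ) * mS^2 ≤ sq2 S z' := by
            rw [sq2]
            calc (S.card : ℝ) * mS^2
                = ∑ _i ∈ S, mS^2 := by rw [Finset.sum_const, nsmul_eq_mul]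
              _ ≤ ∑ i ∈ S, (z' i)^2 := Finset.sum_le_sum this
          have hScard' : (1:ℝ) ≤ (S.card : ℝ) := by
            rw [hScard]
            have h9 : (1:ℕ) ≤ 2*k := by omega
            exact_mod_cast h9
          have hm2 : 0 < mS^2 := by positivity
          have h10 : (1:ℝ) * mS^2 ≤ (S.card:ℝ) * mS^2 :=
            mul_le_mul_of_nonneg_right hScard' (le_of_lt hm2)
          linarith
        have htop' : topSq n k z' = Dn - c := by
          rw [topSq_eq_of_sel z' hScard hmaj', hsq2']
        have hnsq' : nsq z' = nsq z - c := by
          rw [nsq, nsq]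
          rw [← Finset.add_sum_erase _ _ (Finset.mem_univ i₄),
              ← Finset.add_sum_erase _ (fun i => (z i)^2) (Finset.mem_univ i₄)]
          have e1 : ∑ i ∈ Finset.univ.erase i₄, (z' i)^2
              = ∑ i ∈ Finset.univ.erase i₄, (z i)^2 := by
            apply Finset.sum_congr rfl
            intro i hi
            rw [hother i (Finset.ne_of_mem_erase hi)]
          rw [e1]
          have e2 : (z' i₄)^2 = (|z i₄| - η)^2 := by rw [← sq_abs, habs]
          rw [e2, ← sq_abs (z i₄)]
          ring
        have hz'ne : z' ≠ 0 := by
          intro h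
          have : sq2 S z' = 0 := by
            rw [h]
            simp [sq2]
          rw [hsq2'] at this
          linarith
        refine ⟨z', ?_, hz'ne, ?_⟩
        · -- feasibility
          by_cases hi₄T : i₄ ∈ Tm
          · have eTc : ∑ i ∈ Tmᶜ, u i * |z' i| = LHS := by
              rw [hLHSdef]
              apply Finset.sum_congr rfl
              intro i hi
              rw [hother i (fun h => (Finset.mem_compl.mp hi) (h ▸ hi₄T))]
            have eT : ∑ i ∈ Tm, u i * |z' i| = RHS - u i₄ * η := by
              rw [hRHSdef]
              rw [← Finset.add_sum_erase _ (fun i => u i * |z' i|) hi₄T,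
                  ← Finset.add_sum_erase _ (fun i => u i * |z i|) hi₄T]
              have e1 : ∑ i ∈ Tm.erase i₄, u i * |z' i|
                  = ∑ i ∈ Tm.erase i₄, u i * |z i| := by
                apply Finset.sum_congr rfl
                intro i hi
                rw [hother i (Finset.ne_of_mem_erase hi)]
              rw [e1, habs]
              ring
            rw [eT, eTc]
            have : u i₄ * η ≤ η := by nlinarith [hule i₄, hupos i₄]
            rw [hδdef] at hηδ
            linarith
          · have hi₄m : i₄ ∈ Tmᶜ := Finset.mem_compl.mpr hi₄T
            have eT : ∑ i ∈ Tm, u i * |z' i| = RHS := by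
              rw [hRHSdef]
              apply Finset.sum_congr rfl
              intro i hi
              rw [hother i (fun h => hi₄T (h ▸ hi))]
            have eTc : ∑ i ∈ Tmᶜ, u i * |z' i| = LHS - u i₄ * η := by
              rw [hLHSdef]
              rw [← Finset.add_sum_erase _ (fun i => u i * |z' i|) hi₄m,
                  ← Finset.add_sum_erase _ (fun i => u i * |z i|) hi₄m]
              have e1 : ∑ i ∈ Tmᶜ.erase i₄, u i * |z' i|
                  = ∑ i ∈ Tmᶜ.erase i₄, u i * |z i| := by
                apply Finset.sum_congr rfl
                intro i hi
                rw [hother i (Finset.ne_of_mem_erase hi)]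
              rw [e1, habs]
              ring
            rw [eT, eTc]
            have : 0 ≤ u i₄ * η := mul_nonneg (le_of_lt (hupos i₄)) (le_of_lt hη0)
            linarith
        · -- rho increases
          rw [hρval, rho, htop', hnsq']
          have e1 : nsq z - c - (Dn - c) = N := by rw [hNdef]; ring
          rw [e1]
          apply div_lt_div_of_pos_left hNpos hDc
          linarith
      · -- Case III : contradiction
        exfalso
        push_neg at hcaseII
        have hallc : ∀ i, |z i| = mS := by
          intro i
          by_cases h : i ∈ S
          · exact le_antisymm (hcaseII i) (hminS' i h)
          · exact hall i h
        have h1 : ∑ i ∈ Tmᶜ, |z i| = ((n - k : ℕ) : ℝ) * mS := by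
          have e : ∀ i ∈ Tmᶜ, |z i| = mS := fun i _ => hallc i
          rw [Finset.sum_congr rfl e, Finset.sum_const, nsmul_eq_mul,
              Finset.card_compl, hTmcard]
          simp only [Fintype.card_fin]
        have h2 : ∑ i ∈ Tm, |z i| = (k : ℝ) * mS := by
          have e : ∀ i ∈ Tm, |z i| = mS := fun i _ => hallc i
          rw [Finset.sum_congr rfl e, Finset.sum_const, nsmul_eq_mul, hTmcard]
        rw [h1, h2] at hfeasTm
        have hcast : ((n - k : ℕ) : ℝ) ≤ (k : ℝ) := by
          nlinarith
        have : (n - k : ℕ) ≤ k := by exact_mod_cast hcast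
        omega
  -- transport along σ
  obtain ⟨z', hfeas', hz'ne, hρ'⟩ := main
  have hcompl_img : (Tm.image σ)ᶜ = Tmᶜ.image σ := by
    ext j
    constructor
    · intro hjc
      have hj : σ.symm j ∉ Tm := by
        intro hmem
        have : j ∈ Tm.image σ := Finset.mem_image.mpr ⟨σ.symm j, hmem, by simp⟩
        exact (Finset.mem_compl.mp hjc) this
      exact Finset.mem_image.mpr ⟨σ.symm j, Finset.mem_compl.mpr hj, by simp⟩
    · intro hj
      obtain ⟨i, hi, rfl⟩ := Finset.mem_image.mp hj
      apply Finset.mem_compl.mpr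
      intro hmem
      obtain ⟨i', hi', he⟩ := Finset.mem_image.mp hmem
      exact (Finset.mem_compl.mp hi) (σ.injective he ▸ hi')
  have hsum1 : ∑ i ∈ Tm.image σ, w i * |(WithLp.toLp 2 (fun t => z' (σ.symm t)) : E n) i|
      = ∑ i ∈ Tm, u i * |z' i| := by
    rw [Finset.sum_image (fun a _ b _ h => σ.injective h)]
    apply Finset.sum_congr rfl
    intro i _
    simp only [hudef]
    rw [Equiv.symm_apply_apply]
  have hsum2 : ∑ i ∈ (Tm.image σ)ᶜ, w i * |(WithLp.toLp 2 (fun t => z' (σ.symm t)) : E n) i|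
      = ∑ i ∈ Tmᶜ, u i * |z' i| := by
    rw [hcompl_img, Finset.sum_image (fun a _ b _ h => σ.injective h)]
    apply Finset.sum_congr rfl
    intro i _
    simp only [hudef]
    rw [Equiv.symm_apply_apply]
  refine ⟨(WithLp.toLp 2 (fun t => z' (σ.symm t)) : E n), ⟨Tm.image σ, ?_, ?_⟩, ?_, ?_⟩
  · rw [Finset.card_image_of_injective _ σ.injective, hTmcard]
  · rw [hsum1, hsum2]
    exact hfeas'
  · intro h
    apply hz'ne
    ext i
    have h2 : (WithLp.toLp 2 (fun t => z' (σ.symm t)) : E n) (σ i) = 0 := by rw [h]; rfl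
    simp only at h2
    rw [Equiv.symm_apply_apply] at h2
    exact h2
  · calc rho n k z < rho n k z' := hρ'
    _ = rho n k (WithLp.toLp 2 (fun t => z' (σ.symm t)) : E n) := (rho_comp σ.symm z').symm


/-- the selector ratio equals rho -/
lemma ratio_eq {z : E n} (T2 : Finset (Fin n))
    (hcard : T2.card = 2*k) (hmaj : ∀ i ∈ T2, ∀ j ∉ T2, |z j| ≤ |z i|) :
    ‖coordRestrict z T2ᶜ‖^2 / ‖coordRestrict z T2‖^2 = rho n k z := by
  rw [coordRestrict_normsq, coordRestrict_normsq, sq2_compl,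
      rho, topSq_eq_of_sel z hcard hmaj]

/-- upper bound for rho on the weighted feasible set -/
lemma rho_bound (hk : 1 ≤ k) (hn : 2*k+1 ≤ n) (w : Fin n → ℝ) (hpos : ∀ i, 0 < w i)
    (hle : ∀ i, w i ≤ 1) :
    ∃ B : ℝ, ∀ z : E n, feas n k w z → z ≠ 0 → rho n k z ≤ B := by
  have huniv : (Finset.univ : Finset (Fin n)).Nonempty := by
    rw [← Finset.card_pos]; simp; omega
  obtain ⟨iw, -, hwmin⟩ := Finset.exists_min_image Finset.univ w huniv
  set wm : ℝ := w iw with hwmdef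
  have hwm0 : 0 < wm := hpos iw
  have hwall : ∀ i, wm ≤ w i := fun i => hwmin i (Finset.mem_univ i)
  refine ⟨(k : ℝ)/wm, ?_⟩
  intro z hf hz
  obtain ⟨T, hTcard, hT⟩ := hf
  obtain ⟨imax, -, hmaxim⟩ := Finset.exists_max_image Finset.univ (fun i => |z i|) huniv
  set M : ℝ := |z imax| with hMdef
  have hMall : ∀ i, |z i| ≤ M := fun i => hmaxim i (Finset.mem_univ i)
  have hMpos : 0 < M := by
    have : ∃ i, z i ≠ 0 := by
      by_contra h; push_neg at h; exact hz (PiLp.ext h)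
    obtain ⟨i, hi⟩ := this
    exact lt_of_lt_of_le (abs_pos.mpr hi) (hMall i)
  set S' : Finset (Fin n) := insert imax T with hS'def
  have hS'card : S'.card ≤ 2*k := by
    rw [hS'def]
    have h1 := Finset.card_insert_le imax T
    have h2 : (insert imax T).card ≤ k + 1 := by omega
    omega
  have h1 : nsq z - topSq n k z ≤ sq2 S'ᶜ z := by
    have := sq2_le_topSq (z := z) hS'card
    rw [sq2_compl]
    linarith
  have h2 : sq2 S'ᶜ z ≤ M * ∑ i ∈ S'ᶜ, |z i| := by
    rw [sq2, Finset.mul_sum]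
    apply Finset.sum_le_sum
    intro i _
    rw [← sq_abs]
    nlinarith [abs_nonneg (z i), hMall i]
  have h3 : ∑ i ∈ S'ᶜ, |z i| ≤ ∑ i ∈ Tᶜ, |z i| := by
    apply Finset.sum_le_sum_of_subset_of_nonneg
    · intro i hi
      rw [Finset.mem_compl] at hi ⊢
      exact fun h => hi (by rw [hS'def]; exact Finset.mem_insert_of_mem h)
    · intro i _ _; exact abs_nonneg _
  have h4 : wm * ∑ i ∈ Tᶜ, |z i| ≤ ∑ i ∈ Tᶜ, w i * |z i| := by
    rw [Finset.mul_sum]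
    apply Finset.sum_le_sum
    intro i _
    exact mul_le_mul_of_nonneg_right (hwall i) (abs_nonneg _)
  have h5 : ∑ i ∈ T, w i * |z i| ≤ (k : ℝ) * M := by
    calc ∑ i ∈ T, w i * |z i| ≤ ∑ i ∈ T, M := by
          apply Finset.sum_le_sum
          intro i _
          have := hle i
          have := hMall i
          have := abs_nonneg (z i)
          nlinarith [hpos i]
    _ = (T.card : ℝ) * M := by rw [Finset.sum_const, nsmul_eq_mul]
    _ ≤ (k : ℝ) * M := by
          have : (T.card : ℝ) ≤ (k:ℝ) := by exact_mod_cast hTcard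
          nlinarith
  have hnum : nsq z - topSq n k z ≤ ((k : ℝ)/wm) * M^2 := by
    have hc : ∑ i ∈ Tᶜ, |z i| ≤ (k : ℝ) * M / wm := by
      rw [le_div_iff₀ hwm0]
      calc (∑ i ∈ Tᶜ, |z i|) * wm = wm * ∑ i ∈ Tᶜ, |z i| := by ring
      _ ≤ ∑ i ∈ Tᶜ, w i * |z i| := h4
      _ ≤ ∑ i ∈ T, w i * |z i| := hT
      _ ≤ (k : ℝ) * M := h5
    calc nsq z - topSq n k z ≤ sq2 S'ᶜ z := h1
    _ ≤ M * ∑ i ∈ S'ᶜ, |z i| := h2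
    _ ≤ M * ((k : ℝ) * M / wm) := by
        apply mul_le_mul_of_nonneg_left _ (le_of_lt hMpos)
        linarith
    _ = ((k : ℝ)/wm) * M^2 := by ring
  have htopM : M^2 ≤ topSq n k z := by
    have : sq2 {imax} z ≤ topSq n k z := sq2_le_topSq (by simp; omega) z
    rw [sq2, Finset.sum_singleton, ← sq_abs] at this
    exact this
  have htp : 0 < topSq n k z := topSq_pos hk hz
  rw [rho, div_le_div_iff₀ htp hwm0]
  have e : ((k:ℝ)/wm) * M^2 * wm = (k:ℝ) * M^2 := by field_simp
  have h6 := mul_le_mul_of_nonneg_right hnum (le_of_lt hwm0)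
  rw [e] at h6
  have h7 : (k:ℝ) * M^2 ≤ (k:ℝ) * topSq n k z := by
    have hk0 : (0:ℝ) ≤ (k:ℝ) := by positivity
    nlinarith
  linarith

/-- monotone change of variables between rho and nu -/
lemma nu_mono {a ta b tb : ℝ} (hta : 0 < ta) (htb : 0 < tb) (ha : 0 < a) (hb : 0 < b)
    (h : (a - ta)/ta ≤ (b - tb)/tb) : (a - ta)/a ≤ (b - tb)/b := by
  rw [div_le_div_iff₀ hta htb] at h
  rw [div_le_div_iff₀ ha hb]
  nlinarith

lemma nu_mono_strict {a ta b tb : ℝ} (hta : 0 < ta) (htb : 0 < tb) (ha : 0 < a) (hb : 0 < b)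
    (h : (a - ta)/ta < (b - tb)/tb) : (a - ta)/a < (b - tb)/b := by
  rw [div_lt_div_iff₀ hta htb] at h
  rw [div_lt_div_iff₀ ha hb]
  nlinarith

end Work

/-- the ℓ¹-norm is the unique maximizer of `A_Σ^{RIP,nec}` over weighted
ℓ¹-norms (Theorem 2 of the paper). -/
theorem l1_unique_max_Anec
    (n k : ℕ) (hk : 1 ≤ k) (hn : 2 * k + 1 ≤ n)
    (T₂ : EuclideanSpace ℝ (Fin n) → Finset (Fin n))
    (hT₂ : ∀ z, (T₂ z).card = 2 * k ∧ ∀ i ∈ T₂ z, ∀ j ∉ T₂ z, |z j| ≤ |z i|)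
    (w : Fin n → ℝ) (hpos : ∀ i, 0 < w i) (hle : ∀ i, w i ≤ 1)
    (hmax : ∃ i, w i = 1) (hne : w ≠ fun _ => 1) :
    Anec n k (wNorm w) < Anec n k (wNorm (fun _ => 1))
    ∧ Bsigma n k T₂ (wNorm (fun _ => 1)) < Bsigma n k T₂ (wNorm w) := by
  classical
  obtain ⟨hk', hn'⟩ := And.intro hk hn
  have hone : ∀ i : Fin n, (0:ℝ) < (fun _ => (1:ℝ)) i := fun i => one_pos
  have hD1 : ∀ z : EuclideanSpace ℝ (Fin n),
      z ∈ descentConeSet (wNorm (fun _ => 1)) (sparseVecs n k) ↔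
        Work.feas n k (fun _ => 1) z := fun z => Work.descent_iff (fun _ => 1) hone z
  have hDw : ∀ z : EuclideanSpace ℝ (Fin n),
      z ∈ descentConeSet (wNorm w) (sparseVecs n k) ↔ Work.feas n k w z :=
    fun z => Work.descent_iff w hpos z
  obtain ⟨zs, hzsf, hzs1, hzsmax⟩ := Work.exists_maximizer (n := n) hk hn
  have hzsne : zs ≠ 0 := by
    intro h; rw [h] at hzs1; simp at hzs1
  have hmaxrho : ∀ z : EuclideanSpace ℝ (Fin n), Work.feas n k (fun _ => 1) z → z ≠ 0 →
      Work.rho n k z ≤ Work.rho n k zs :=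
    fun z hf hz => Work.rho_le_of_max hk hzs1 hzsmax hf hz
  have hρpos : 0 < Work.rho n k zs := by
    obtain ⟨z0, hf0, hz0, hρ0⟩ := Work.exists_rho_pos (n := n) hk hn
    exact lt_of_lt_of_le hρ0 (hmaxrho z0 hf0 hz0)
  obtain ⟨z', hz'f, hz'ne, hz'ρ⟩ :=
    Work.exists_better hk hn w hpos hle hmax hne hzsf hzsne hρpos
  have hzsD : zs ∈ descentConeSet (wNorm (fun _ => 1)) (sparseVecs n k) \ {0} :=
    ⟨(hD1 zs).mpr hzsf, by simp [hzsne]⟩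
  have hz'D : z' ∈ descentConeSet (wNorm w) (sparseVecs n k) \ {0} :=
    ⟨(hDw z').mpr hz'f, by simp [hz'ne]⟩
  -- the nu values
  have hnsq_zs : 0 < Work.nsq zs := Work.nsq_pos hzsne
  have hnsq_z' : 0 < Work.nsq z' := Work.nsq_pos hz'ne
  have htop_zs : 0 < Work.topSq n k zs := Work.topSq_pos hk hzsne
  have htop_z' : 0 < Work.topSq n k z' := Work.topSq_pos hk hz'ne
  set νs : ℝ := (Work.nsq zs - Work.topSq n k zs) / Work.nsq zs with hνs
  set ν' : ℝ := (Work.nsq z' - Work.topSq n k z') / Work.nsq z' with hν'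
  have hρzs : Work.rho n k zs = (Work.nsq zs - Work.topSq n k zs) / Work.topSq n k zs := rfl
  have hνspos : 0 < νs := by
    rw [hνs]
    apply div_pos _ hnsq_zs
    rw [Work.rho] at hρpos
    rcases div_pos_iff.mp hρpos with ⟨h1, _⟩ | ⟨_, h2⟩
    · linarith
    · linarith
  have hνlt : νs < ν' := by
    rw [hνs, hν']
    exact Work.nu_mono_strict htop_zs htop_z' hnsq_zs hnsq_z' hz'ρ
  have hν'pos : 0 < ν' := lt_trans hνspos hνlt
  constructor
  · -- Anec strict inequality
    have hA1 : Anec n k (wNorm (fun _ => 1))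
        = ENNReal.ofReal 1 / ENNReal.ofReal νs := by
      apply le_antisymm
      · calc Anec n k (wNorm (fun _ => 1))
            ≤ gammaRC n k (fun x => x - (Submodule.orthogonalProjection
              (Submodule.span ℝ {zs}) x : EuclideanSpace ℝ (Fin n))) :=
              iInf₂_le zs hzsD
        _ = ENNReal.ofReal 1 / ENNReal.ofReal νs := Work.gammaRC_formula hk hn hzsne
      · apply le_iInf₂
        intro z hz
        have hzne : z ≠ 0 := by
          intro h
          exact hz.2 (by simp [h])
        rw [Work.gammaRC_formula hk hn hzne]
        apply ENNReal.div_le_div_left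
        apply ENNReal.ofReal_le_ofReal
        apply Work.nu_mono (Work.topSq_pos hk hzne) htop_zs (Work.nsq_pos hzne) hnsq_zs
        exact hmaxrho z ((hD1 z).mp hz.1) hzne
    have hAw : Anec n k (wNorm w) ≤ ENNReal.ofReal 1 / ENNReal.ofReal ν' := by
      calc Anec n k (wNorm w)
          ≤ gammaRC n k (fun x => x - (Submodule.orthogonalProjection
            (Submodule.span ℝ {z'}) x : EuclideanSpace ℝ (Fin n))) :=
            iInf₂_le z' hz'D
      _ = ENNReal.ofReal 1 / ENNReal.ofReal ν' := Work.gammaRC_formula hk hn hz'ne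
    have hstrict : ENNReal.ofReal 1 / ENNReal.ofReal ν'
        < ENNReal.ofReal 1 / ENNReal.ofReal νs := by
      rw [← ENNReal.ofReal_div_of_pos hν'pos, ← ENNReal.ofReal_div_of_pos hνspos]
      rw [ENNReal.ofReal_lt_ofReal_iff (by positivity)]
      exact one_div_lt_one_div_of_lt hνspos hνlt
    calc Anec n k (wNorm w) ≤ ENNReal.ofReal 1 / ENNReal.ofReal ν' := hAw
    _ < ENNReal.ofReal 1 / ENNReal.ofReal νs := hstrict
    _ = Anec n k (wNorm (fun _ => 1)) := hA1.symm
  · -- Bsigma strict inequality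
    have hgre : IsGreatest {r : ℝ | ∃ z ∈ descentConeSet (wNorm (fun _ => (1:ℝ)))
        (sparseVecs n k) \ {0},
        r = ‖coordRestrict z (T₂ z)ᶜ‖ ^ 2 / ‖coordRestrict z (T₂ z)‖ ^ 2}
        (Work.rho n k zs) := by
      constructor
      · exact ⟨zs, hzsD, (Work.ratio_eq (T₂ zs) (hT₂ zs).1 (hT₂ zs).2).symm⟩
      · rintro r ⟨z, hzD, rfl⟩
        have hzne : z ≠ 0 := by
          intro h
          exact hzD.2 (by simp [h])
        rw [Work.ratio_eq (T₂ z) (hT₂ z).1 (hT₂ z).2]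
        exact hmaxrho z ((hD1 z).mp hzD.1) hzne
    have hBw : BddAbove {r : ℝ | ∃ z ∈ descentConeSet (wNorm w) (sparseVecs n k) \ {0},
        r = ‖coordRestrict z (T₂ z)ᶜ‖ ^ 2 / ‖coordRestrict z (T₂ z)‖ ^ 2} := by
      obtain ⟨B, hB⟩ := Work.rho_bound (n := n) hk hn w hpos hle
      refine ⟨B, ?_⟩
      rintro r ⟨z, hzD, rfl⟩
      have hzne : z ≠ 0 := by
        intro h
        exact hzD.2 (by simp [h])
      rw [Work.ratio_eq (T₂ z) (hT₂ z).1 (hT₂ z).2]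
      exact hB z ((hDw z).mp hzD.1) hzne
    have hmem : Work.rho n k z' ∈ {r : ℝ | ∃ z ∈ descentConeSet (wNorm w)
        (sparseVecs n k) \ {0},
        r = ‖coordRestrict z (T₂ z)ᶜ‖ ^ 2 / ‖coordRestrict z (T₂ z)‖ ^ 2} :=
      ⟨z', hz'D, (Work.ratio_eq (T₂ z') (hT₂ z').1 (hT₂ z').2).symm⟩
    have h1 : Bsigma n k T₂ (wNorm (fun _ => 1)) = Work.rho n k zs :=
      hgre.csSup_eq
    have h2 : Work.rho n k z' ≤ Bsigma n k T₂ (wNorm w) := le_csSup hBw hmem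
    rw [h1]
    exact lt_of_lt_of_le hz'ρ h2

end
end

section
/- Let k ≥ 1, n ≥ 2k, Σ_k the set of k-sparse vectors of ℝⁿ, w a weight vector with w_i > 0 and max_i w_i = 1, R = ‖·‖_w, and H₀ a set of k indices carrying k largest weights of w. Then B_Σ(R) = sup_{z ∈ T_R(Σ_k)∖{0}} ‖z_{T₂ᶜ}‖₂²/‖z_{T₂}‖₂² = sup{ ‖z_{T₂ᶜ}‖₂²/‖z_{T₂}‖₂² : z ∈ ℝⁿ, z ≠ 0, ‖z_{H₀}‖_w ≥ ‖z_{H₀ᶜ}‖_w }. -/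
open scoped BigOperators ENNReal RealInnerProductSpace
open MeasureTheory Metric

noncomputable section

namespace BsigmaAux

variable {n : ℕ}

lemma normSq_coordRestrict (z : EuclideanSpace ℝ (Fin n)) (S : Finset (Fin n)) :
    ‖coordRestrict z S‖ ^ 2 = ∑ i ∈ S, (z i) ^ 2 := by
  rw [EuclideanSpace.norm_eq, Real.sq_sqrt (by positivity)]
  have : ∀ i, ‖coordRestrict z S i‖ ^ 2 = if i ∈ S then (z i) ^ 2 else 0 := by
    intro i
    simp only [coordRestrict, PiLp.toLp_apply, Real.norm_eq_abs]
    split <;> simp [sq_abs]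
  simp_rw [this]
  rw [Finset.sum_ite_mem, Finset.univ_inter]

lemma wNorm_coordRestrict (w : Fin n → ℝ) (z : EuclideanSpace ℝ (Fin n)) (S : Finset (Fin n)) :
    wNorm w (coordRestrict z S) = ∑ i ∈ S, w i * |z i| := by
  unfold wNorm
  have : ∀ i, w i * |coordRestrict z S i| = if i ∈ S then w i * |z i| else 0 := by
    intro i
    simp only [coordRestrict, PiLp.toLp_apply]
    split <;> simp
  simp_rw [this]
  rw [Finset.sum_ite_mem, Finset.univ_inter]

lemma top_sum_eq (z : EuclideanSpace ℝ (Fin n)) (A B : Finset (Fin n))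
    (hcard : A.card = B.card)
    (hA : ∀ i ∈ A, ∀ j ∉ A, |z j| ≤ |z i|)
    (hB : ∀ i ∈ B, ∀ j ∉ B, |z j| ≤ |z i|) :
    ∑ i ∈ A, (z i) ^ 2 = ∑ i ∈ B, (z i) ^ 2 := by
  have hd : (A \ B).card = (B \ A).card := Finset.card_sdiff_comm hcard
  have key : ∀ i ∈ A \ B, ∀ j ∈ B \ A, (z i) ^ 2 = (z j) ^ 2 := by
    intro i hi j hj
    simp only [Finset.mem_sdiff] at hi hj
    have h1 := hA i hi.1 j hj.2
    have h2 := hB j hj.1 i hi.2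
    rw [← sq_abs, ← sq_abs (z j), le_antisymm h2 h1]
  have hsum : ∑ i ∈ A \ B, (z i) ^ 2 = ∑ j ∈ B \ A, (z j) ^ 2 := by
    rcases (A \ B).eq_empty_or_nonempty with h | ⟨i₀, hi₀⟩
    · have h2 : (B \ A) = ∅ := Finset.card_eq_zero.mp (by rw [← hd, h, Finset.card_empty])
      rw [h, h2]
    · rcases (B \ A).eq_empty_or_nonempty with h | ⟨j₀, hj₀⟩
      · exfalso
        rw [h, Finset.card_empty, Finset.card_eq_zero] at hd
        rw [hd] at hi₀; exact absurd hi₀ (Finset.notMem_empty _)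
      · calc ∑ i ∈ A \ B, (z i) ^ 2
            = ∑ _i ∈ A \ B, (z j₀) ^ 2 :=
              Finset.sum_congr rfl (fun i hi => key i hi j₀ hj₀)
          _ = (A \ B).card • (z j₀) ^ 2 := Finset.sum_const _
          _ = (B \ A).card • (z j₀) ^ 2 := by rw [hd]
          _ = ∑ _j ∈ B \ A, (z j₀) ^ 2 := (Finset.sum_const _).symm
          _ = ∑ j ∈ B \ A, (z j) ^ 2 :=
              Finset.sum_congr rfl (fun j hj => by
                rw [← key i₀ hi₀ j hj, key i₀ hi₀ j₀ hj₀])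
  calc ∑ i ∈ A, (z i) ^ 2
      = ∑ i ∈ A ∩ B, (z i) ^ 2 + ∑ i ∈ A \ B, (z i) ^ 2 :=
        (Finset.sum_inter_add_sum_sdiff A B _).symm
    _ = ∑ i ∈ B ∩ A, (z i) ^ 2 + ∑ i ∈ B \ A, (z i) ^ 2 := by
        rw [Finset.inter_comm, hsum]
    _ = ∑ i ∈ B, (z i) ^ 2 := Finset.sum_inter_add_sum_sdiff B A _



lemma F_comp_perm (k : ℕ) (T₂ : EuclideanSpace ℝ (Fin n) → Finset (Fin n))
    (hT₂ : ∀ z, (T₂ z).card = 2 * k ∧ ∀ i ∈ T₂ z, ∀ j ∉ T₂ z, |z j| ≤ |z i|)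
    (σ : Equiv.Perm (Fin n)) (z : EuclideanSpace ℝ (Fin n)) :
    ‖coordRestrict (WithLp.toLp 2 (fun i => z (σ i))) (T₂ (WithLp.toLp 2 (fun i => z (σ i))))ᶜ‖ ^ 2 /
        ‖coordRestrict (WithLp.toLp 2 (fun i => z (σ i))) (T₂ (WithLp.toLp 2 (fun i => z (σ i))))‖ ^ 2
      = ‖coordRestrict z (T₂ z)ᶜ‖ ^ 2 / ‖coordRestrict z (T₂ z)‖ ^ 2 := by
  set z' : EuclideanSpace ℝ (Fin n) := WithLp.toLp 2 (fun i => z (σ i)) with hz'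
  have htot : ∑ i, (z' i) ^ 2 = ∑ i, (z i) ^ 2 := Equiv.sum_comp σ (fun i => (z i) ^ 2)
  have htop : ∑ i ∈ T₂ z', (z' i) ^ 2 = ∑ i ∈ T₂ z, (z i) ^ 2 := by
    have himg : ∑ i ∈ (T₂ z').image σ, (z i) ^ 2 = ∑ i ∈ T₂ z', (z' i) ^ 2 :=
      Finset.sum_image (fun a _ b _ h => σ.injective h)
    rw [← himg]
    refine top_sum_eq z ((T₂ z').image σ) (T₂ z) ?_ ?_ ((hT₂ z).2)
    · rw [Finset.card_image_of_injective _ σ.injective, (hT₂ z').1, (hT₂ z).1]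
    · intro i hi j hj
      obtain ⟨a, ha, rfl⟩ := Finset.mem_image.mp hi
      have hb : σ.symm j ∉ T₂ z' := by
        intro hb
        exact hj (Finset.mem_image.mpr ⟨σ.symm j, hb, σ.apply_symm_apply j⟩)
      have h := (hT₂ z').2 a ha (σ.symm j) hb
      simp only [hz'] at h
      rwa [Equiv.apply_symm_apply] at h
  have h1 : ‖coordRestrict z' (T₂ z')‖ ^ 2 = ‖coordRestrict z (T₂ z)‖ ^ 2 := by
    rw [normSq_coordRestrict, normSq_coordRestrict, htop]
  have h2 : ‖coordRestrict z' (T₂ z')ᶜ‖ ^ 2 = ‖coordRestrict z (T₂ z)ᶜ‖ ^ 2 := by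
    rw [normSq_coordRestrict, normSq_coordRestrict]
    have e1 := Finset.sum_add_sum_compl (T₂ z') (fun i => (z' i) ^ 2)
    have e2 := Finset.sum_add_sum_compl (T₂ z) (fun i => (z i) ^ 2)
    have : ∑ i ∈ (T₂ z')ᶜ, (z' i) ^ 2 = ∑ i, (z i) ^ 2 - ∑ i ∈ T₂ z, (z i) ^ 2 := by
      rw [← htot, ← htop]; linarith
    rw [this]; linarith
  rw [h1, h2]

lemma descent_dominance (w : Fin n → ℝ) (hw : ∀ i, 0 ≤ w i)
    (x z : EuclideanSpace ℝ (Fin n)) (S : Finset (Fin n))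
    (hx : ∀ i ∉ S, x i = 0) (hdesc : wNorm w (x + z) ≤ wNorm w x) :
    ∑ i ∈ Sᶜ, w i * |z i| ≤ ∑ i ∈ S, w i * |z i| := by
  have hxz : ∀ i, (x + z) i = x i + z i := fun i => rfl
  have e1 : wNorm w (x + z) = ∑ i ∈ S, w i * |x i + z i| + ∑ i ∈ Sᶜ, w i * |z i| := by
    unfold wNorm
    rw [← Finset.sum_add_sum_compl S (fun i => w i * |(x + z) i|)]
    congr 1
    exact Finset.sum_congr rfl (fun i hi => by
      rw [hxz, hx i (Finset.mem_compl.mp hi), zero_add])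
  have e2 : wNorm w x = ∑ i ∈ S, w i * |x i| := by
    unfold wNorm
    rw [← Finset.sum_add_sum_compl S (fun i => w i * |x i|)]
    have : ∑ i ∈ Sᶜ, w i * |x i| = 0 :=
      Finset.sum_eq_zero (fun i hi => by rw [hx i (Finset.mem_compl.mp hi)]; simp)
    rw [this, add_zero]
  have e3 : ∑ i ∈ S, w i * |x i| ≤ ∑ i ∈ S, w i * |x i + z i| + ∑ i ∈ S, w i * |z i| := by
    rw [← Finset.sum_add_distrib]
    refine Finset.sum_le_sum (fun i hi => ?_)
    rw [← mul_add]
    refine mul_le_mul_of_nonneg_left ?_ (hw i)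
    calc |x i| = |(x i + z i) + (- z i)| := by ring_nf
      _ ≤ |x i + z i| + |(- z i)| := abs_add_le _ _
      _ = |x i + z i| + |z i| := by rw [abs_neg]
  rw [e1, e2] at hdesc
  linarith [e3]

lemma exists_perm (S H₀ : Finset (Fin n)) (hcard : S.card = H₀.card)
    (w : Fin n → ℝ) (hH₀ : ∀ i ∈ H₀, ∀ j ∉ H₀, w j ≤ w i) :
    ∃ π : Equiv.Perm (Fin n), (∀ i, π (π i) = i) ∧
      (∀ i ∈ S, π i ∈ H₀ ∧ w i ≤ w (π i)) ∧
      (∀ j, π j ∉ H₀ → j ∉ S ∧ w (π j) ≤ w j) := by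
  have hdc : (S \ H₀).card = (H₀ \ S).card := Finset.card_sdiff_comm hcard
  let e := Finset.equivOfCardEq hdc
  classical
  let f : Fin n → Fin n := fun i =>
    if h : i ∈ S \ H₀ then (e ⟨i, h⟩ : Fin n)
    else if h : i ∈ H₀ \ S then (e.symm ⟨i, h⟩ : Fin n)
    else i
  have hmem1 : ∀ i (h : i ∈ S \ H₀), (e ⟨i, h⟩ : Fin n) ∈ H₀ \ S := fun i h => (e ⟨i, h⟩).2
  have hmem2 : ∀ i (h : i ∈ H₀ \ S), (e.symm ⟨i, h⟩ : Fin n) ∈ S \ H₀ := fun i h => (e.symm ⟨i, h⟩).2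
  have hdisj : ∀ i, i ∈ S \ H₀ → i ∉ H₀ \ S := by
    intro i h1 h2
    exact (Finset.mem_sdiff.mp h1).2 (Finset.mem_sdiff.mp h2).1
  have hinv : Function.Involutive f := by
    intro i
    by_cases h1 : i ∈ S \ H₀
    · have hm := hmem1 i h1
      simp only [f, dif_pos h1]
      rw [dif_neg (fun hc => hdisj _ hc hm), dif_pos hm]
      have : (⟨(e ⟨i, h1⟩ : Fin n), hm⟩ : {x // x ∈ H₀ \ S}) = e ⟨i, h1⟩ := rfl
      rw [this, Equiv.symm_apply_apply]
    · by_cases h2 : i ∈ H₀ \ S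
      · have hm := hmem2 i h2
        simp only [f, dif_neg h1, dif_pos h2, dif_pos hm]
        have : (⟨(e.symm ⟨i, h2⟩ : Fin n), hm⟩ : {x // x ∈ S \ H₀}) = e.symm ⟨i, h2⟩ := rfl
        rw [this, Equiv.apply_symm_apply]
      · simp only [f, dif_neg h1, dif_neg h2]
  refine ⟨Function.Involutive.toPerm f hinv, fun i => hinv i, ?_, ?_⟩
  · intro i hi
    by_cases h1 : i ∈ S \ H₀
    · have hm := hmem1 i h1
      have hfi : Function.Involutive.toPerm f hinv i = (e ⟨i, h1⟩ : Fin n) := by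
        show f i = _; simp only [f, dif_pos h1]
      rw [hfi]
      exact ⟨(Finset.mem_sdiff.mp hm).1,
        hH₀ _ (Finset.mem_sdiff.mp hm).1 i (Finset.mem_sdiff.mp h1).2⟩
    · have hiH : i ∈ H₀ := by
        by_contra hc
        exact h1 (Finset.mem_sdiff.mpr ⟨hi, hc⟩)
      have h2 : i ∉ H₀ \ S := fun hc => (Finset.mem_sdiff.mp hc).2 hi
      have hfi : Function.Involutive.toPerm f hinv i = i := by
        show f i = i; simp only [f, dif_neg h1, dif_neg h2]
      rw [hfi]
      exact ⟨hiH, le_refl _⟩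
  · intro j hj
    by_cases h1 : j ∈ S \ H₀
    · exfalso
      have hfi : Function.Involutive.toPerm f hinv j = (e ⟨j, h1⟩ : Fin n) := by
        show f j = _; simp only [f, dif_pos h1]
      rw [hfi] at hj
      exact hj (Finset.mem_sdiff.mp (hmem1 j h1)).1
    · by_cases h2 : j ∈ H₀ \ S
      · have hfi : Function.Involutive.toPerm f hinv j = (e.symm ⟨j, h2⟩ : Fin n) := by
          show f j = _; simp only [f, dif_neg h1, dif_pos h2]
        have hm := hmem2 j h2
        rw [hfi]
        exact ⟨(Finset.mem_sdiff.mp h2).2,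
          hH₀ j (Finset.mem_sdiff.mp h2).1 _ (Finset.mem_sdiff.mp hm).2⟩
      · have hfi : Function.Involutive.toPerm f hinv j = j := by
          show f j = j; simp only [f, dif_neg h1, dif_neg h2]
        rw [hfi] at hj ⊢
        refine ⟨fun hc => ?_, le_refl _⟩
        exact h1 (Finset.mem_sdiff.mpr ⟨hc, hj⟩)

lemma F_le_n (k : ℕ) (hk : 1 ≤ k) (z : EuclideanSpace ℝ (Fin n)) (T : Finset (Fin n))
    (hcard : T.card = 2 * k) (hT : ∀ i ∈ T, ∀ j ∉ T, |z j| ≤ |z i|) :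
    ‖coordRestrict z Tᶜ‖ ^ 2 / ‖coordRestrict z T‖ ^ 2 ≤ (n : ℝ) := by
  rw [normSq_coordRestrict, normSq_coordRestrict]
  set top := ∑ i ∈ T, (z i) ^ 2 with htop
  have htopnn : 0 ≤ top := Finset.sum_nonneg (fun i _ => sq_nonneg _)
  rcases eq_or_lt_of_le htopnn with h0 | hpos'
  · rw [← h0, div_zero]
    exact Nat.cast_nonneg n
  · have hTne : T.Nonempty := by
      rw [← Finset.card_pos, hcard]; omega
    obtain ⟨i₀, hi₀⟩ := hTne
    have hbound : ∀ j ∈ Tᶜ, (z j) ^ 2 ≤ top := by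
      intro j hj
      have h1 : |z j| ≤ |z i₀| := hT i₀ hi₀ j (Finset.mem_compl.mp hj)
      have h2 : (z j) ^ 2 ≤ (z i₀) ^ 2 := by
        rw [← sq_abs, ← sq_abs (z i₀)]
        exact pow_le_pow_left₀ (abs_nonneg _) h1 2
      exact le_trans h2 (Finset.single_le_sum (fun i _ => sq_nonneg (z i)) hi₀)
    have htail : ∑ j ∈ Tᶜ, (z j) ^ 2 ≤ (n : ℝ) * top := by
      calc ∑ j ∈ Tᶜ, (z j) ^ 2 ≤ ∑ _j ∈ Tᶜ, top := Finset.sum_le_sum hbound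
        _ = (Tᶜ.card : ℝ) * top := by rw [Finset.sum_const, nsmul_eq_mul]
        _ ≤ (n : ℝ) * top := by
            refine mul_le_mul_of_nonneg_right ?_ htopnn
            exact_mod_cast le_trans (Finset.card_le_univ _) (by simp)
    rw [div_le_iff₀ hpos']
    exact htail

end BsigmaAux

open BsigmaAux in
/-- Lemma 3 of the paper, the supremum defining `B_Σ(R)` for a weighted ℓ¹-norm
can be taken over vectors whose weighted mass on the support `H₀` of the `k` largest weights
dominates the mass outside. `T₂` picks, for each `z`, `2k` indices carrying the `2k` largest
absolute values of coordinates of `z`. -/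
theorem Bsigma_eq_sup_over_H0
    (n k : ℕ) (hk : 1 ≤ k) (hn : 2 * k ≤ n)
    (w : Fin n → ℝ) (hpos : ∀ i, 0 < w i) (hle : ∀ i, w i ≤ 1) (hmax : ∃ i, w i = 1)
    (T₂ : EuclideanSpace ℝ (Fin n) → Finset (Fin n))
    (hT₂ : ∀ z, (T₂ z).card = 2 * k ∧ ∀ i ∈ T₂ z, ∀ j ∉ T₂ z, |z j| ≤ |z i|)
    (H₀ : Finset (Fin n)) (hH₀card : H₀.card = k)
    (hH₀ : ∀ i ∈ H₀, ∀ j ∉ H₀, w j ≤ w i) :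
    sSup {r : ℝ | ∃ z ∈ descentConeSet (wNorm w) (sparseVecs n k) \ {0},
        r = ‖coordRestrict z (T₂ z)ᶜ‖ ^ 2 / ‖coordRestrict z (T₂ z)‖ ^ 2}
      = sSup {r : ℝ | ∃ z : EuclideanSpace ℝ (Fin n), z ≠ 0 ∧
          wNorm w (coordRestrict z H₀ᶜ) ≤ wNorm w (coordRestrict z H₀) ∧
          r = ‖coordRestrict z (T₂ z)ᶜ‖ ^ 2 / ‖coordRestrict z (T₂ z)‖ ^ 2} := by
  classical
  have hw : ∀ i, 0 ≤ w i := fun i => le_of_lt (hpos i)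
  set F : EuclideanSpace ℝ (Fin n) → ℝ :=
    fun z => ‖coordRestrict z (T₂ z)ᶜ‖ ^ 2 / ‖coordRestrict z (T₂ z)‖ ^ 2 with hF
  set setA := {r : ℝ | ∃ z ∈ descentConeSet (wNorm w) (sparseVecs n k) \ {0}, r = F z}
    with hsetA
  set setB := {r : ℝ | ∃ z : EuclideanSpace ℝ (Fin n), z ≠ 0 ∧
      wNorm w (coordRestrict z H₀ᶜ) ≤ wNorm w (coordRestrict z H₀) ∧ r = F z} with hsetB
  have hFle : ∀ z : EuclideanSpace ℝ (Fin n), F z ≤ (n : ℝ) :=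
    fun z => F_le_n k hk z (T₂ z) (hT₂ z).1 (hT₂ z).2
  have bddA : BddAbove setA := by
    refine ⟨(n : ℝ), fun r hr => ?_⟩
    obtain ⟨z, _, rfl⟩ := hr
    exact hFle z
  have bddB : BddAbove setB := by
    refine ⟨(n : ℝ), fun r hr => ?_⟩
    obtain ⟨z, _, _, rfl⟩ := hr
    exact hFle z
  -- membership transfer B-condition → A-condition
  have memA : ∀ z : EuclideanSpace ℝ (Fin n), z ≠ 0 →
      wNorm w (coordRestrict z H₀ᶜ) ≤ wNorm w (coordRestrict z H₀) →
      z ∈ descentConeSet (wNorm w) (sparseVecs n k) \ {0} := by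
    intro z hz hdom
    refine ⟨?_, hz⟩
    set x : EuclideanSpace ℝ (Fin n) := WithLp.toLp 2 (fun i => if i ∈ H₀ then -z i else 0) with hx
    refine Set.mem_iUnion₂.mpr ⟨x, ⟨H₀, le_of_eq hH₀card, fun i hi => by simp [hx, hi]⟩, ?_⟩
    show wNorm w (x + z) ≤ wNorm w x
    have h1 : wNorm w (x + z) = wNorm w (coordRestrict z H₀ᶜ) := by
      unfold wNorm
      refine Finset.sum_congr rfl (fun i _ => ?_)
      have hxz : (x + z) i = x i + z i := rfl
      rw [hxz]
      by_cases hi : i ∈ H₀ <;> simp [hx, coordRestrict, hi]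
    have h2 : wNorm w x = wNorm w (coordRestrict z H₀) := by
      unfold wNorm
      refine Finset.sum_congr rfl (fun i _ => ?_)
      by_cases hi : i ∈ H₀ <;> simp [hx, coordRestrict, hi]
    rw [h1, h2]; exact hdom
  -- nonemptiness of setB
  have hH₀ne : H₀.Nonempty := by rw [← Finset.card_pos, hH₀card]; omega
  obtain ⟨i₀, hi₀⟩ := hH₀ne
  set z₀ : EuclideanSpace ℝ (Fin n) := WithLp.toLp 2 (fun j => if j ∈ H₀ then (1 : ℝ) else 0) with hz₀
  have hz₀ne : z₀ ≠ 0 := by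
    intro h
    have := congrFun (congrArg WithLp.ofLp h) i₀
    simp [hz₀, hi₀] at this
  have hz₀dom : wNorm w (coordRestrict z₀ H₀ᶜ) ≤ wNorm w (coordRestrict z₀ H₀) := by
    rw [wNorm_coordRestrict, wNorm_coordRestrict]
    have h1 : ∑ i ∈ H₀ᶜ, w i * |z₀ i| = 0 := by
      refine Finset.sum_eq_zero (fun i hi => ?_)
      have : z₀ i = 0 := by simp [hz₀, Finset.mem_compl.mp hi]
      rw [this]; simp
    rw [h1]
    exact Finset.sum_nonneg (fun i _ => mul_nonneg (hw i) (abs_nonneg _))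
  have neB : setB.Nonempty := ⟨F z₀, z₀, hz₀ne, hz₀dom, rfl⟩
  have neA : setA.Nonempty := ⟨F z₀, z₀, memA z₀ hz₀ne hz₀dom, rfl⟩
  apply le_antisymm
  · refine csSup_le neA (fun r hr => ?_)
    obtain ⟨z, ⟨hzdesc, hz0⟩, rfl⟩ := hr
    have hzne : z ≠ 0 := hz0
    obtain ⟨x, hxmem, hzdc⟩ := Set.mem_iUnion₂.mp hzdesc
    obtain ⟨S₀, hS₀card, hS₀⟩ := hxmem
    obtain ⟨S, hsub, hScard⟩ := Finset.exists_superset_card_eq hS₀card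
      (by simpa using (le_trans (by omega : k ≤ 2 * k) hn))
    have hxS : ∀ i ∉ S, x i = 0 := fun i hi => hS₀ i (fun h => hi (hsub h))
    have hdom := descent_dominance w hw x z S hxS hzdc
    obtain ⟨π, hπinv, hπ1, hπ2⟩ :=
      exists_perm S H₀ (hScard.trans hH₀card.symm) w hH₀
    set z' : EuclideanSpace ℝ (Fin n) := WithLp.toLp 2 (fun i => z (π i)) with hz'
    have hz'ne : z' ≠ 0 := by
      intro h
      apply hzne
      ext i
      have h2 := congrFun (congrArg WithLp.ofLp h) (π.symm i)
      have h3 : z' (π.symm i) = z i := by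
        simp only [hz']
        rw [Equiv.apply_symm_apply]
      rw [h3] at h2
      exact h2
    have hinj : ∀ a ∈ (Finset.univ : Finset (Fin n)), ∀ b ∈ Finset.univ, π a = π b → a = b :=
      fun a _ b _ h => π.injective h
    have hz'dom : wNorm w (coordRestrict z' H₀ᶜ) ≤ wNorm w (coordRestrict z' H₀) := by
      rw [wNorm_coordRestrict, wNorm_coordRestrict]
      have step1 : ∑ j ∈ H₀ᶜ, w j * |z' j| = ∑ i ∈ H₀ᶜ.image π, w (π i) * |z i| := by
        rw [Finset.sum_image (fun a _ b _ h => π.injective h)]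
        refine Finset.sum_congr rfl (fun j _ => ?_)
        rw [hπinv j]
      have step2 : ∑ i ∈ H₀ᶜ.image π, w (π i) * |z i|
          ≤ ∑ i ∈ H₀ᶜ.image π, w i * |z i| := by
        refine Finset.sum_le_sum (fun i hi => ?_)
        obtain ⟨j, hj, rfl⟩ := Finset.mem_image.mp hi
        have hπj : π (π j) ∉ H₀ := by rw [hπinv j]; exact Finset.mem_compl.mp hj
        exact mul_le_mul_of_nonneg_right (hπ2 (π j) hπj).2 (abs_nonneg _)
      have step3 : ∑ i ∈ H₀ᶜ.image π, w i * |z i| ≤ ∑ i ∈ Sᶜ, w i * |z i| := by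
        refine Finset.sum_le_sum_of_subset_of_nonneg ?_
          (fun i _ _ => mul_nonneg (hw i) (abs_nonneg _))
        intro i hi
        obtain ⟨j, hj, rfl⟩ := Finset.mem_image.mp hi
        have hπj : π (π j) ∉ H₀ := by rw [hπinv j]; exact Finset.mem_compl.mp hj
        exact Finset.mem_compl.mpr (hπ2 (π j) hπj).1
      have step4 : ∑ i ∈ S, w i * |z i| ≤ ∑ i ∈ S, w (π i) * |z i| :=
        Finset.sum_le_sum (fun i hi =>
          mul_le_mul_of_nonneg_right (hπ1 i hi).2 (abs_nonneg _))
      have step5 : ∑ i ∈ S, w (π i) * |z i| = ∑ j ∈ S.image π, w j * |z' j| := by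
        rw [Finset.sum_image (fun a _ b _ h => π.injective h)]
        refine Finset.sum_congr rfl (fun i _ => ?_)
        simp only [hz']
        rw [hπinv i]
      have step6 : ∑ j ∈ S.image π, w j * |z' j| ≤ ∑ j ∈ H₀, w j * |z' j| := by
        refine Finset.sum_le_sum_of_subset_of_nonneg ?_
          (fun i _ _ => mul_nonneg (hw i) (abs_nonneg _))
        intro j hj
        obtain ⟨i, hi, rfl⟩ := Finset.mem_image.mp hj
        exact (hπ1 i hi).1
      calc ∑ j ∈ H₀ᶜ, w j * |z' j| ≤ ∑ i ∈ Sᶜ, w i * |z i| := by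
            rw [step1]; exact le_trans step2 step3
        _ ≤ ∑ i ∈ S, w i * |z i| := hdom
        _ ≤ ∑ j ∈ H₀, w j * |z' j| := le_trans step4 (step5 ▸ step6)
    have hFeq : F z' = F z := F_comp_perm k T₂ hT₂ π z
    have : F z ∈ setB := ⟨z', hz'ne, hz'dom, hFeq.symm⟩
    exact le_csSup bddB this
  · refine csSup_le neB (fun r hr => ?_)
    obtain ⟨z, hzne, hzdom, rfl⟩ := hr
    exact le_csSup bddA ⟨z, memA z hzne hzdom, rfl⟩


end
end

section
/- Let k ≥ 1, n ≥ 2k, Σ_k the set of k-sparse vectors of ℝⁿ, w a weight vector with w_i > 0 and max_i w_i = 1, R = ‖·‖_w, and H₀ a set of k indices carrying k largest weights of w. If ‖w_{H₀}‖₁ < ‖w_{H₀ᶜ}‖₁, then B_Σ(R) = sup_{z ∈ T_R(Σ_k)∖{0}} ‖z_{T₂ᶜ}‖₂²/‖z_{T₂}‖₂² = sup{ ‖z_{T₂ᶜ}‖₂²/‖z_{T₂}‖₂² : z ∈ ℝⁿ, z ≠ 0, ‖z_{H₀}‖_w = ‖z_{H₀ᶜ}‖_w }. -/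
open scoped BigOperators ENNReal RealInnerProductSpace
open MeasureTheory Metric

noncomputable section

lemma norm_coordRestrict_sq {n : ℕ} (z : EuclideanSpace ℝ (Fin n)) (S : Finset (Fin n)) :
    ‖coordRestrict z S‖ ^ 2 = ∑ i ∈ S, z i ^ 2 := by
  rw [EuclideanSpace.norm_eq, Real.sq_sqrt (by positivity)]
  rw [← Finset.univ_inter S, ← Finset.sum_ite_mem]
  refine Finset.sum_congr rfl fun i _ => ?_
  by_cases h : i ∈ S <;> simp [coordRestrict, h, Real.norm_eq_abs, sq_abs]

lemma wNorm_coordRestrict {n : ℕ} (w : Fin n → ℝ) (z : EuclideanSpace ℝ (Fin n))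
    (S : Finset (Fin n)) : wNorm w (coordRestrict z S) = ∑ i ∈ S, w i * |z i| := by
  rw [wNorm, ← Finset.univ_inter S, ← Finset.sum_ite_mem]
  refine Finset.sum_congr rfl fun i _ => ?_
  by_cases h : i ∈ S <;> simp [coordRestrict, h]

lemma carry_inv {n : ℕ} (v : Fin n → ℝ) (T T' : Finset (Fin n)) (hc : T.card = T'.card)
    (hT : ∀ i ∈ T, ∀ j ∉ T, |v j| ≤ |v i|) (hT' : ∀ i ∈ T', ∀ j ∉ T', |v j| ≤ |v i|) :
    ∑ i ∈ T, v i ^ 2 = ∑ i ∈ T', v i ^ 2 := by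
  have key : ∑ i ∈ T \ T', v i ^ 2 = ∑ i ∈ T' \ T, v i ^ 2 := by
    have hcd : (T \ T').card = (T' \ T).card := Finset.card_sdiff_comm hc
    rcases (T \ T').eq_empty_or_nonempty with h | h
    · have h2 : (T' \ T) = ∅ := Finset.card_eq_zero.mp (by rw [← hcd, h]; simp)
      rw [h, h2]
    · obtain ⟨j₀, hj₀⟩ := h
      obtain ⟨j₁, hj₁⟩ : (T' \ T).Nonempty := by
        rw [← Finset.card_pos, ← hcd, Finset.card_pos]; exact ⟨j₀, hj₀⟩
      have hj₁T' : j₁ ∈ T' := (Finset.mem_sdiff.mp hj₁).1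
      have hj₁T : j₁ ∉ T := (Finset.mem_sdiff.mp hj₁).2
      have hval : ∀ i ∈ T \ T', v i ^ 2 = v j₁ ^ 2 := by
        intro i hi
        rw [Finset.mem_sdiff] at hi
        have h1 := hT i hi.1 j₁ hj₁T
        have h2 := hT' j₁ hj₁T' i hi.2
        have : |v i| = |v j₁| := le_antisymm h2 h1
        rw [← sq_abs, this, sq_abs]
      have hj₀T : j₀ ∈ T := (Finset.mem_sdiff.mp hj₀).1
      have hj₀T' : j₀ ∉ T' := (Finset.mem_sdiff.mp hj₀).2
      have hval' : ∀ j ∈ T' \ T, v j ^ 2 = v j₁ ^ 2 := by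
        intro j hj
        rw [Finset.mem_sdiff] at hj
        have h1 := hT j₀ hj₀T j hj.2
        have h2 := hT' j hj.1 j₀ hj₀T'
        have h3 := hT j₀ hj₀T j₁ hj₁T
        have h4 := hT' j₁ hj₁T' j₀ hj₀T'
        have e1 : |v j| = |v j₀| := le_antisymm h1 h2
        have e2 : |v j₁| = |v j₀| := le_antisymm h3 h4
        rw [← sq_abs, e1, ← e2, sq_abs]
      rw [Finset.sum_congr rfl hval, Finset.sum_congr rfl hval',
        Finset.sum_const, Finset.sum_const, hcd]
  have e1 := Finset.sum_inter_add_sum_sdiff T T' (fun i => v i ^ 2)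
  have e2 := Finset.sum_inter_add_sum_sdiff T' T (fun i => v i ^ 2)
  rw [Finset.inter_comm] at e2
  linarith

lemma key_cross (a b t : ℝ) (hb : 0 ≤ b) (hba : b ≤ a) (ht : 0 ≤ t) :
    b ^ 2 * max a t ^ 2 ≤ max b t ^ 2 * a ^ 2 := by
  have hba2 : b ^ 2 ≤ a ^ 2 := by nlinarith
  rcases le_total a t with h | h <;> rcases le_total b t with h2 | h2 <;>
    simp only [max_eq_left, max_eq_right, *]
  · nlinarith [mul_le_mul_of_nonneg_right hba2 (sq_nonneg t)]
  · have : t ^ 2 ≤ a ^ 2 := by nlinarith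
    nlinarith [mul_le_mul_of_nonneg_left this (sq_nonneg b)]
  · have : b ^ 2 ≤ t ^ 2 := by nlinarith
    nlinarith [mul_le_mul_of_nonneg_right this (sq_nonneg a)]
  · nlinarith

def pswap {n : ℕ} (d₁ d₂ : Finset (Fin n)) (e : {x // x ∈ d₁} ≃ {x // x ∈ d₂}) : Fin n → Fin n :=
  fun i => if h : i ∈ d₁ then (e ⟨i, h⟩ : Fin n)
    else if h : i ∈ d₂ then (e.symm ⟨i, h⟩ : Fin n) else i

lemma pswap_invol {n : ℕ} (d₁ d₂ : Finset (Fin n)) (hd : Disjoint d₁ d₂)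
    (e : {x // x ∈ d₁} ≃ {x // x ∈ d₂}) : Function.Involutive (pswap d₁ d₂ e) := by
  intro i
  by_cases h1 : i ∈ d₁
  · have hm : (e ⟨i, h1⟩ : Fin n) ∈ d₂ := (e ⟨i, h1⟩).2
    have hnot : (e ⟨i, h1⟩ : Fin n) ∉ d₁ := fun hx => (Finset.disjoint_left.mp hd hx hm)
    simp [pswap, h1, hm, hnot]
  · by_cases h2 : i ∈ d₂
    · have hm : (e.symm ⟨i, h2⟩ : Fin n) ∈ d₁ := (e.symm ⟨i, h2⟩).2
      simp [pswap, h1, h2, hm]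
    · simp [pswap, h1, h2]

lemma pswap_specA {n : ℕ} (S H₀ : Finset (Fin n))
    (e : {x // x ∈ H₀ \ S} ≃ {x // x ∈ S \ H₀}) :
    ∀ i ∈ H₀, pswap (H₀ \ S) (S \ H₀) e i ∈ S ∧
      (pswap (H₀ \ S) (S \ H₀) e i = i ∨ pswap (H₀ \ S) (S \ H₀) e i ∉ H₀) := by
  intro i hi
  by_cases h : i ∈ H₀ \ S
  · have hm : (e ⟨i, h⟩ : Fin n) ∈ S \ H₀ := (e ⟨i, h⟩).2
    rw [Finset.mem_sdiff] at hm
    simp only [pswap, dif_pos h]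
    exact ⟨hm.1, Or.inr hm.2⟩
  · have hiS : i ∈ S := by
      by_contra hiS; exact h (Finset.mem_sdiff.mpr ⟨hi, hiS⟩)
    have h2 : i ∉ S \ H₀ := by simp [Finset.mem_sdiff, hi]
    simp only [pswap, dif_neg h, dif_neg h2]
    exact ⟨hiS, by simp⟩

lemma pswap_specB {n : ℕ} (S H₀ : Finset (Fin n))
    (e : {x // x ∈ H₀ \ S} ≃ {x // x ∈ S \ H₀}) :
    ∀ i ∉ H₀, pswap (H₀ \ S) (S \ H₀) e i ∉ S ∧
      (pswap (H₀ \ S) (S \ H₀) e i = i ∨ pswap (H₀ \ S) (S \ H₀) e i ∈ H₀) := by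
  intro i hi
  have h1 : i ∉ H₀ \ S := by simp [Finset.mem_sdiff, hi]
  by_cases h2 : i ∈ S \ H₀
  · have hm : (e.symm ⟨i, h2⟩ : Fin n) ∈ H₀ \ S := (e.symm ⟨i, h2⟩).2
    rw [Finset.mem_sdiff] at hm
    simp only [pswap, dif_neg h1, dif_pos h2]
    exact ⟨hm.2, Or.inr hm.1⟩
  · have hiS : i ∉ S := fun hiS => h2 (Finset.mem_sdiff.mpr ⟨hiS, hi⟩)
    simp only [pswap, dif_neg h1, dif_neg h2]
    exact ⟨hiS, by simp⟩

/-- Lemma 4 of the paper, under `‖w_{H₀}‖₁ < ‖w_{H₀ᶜ}‖₁` the supremum defining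
`B_Σ(R)` is attained on the set where the weighted masses on `H₀` and `H₀ᶜ` are equal. -/
theorem Bsigma_eq_sup_over_H0_eq
    (n k : ℕ) (hk : 1 ≤ k) (hn : 2 * k ≤ n)
    (w : Fin n → ℝ) (hpos : ∀ i, 0 < w i) (hle : ∀ i, w i ≤ 1) (hmax : ∃ i, w i = 1)
    (T₂ : EuclideanSpace ℝ (Fin n) → Finset (Fin n))
    (hT₂ : ∀ z, (T₂ z).card = 2 * k ∧ ∀ i ∈ T₂ z, ∀ j ∉ T₂ z, |z j| ≤ |z i|)
    (H₀ : Finset (Fin n)) (hH₀card : H₀.card = k)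
    (hH₀ : ∀ i ∈ H₀, ∀ j ∉ H₀, w j ≤ w i)
    (hw : ∑ i ∈ H₀, w i < ∑ i ∈ H₀ᶜ, w i) :
    sSup {r : ℝ | ∃ z ∈ descentConeSet (wNorm w) (sparseVecs n k) \ {0},
        r = ‖coordRestrict z (T₂ z)ᶜ‖ ^ 2 / ‖coordRestrict z (T₂ z)‖ ^ 2}
      = sSup {r : ℝ | ∃ z : EuclideanSpace ℝ (Fin n), z ≠ 0 ∧
          wNorm w (coordRestrict z H₀) = wNorm w (coordRestrict z H₀ᶜ) ∧
          r = ‖coordRestrict z (T₂ z)ᶜ‖ ^ 2 / ‖coordRestrict z (T₂ z)‖ ^ 2} := by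
  classical
  set LSet := {r : ℝ | ∃ z ∈ descentConeSet (wNorm w) (sparseVecs n k) \ {0},
      r = ‖coordRestrict z (T₂ z)ᶜ‖ ^ 2 / ‖coordRestrict z (T₂ z)‖ ^ 2} with hLSet
  set RSet := {r : ℝ | ∃ z : EuclideanSpace ℝ (Fin n), z ≠ 0 ∧
      wNorm w (coordRestrict z H₀) = wNorm w (coordRestrict z H₀ᶜ) ∧
      r = ‖coordRestrict z (T₂ z)ᶜ‖ ^ 2 / ‖coordRestrict z (T₂ z)‖ ^ 2} with hRSet
  -- existence of a nonzero coordinate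
  have hexists : ∀ v : EuclideanSpace ℝ (Fin n), v ≠ 0 → ∃ i, v i ≠ 0 := by
    intro v hv
    by_contra h
    push_neg at h
    exact hv (PiLp.ext h)
  -- positivity of the "top" sum
  have top_pos : ∀ v : EuclideanSpace ℝ (Fin n), v ≠ 0 → 0 < ∑ i ∈ T₂ v, v i ^ 2 := by
    intro v hv
    obtain ⟨i, hi⟩ := hexists v hv
    obtain ⟨i₀, hi₀⟩ : (T₂ v).Nonempty := by
      rw [← Finset.card_pos, (hT₂ v).1]; omega
    have hnn : ∀ j ∈ T₂ v, 0 ≤ v j ^ 2 := fun j _ => sq_nonneg _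
    by_cases hmem : i ∈ T₂ v
    · exact Finset.sum_pos' hnn ⟨i, hmem, by positivity⟩
    · have h1 := (hT₂ v).2 i₀ hi₀ i hmem
      have : v i₀ ≠ 0 := by
        intro h0; rw [h0, abs_zero] at h1
        exact hi (abs_eq_zero.mp (le_antisymm h1 (abs_nonneg _)))
      exact Finset.sum_pos' hnn ⟨i₀, hi₀, by positivity⟩
  -- the ratio is bounded by n
  have ratio_bound : ∀ v : EuclideanSpace ℝ (Fin n), v ≠ 0 →
      ‖coordRestrict v (T₂ v)ᶜ‖ ^ 2 / ‖coordRestrict v (T₂ v)‖ ^ 2 ≤ (n : ℝ) := by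
    intro v hv
    rw [norm_coordRestrict_sq, norm_coordRestrict_sq]
    obtain ⟨i₀, hi₀⟩ : (T₂ v).Nonempty := by
      rw [← Finset.card_pos, (hT₂ v).1]; omega
    have htop := top_pos v hv
    rw [div_le_iff₀ htop]
    have hterm : ∀ j ∈ (T₂ v)ᶜ, v j ^ 2 ≤ ∑ i ∈ T₂ v, v i ^ 2 := by
      intro j hj
      have h1 := (hT₂ v).2 i₀ hi₀ j (Finset.mem_compl.mp hj)
      have h2 : v j ^ 2 ≤ v i₀ ^ 2 := by
        rw [← sq_abs (v j), ← sq_abs (v i₀)]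
        exact pow_le_pow_left₀ (abs_nonneg _) h1 2
      exact h2.trans (Finset.single_le_sum (fun i _ => sq_nonneg (v i)) hi₀)
    calc ∑ j ∈ (T₂ v)ᶜ, v j ^ 2 ≤ ∑ _j ∈ (T₂ v)ᶜ, ∑ i ∈ T₂ v, v i ^ 2 :=
          Finset.sum_le_sum hterm
      _ = ((T₂ v)ᶜ.card : ℝ) * ∑ i ∈ T₂ v, v i ^ 2 := by
          rw [Finset.sum_const, nsmul_eq_mul]
      _ ≤ (n : ℝ) * ∑ i ∈ T₂ v, v i ^ 2 := by
          apply mul_le_mul_of_nonneg_right _ htop.le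
          have h : ((T₂ v)ᶜ).card ≤ n := by
            simpa using Finset.card_le_univ ((T₂ v)ᶜ)
          exact_mod_cast h
  have bddL : BddAbove LSet := by
    refine ⟨n, fun r hr => ?_⟩
    obtain ⟨z, hz, hrz⟩ := hr
    rw [hrz]; exact ratio_bound z hz.2
  have bddR : BddAbove RSet := by
    refine ⟨n, fun r hr => ?_⟩
    obtain ⟨z, hz, _, hrz⟩ := hr
    rw [hrz]; exact ratio_bound z hz
  -- example element of RSet
  have hH₀ne : H₀.Nonempty := by rw [← Finset.card_pos, hH₀card]; omega
  have hH₀cne : (H₀ᶜ : Finset (Fin n)).Nonempty := by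
    rw [← Finset.card_pos, Finset.card_compl, Fintype.card_fin, hH₀card]
    omega
  obtain ⟨i₀, hi₀⟩ := hH₀ne
  obtain ⟨j₀, hj₀⟩ := hH₀cne
  have hj₀' : j₀ ∉ H₀ := Finset.mem_compl.mp hj₀
  have hij : i₀ ≠ j₀ := fun h => hj₀' (h ▸ hi₀)
  obtain ⟨z₀, hz₀app⟩ : ∃ z₀ : EuclideanSpace ℝ (Fin n), ∀ i,
      z₀ i = if i = i₀ then (w i₀)⁻¹ else if i = j₀ then (w j₀)⁻¹ else 0 :=
    ⟨WithLp.toLp 2 (fun i => if i = i₀ then (w i₀)⁻¹ else if i = j₀ then (w j₀)⁻¹ else 0 : Fin n → ℝ),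
      fun i => rfl⟩
  have hz₀i₀ : z₀ i₀ = (w i₀)⁻¹ := by rw [hz₀app]; simp
  have hz₀j₀ : z₀ j₀ = (w j₀)⁻¹ := by
    rw [hz₀app]; simp [Ne.symm hij]
  have hz₀ne : z₀ ≠ 0 := by
    intro h
    have h2 : z₀ i₀ = 0 := by rw [h]; rfl
    rw [hz₀i₀] at h2
    exact (hpos i₀).ne' (inv_eq_zero.mp h2)
  have hz₀mass : wNorm w (coordRestrict z₀ H₀) = wNorm w (coordRestrict z₀ H₀ᶜ) := by
    rw [wNorm_coordRestrict, wNorm_coordRestrict]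
    have hs1 : ∑ i ∈ H₀, w i * |z₀ i| = w i₀ * |z₀ i₀| := by
      refine Finset.sum_eq_single_of_mem i₀ hi₀ fun b hb hbi => ?_
      have hbj : b ≠ j₀ := fun h => hj₀' (h ▸ hb)
      rw [hz₀app]; simp [hbi, hbj]
    have hs2 : ∑ i ∈ H₀ᶜ, w i * |z₀ i| = w j₀ * |z₀ j₀| := by
      refine Finset.sum_eq_single_of_mem j₀ hj₀ fun b hb hbj => ?_
      have hb' : b ∉ H₀ := Finset.mem_compl.mp hb
      have hbi : b ≠ i₀ := fun h => hb' (h ▸ hi₀)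
      rw [hz₀app]; simp [hbi, hbj]
    rw [hs1, hs2, hz₀i₀, hz₀j₀,
      abs_of_nonneg (inv_nonneg.mpr (hpos i₀).le), abs_of_nonneg (inv_nonneg.mpr (hpos j₀).le),
      mul_inv_cancel₀ (hpos i₀).ne', mul_inv_cancel₀ (hpos j₀).ne']
  have hr₀R : (‖coordRestrict z₀ (T₂ z₀)ᶜ‖ ^ 2 / ‖coordRestrict z₀ (T₂ z₀)‖ ^ 2) ∈ RSet :=
    ⟨z₀, hz₀ne, hz₀mass, rfl⟩
  have hr₀nonneg : (0:ℝ) ≤ ‖coordRestrict z₀ (T₂ z₀)ᶜ‖ ^ 2 / ‖coordRestrict z₀ (T₂ z₀)‖ ^ 2 :=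
    div_nonneg (sq_nonneg _) (sq_nonneg _)
  have hRpos : (0:ℝ) ≤ sSup RSet := hr₀nonneg.trans (le_csSup bddR hr₀R)
  -- RSet ⊆ LSet
  have hsub : RSet ⊆ LSet := by
    rintro r ⟨z, hzne, hmass, hrz⟩
    refine ⟨z, ⟨?_, hzne⟩, hrz⟩
    have hx : (coordRestrict (-z) H₀ : EuclideanSpace ℝ (Fin n)) ∈ sparseVecs n k := by
      refine ⟨H₀, le_of_eq hH₀card, fun i hi => ?_⟩
      simp [coordRestrict, hi]
    refine Set.mem_iUnion₂.mpr ⟨coordRestrict (-z) H₀, hx, ?_⟩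
    show wNorm w (coordRestrict (-z) H₀ + z) ≤ wNorm w (coordRestrict (-z) H₀)
    have heq1 : (coordRestrict (-z) H₀ + z : EuclideanSpace ℝ (Fin n)) = coordRestrict z H₀ᶜ := by
      ext i
      simp only [PiLp.add_apply, coordRestrict, Finset.mem_compl, PiLp.neg_apply]
      by_cases h : i ∈ H₀ <;> simp [h]
    have heq2 : wNorm w (coordRestrict (-z) H₀) = wNorm w (coordRestrict z H₀) := by
      rw [wNorm_coordRestrict, wNorm_coordRestrict]
      refine Finset.sum_congr rfl fun i _ => ?_
      rw [PiLp.neg_apply, abs_neg]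
    rw [heq1, heq2, ← hmass]
  have hRL : sSup RSet ≤ sSup LSet := by
    apply Real.sSup_le
    · intro r hr
      exact le_csSup bddL (hsub hr)
    · exact hr₀nonneg.trans (le_csSup bddL (hsub hr₀R))
  -- main direction
  have hLR : sSup LSet ≤ sSup RSet := by
    apply Real.sSup_le _ hRpos
    rintro r ⟨z, ⟨hzdesc, hzne0⟩, hrz⟩
    have hzne : z ≠ 0 := hzne0
    -- extract the sparse point and a support set of size exactly k
    obtain ⟨x, hxsp, hdesc⟩ := Set.mem_iUnion₂.mp hzdesc
    obtain ⟨s, hscard, hssupp⟩ := hxsp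
    obtain ⟨S, hsS, hScard⟩ := Finset.exists_superset_card_eq hscard
      (by rw [Fintype.card_fin]; omega)
    have hxS : ∀ i ∉ S, x i = 0 := fun i hi => hssupp i (fun hs => hi (hsS hs))
    -- descent inequality on S
    have hineq : ∑ i ∈ Sᶜ, w i * |z i| ≤ ∑ i ∈ S, w i * |z i| := by
      have h1 : wNorm w (x + z) ≤ wNorm w x := hdesc
      have hsplit : ∀ v : EuclideanSpace ℝ (Fin n), wNorm w v = ∑ i ∈ S, w i * |v i| + ∑ i ∈ Sᶜ, w i * |v i| :=
        fun v => (Finset.sum_add_sum_compl S _).symm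
      rw [hsplit, hsplit] at h1
      have hxc : ∑ i ∈ Sᶜ, w i * |x i| = 0 := by
        apply Finset.sum_eq_zero
        intro i hi
        rw [hxS i (Finset.mem_compl.mp hi), abs_zero, mul_zero]
      have hxzc : ∑ i ∈ Sᶜ, w i * |(x + z) i| = ∑ i ∈ Sᶜ, w i * |z i| := by
        refine Finset.sum_congr rfl fun i hi => ?_
        rw [PiLp.add_apply, hxS i (Finset.mem_compl.mp hi), zero_add]
      have hlow : ∑ i ∈ S, (w i * |x i| - w i * |z i|) ≤ ∑ i ∈ S, w i * |(x + z) i| := by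
        refine Finset.sum_le_sum fun i _ => ?_
        rw [PiLp.add_apply]
        have : |x i| - |z i| ≤ |x i + z i| := by
          have := abs_add_le (x i + z i) (-(z i))
          simp only [add_neg_cancel_right, abs_neg] at this
          linarith
        nlinarith [(hpos i).le, abs_nonneg (z i)]
      rw [Finset.sum_sub_distrib] at hlow
      rw [hxc, hxzc] at h1
      linarith
    -- the permutation
    have hdcard : (H₀ \ S).card = (S \ H₀).card :=
      Finset.card_sdiff_comm (hH₀card.trans hScard.symm)
    set e := Finset.equivOfCardEq hdcard with he
    set π := pswap (H₀ \ S) (S \ H₀) e with hπdef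
    have hπ : Function.Involutive π := pswap_invol _ _ disjoint_sdiff_sdiff e
    have hπinj : Function.Injective π := hπ.injective
    have specA : ∀ i ∈ H₀, π i ∈ S ∧ w (π i) ≤ w i := by
      intro i hi
      obtain ⟨h1, h2⟩ := pswap_specA S H₀ e i hi
      rw [← hπdef] at h1 h2
      refine ⟨h1, ?_⟩
      rcases h2 with h | h
      · rw [h]
      · exact hH₀ i hi _ h
    have specB : ∀ i ∉ H₀, π i ∉ S ∧ w i ≤ w (π i) := by
      intro i hi
      obtain ⟨h1, h2⟩ := pswap_specB S H₀ e i hi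
      rw [← hπdef] at h1 h2
      refine ⟨h1, ?_⟩
      rcases h2 with h | h
      · rw [h]
      · exact hH₀ _ h i hi
    have hSH : ∀ j ∈ S, π j ∈ H₀ := by
      intro j hj
      by_contra hc
      have := (specB _ hc).1
      rw [hπ j] at this
      exact this hj
    have hScH : ∀ j ∉ S, π j ∉ H₀ := by
      intro j hj hc
      have := (specA _ hc).1
      rw [hπ j] at this
      exact hj this
    have reindex : ∀ (F : Fin n → ℝ) (A B : Finset (Fin n)),
        (∀ i ∈ A, π i ∈ B) → (∀ j ∈ B, π j ∈ A) →
        ∑ i ∈ A, F (π i) = ∑ j ∈ B, F j := by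
      intro F A B hAB hBA
      exact Finset.sum_nbij' (i := fun a => π a) (j := fun a => π a) hAB hBA
        (fun a _ => hπ a) (fun a _ => hπ a) (fun a _ => rfl)
    obtain ⟨z', hz'app⟩ : ∃ z' : EuclideanSpace ℝ (Fin n), ∀ i, z' i = z (π i) :=
      ⟨WithLp.toLp 2 (fun i => z (π i) : Fin n → ℝ), fun i => rfl⟩
    have hz'ne : z' ≠ 0 := by
      obtain ⟨i, hi⟩ := hexists z hzne
      intro h
      have : z' (π i) = 0 := by rw [h]; rfl
      rw [hz'app, hπ i] at this
      exact hi this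
    -- weighted mass inequality for z'
    have hz'mass : ∑ i ∈ H₀ᶜ, w i * |z' i| ≤ ∑ i ∈ H₀, w i * |z' i| := by
      have h1 : ∑ i ∈ H₀, w (π i) * |z (π i)| ≤ ∑ i ∈ H₀, w i * |z' i| := by
        refine Finset.sum_le_sum fun i hi => ?_
        rw [hz'app]
        exact mul_le_mul_of_nonneg_right (specA i hi).2 (abs_nonneg _)
      have h2 : ∑ i ∈ H₀, w (π i) * |z (π i)| = ∑ j ∈ S, w j * |z j| :=
        reindex (fun j => w j * |z j|) H₀ S (fun i hi => (specA i hi).1) hSH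
      have h3 : ∑ i ∈ H₀ᶜ, w i * |z' i| ≤ ∑ i ∈ H₀ᶜ, w (π i) * |z (π i)| := by
        refine Finset.sum_le_sum fun i hi => ?_
        rw [hz'app]
        exact mul_le_mul_of_nonneg_right (specB i (Finset.mem_compl.mp hi)).2 (abs_nonneg _)
      have h4 : ∑ i ∈ H₀ᶜ, w (π i) * |z (π i)| = ∑ j ∈ Sᶜ, w j * |z j| := by
        refine reindex (fun j => w j * |z j|) H₀ᶜ Sᶜ ?_ ?_
        · intro i hi
          exact Finset.mem_compl.mpr ((specB i (Finset.mem_compl.mp hi)).1)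
        · intro j hj
          exact Finset.mem_compl.mpr (hScH j (Finset.mem_compl.mp hj))
      linarith
    -- ratio of z' equals ratio of z
    set T := T₂ z' with hTdef
    have hTcarry : ∀ i ∈ T, ∀ j ∉ T, |z' j| ≤ |z' i| := by
      rw [hTdef]; exact (hT₂ z').2
    have hTcard : T.card = 2 * k := by rw [hTdef]; exact (hT₂ z').1
    set Timg := T.image π with hTimg
    have hTimgcard : Timg.card = T.card := Finset.card_image_of_injective T hπinj
    have hmemTimg : ∀ j, j ∈ Timg ↔ π j ∈ T := by
      intro j
      constructor
      · rintro hj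
        obtain ⟨a, ha, haj⟩ := Finset.mem_image.mp hj
        rw [← haj, hπ a]; exact ha
      · intro hj
        exact Finset.mem_image.mpr ⟨π j, hj, hπ j⟩
    have hcarry_img : ∀ i ∈ Timg, ∀ j ∉ Timg, |z j| ≤ |z i| := by
      intro i hi j hj
      rw [hmemTimg] at hi hj
      have := hTcarry (π i) hi (π j) hj
      rw [hz'app, hz'app, hπ i, hπ j] at this
      exact this
    have htop' : ∑ i ∈ T, z' i ^ 2 = ∑ i ∈ T₂ z, z i ^ 2 := by
      have h1 : ∑ i ∈ T, z' i ^ 2 = ∑ j ∈ Timg, z j ^ 2 := by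
        rw [hTimg, Finset.sum_image (fun a _ b _ h => hπinj h)]
        exact Finset.sum_congr rfl fun i _ => by rw [hz'app]
      rw [h1]
      exact carry_inv z Timg (T₂ z)
        (hTimgcard.trans (hTcard.trans (hT₂ z).1.symm)) hcarry_img (hT₂ z).2
    have htot : ∑ i, z' i ^ 2 = ∑ i, z i ^ 2 := by
      have h0 : ∑ i, z' i ^ 2 = ∑ i, z (π i) ^ 2 :=
        Finset.sum_congr rfl fun i _ => by rw [hz'app]
      rw [h0]
      refine reindex (fun j => z j ^ 2) Finset.univ Finset.univ ?_ ?_ <;>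
        exact fun i _ => Finset.mem_univ _
    have htail' : ∑ i ∈ Tᶜ, z' i ^ 2 = ∑ i ∈ (T₂ z)ᶜ, z i ^ 2 := by
      have e1 := Finset.sum_add_sum_compl T (fun i => z' i ^ 2)
      have e2 := Finset.sum_add_sum_compl (T₂ z) (fun i => z i ^ 2)
      linarith
    -- intermediate value: find t with equal mass after raising
    set A := ∑ i ∈ H₀, w i * |z' i| with hA
    have hAnonneg : 0 ≤ A :=
      Finset.sum_nonneg fun i _ => mul_nonneg (hpos i).le (abs_nonneg _)
    set δ := (∑ i ∈ H₀ᶜ, w i) - ∑ i ∈ H₀, w i with hδ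
    have hδpos : 0 < δ := by rw [hδ]; linarith
    set φ : ℝ → ℝ := fun t =>
      ∑ i ∈ H₀, w i * max |z' i| t - ∑ i ∈ H₀ᶜ, w i * max |z' i| t with hφ
    have hφ0 : 0 ≤ φ 0 := by
      have : ∀ i, max |z' i| (0:ℝ) = |z' i| := fun i => max_eq_left (abs_nonneg _)
      simp only [hφ, this]
      linarith
    have hφT : φ (A / δ) ≤ 0 := by
      have hT0 : (0:ℝ) ≤ A / δ := div_nonneg hAnonneg hδpos.le
      have h1 : ∑ i ∈ H₀, w i * max |z' i| (A / δ)
          ≤ ∑ i ∈ H₀, (w i * |z' i| + (A / δ) * w i) := by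
        refine Finset.sum_le_sum fun i _ => ?_
        have hm : max |z' i| (A / δ) ≤ |z' i| + A / δ :=
          max_le (by linarith [hT0]) (by linarith [abs_nonneg (z' i)])
        have := mul_le_mul_of_nonneg_left hm (hpos i).le
        nlinarith
      have h2 : ∑ i ∈ H₀ᶜ, (A / δ) * w i ≤ ∑ i ∈ H₀ᶜ, w i * max |z' i| (A / δ) := by
        refine Finset.sum_le_sum fun i _ => ?_
        have := mul_le_mul_of_nonneg_left (le_max_right |z' i| (A / δ)) (hpos i).le
        linarith
      rw [Finset.sum_add_distrib, ← Finset.mul_sum] at h1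
      rw [← Finset.mul_sum] at h2
      have hexp : (A / δ) * (∑ i ∈ H₀ᶜ, w i) - (A / δ) * (∑ i ∈ H₀, w i) = A := by
        rw [← mul_sub, ← hδ]
        exact div_mul_cancel₀ A hδpos.ne'
      simp only [hφ]
      linarith [h1, h2, hexp, hA]
    have hcont : Continuous φ := by
      apply Continuous.sub <;>
        exact continuous_finset_sum _ fun i _ =>
          continuous_const.mul (continuous_const.max continuous_id)
    obtain ⟨t, htmem, hφt⟩ : ∃ t ∈ Set.Icc (0:ℝ) (A / δ), φ t = 0 := by
      have hsub2 := intermediate_value_Icc' (div_nonneg hAnonneg hδpos.le) hcont.continuousOn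
      have h0mem : (0:ℝ) ∈ Set.Icc (φ (A / δ)) (φ 0) := ⟨hφT, hφ0⟩
      obtain ⟨t, ht1, ht2⟩ := hsub2 h0mem
      exact ⟨t, ht1, ht2⟩
    have ht0 : 0 ≤ t := htmem.1
    -- the raised vector z''
    obtain ⟨z'', hz''app⟩ : ∃ z'' : EuclideanSpace ℝ (Fin n), ∀ i, z'' i = max |z' i| t :=
      ⟨WithLp.toLp 2 (fun i => max |z' i| t : Fin n → ℝ), fun i => rfl⟩
    have hz''nonneg : ∀ i, 0 ≤ z'' i := fun i =>
      (hz''app i).symm ▸ ((abs_nonneg _).trans (le_max_left _ _))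
    have hz''ge : ∀ i, |z' i| ≤ z'' i := fun i => (hz''app i).symm ▸ le_max_left |z' i| t
    have hz''ne : z'' ≠ 0 := by
      obtain ⟨i, hi⟩ := hexists z' hz'ne
      intro h
      have h0 : z'' i = 0 := by rw [h]; rfl
      rw [hz''app] at h0
      have := le_max_left |z' i| t
      rw [h0] at this
      exact hi (abs_eq_zero.mp (le_antisymm this (abs_nonneg _)))
    have habs'' : ∀ i, |z'' i| = z'' i := fun i => abs_of_nonneg (hz''nonneg i)
    have hmass'' : wNorm w (coordRestrict z'' H₀) = wNorm w (coordRestrict z'' H₀ᶜ) := by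
      rw [wNorm_coordRestrict, wNorm_coordRestrict]
      have := sub_eq_zero.mp hφt
      simp only [hφ] at hφt
      have h1 : ∀ S' : Finset (Fin n), ∑ i ∈ S', w i * |z'' i| = ∑ i ∈ S', w i * max |z' i| t :=
        fun S' => Finset.sum_congr rfl fun i _ => by rw [habs'', hz''app]
      rw [h1, h1]
      linarith
    -- carrying set for z''
    have hcarry'' : ∀ i ∈ T, ∀ j ∉ T, |z'' j| ≤ |z'' i| := by
      intro i hi j hj
      rw [habs'', habs'', hz''app, hz''app]
      exact max_le_max (hTcarry i hi j hj) le_rfl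
    have htop'' : ∑ i ∈ T₂ z'', z'' i ^ 2 = ∑ i ∈ T, z'' i ^ 2 :=
      carry_inv z'' (T₂ z'') T ((hT₂ z'').1.trans hTcard.symm) (hT₂ z'').2 hcarry''
    have htail'' : ∑ i ∈ (T₂ z'')ᶜ, z'' i ^ 2 = ∑ i ∈ Tᶜ, z'' i ^ 2 := by
      have e1 := Finset.sum_add_sum_compl (T₂ z'') (fun i => z'' i ^ 2)
      have e2 := Finset.sum_add_sum_compl T (fun i => z'' i ^ 2)
      linarith
    -- positivity of denominators
    have hD' : 0 < ∑ i ∈ T, z' i ^ 2 := top_pos z' hz'ne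
    have hsqle : ∀ i, z' i ^ 2 ≤ z'' i ^ 2 := by
      intro i
      rw [← sq_abs (z' i)]
      exact pow_le_pow_left₀ (abs_nonneg _) (hz''ge i) 2
    have hD'' : 0 < ∑ i ∈ T, z'' i ^ 2 :=
      hD'.trans_le (Finset.sum_le_sum fun i _ => hsqle i)
    -- cross inequality
    have hcross : (∑ j ∈ Tᶜ, z' j ^ 2) * (∑ i ∈ T, z'' i ^ 2)
        ≤ (∑ j ∈ Tᶜ, z'' j ^ 2) * (∑ i ∈ T, z' i ^ 2) := by
      rw [Finset.sum_mul_sum, Finset.sum_mul_sum]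
      refine Finset.sum_le_sum fun j hj => Finset.sum_le_sum fun i hi => ?_
      have hba := hTcarry i hi j (Finset.mem_compl.mp hj)
      have := key_cross |z' i| |z' j| t (abs_nonneg _) hba ht0
      rw [sq_abs, sq_abs] at this
      rw [hz''app, hz''app]
      exact this
    have hratio : (∑ j ∈ Tᶜ, z' j ^ 2) / (∑ i ∈ T, z' i ^ 2)
        ≤ (∑ j ∈ Tᶜ, z'' j ^ 2) / (∑ i ∈ T, z'' i ^ 2) := by
      rw [div_le_div_iff₀ hD' hD'']
      exact hcross
    -- conclude
    have hr'' : (‖coordRestrict z'' (T₂ z'')ᶜ‖ ^ 2 / ‖coordRestrict z'' (T₂ z'')‖ ^ 2) ∈ RSet :=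
      ⟨z'', hz''ne, hmass'', rfl⟩
    have hfinal : r ≤ ‖coordRestrict z'' (T₂ z'')ᶜ‖ ^ 2 / ‖coordRestrict z'' (T₂ z'')‖ ^ 2 := by
      rw [hrz, norm_coordRestrict_sq, norm_coordRestrict_sq,
        norm_coordRestrict_sq, norm_coordRestrict_sq]
      rw [← htop', ← htail', htop'', htail'']
      exact hratio
    exact hfinal.trans (le_csSup bddR hr'')
  exact le_antisymm hLR hRL


end
end
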